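/- arXiv:2212.02933 — 10 statements merged into one kernel-verified Lean document; each statement's English description precedes it below -/
import Mathlib

section
/- Let P and Q be nonempty compact convex sets in a real Hilbert space with metric projections Π_P and Π_Q. Starting from y₀, define the alternating projection iterates x_{t+1} = Π_P(y_t) and y_{t+1} = Π_Q(x_{t+1}) for t ≥ 0. Let Q_min be the set of points of Q at minimal distance to P and let d be the distance vector between P and Q, i.e., d = z − Π_P(z) for all z ∈ Q_min. Then for every T ≥ 1, (1/T) · Σ_{t=0}^{T−1} ( ‖y_t − x_{t+1} − d‖² + ‖x_{t+1} − y_{t+1} + d‖² ) ≤ dist(y₀, Q_min)² / T. -/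
open RealInnerProductSpace Metric

private lemma proj_char {H : Type*} [NormedAddCommGroup H] [InnerProductSpace ℝ H]
    {K : Set H} (hK : Convex ℝ K) {z p : H} (hp : p ∈ K)
    (hmin : ∀ w ∈ K, ‖z - p‖ ≤ ‖z - w‖) : ∀ w ∈ K, ⟪z - p, w - p⟫ ≤ 0 := by
  have hne : Nonempty K := ⟨⟨p, hp⟩⟩
  have heq : ‖z - p‖ = ⨅ w : K, ‖z - w‖ := by
    refine le_antisymm (le_ciInf fun w => hmin w w.2) (ciInf_le ?_ (⟨p, hp⟩ : K))
    exact ⟨0, by rintro r ⟨w, rfl⟩; exact norm_nonneg _⟩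
  exact (norm_eq_iInf_iff_real_inner_le_zero hK hp).mp heq

/-- **Convergence rate of von Neumann's alternating projections** (general form).
With `Qmin` the set of points of `Q` of minimal distance to `P` and `d` the distance
vector (`d = z − Π_P z` for all `z ∈ Qmin`), the averaged residuals of the alternating
projection iterates started at `y₀` are bounded by `dist(y₀, Qmin)² / T`. -/
theorem alternating_projections_rate
    {H : Type*} [NormedAddCommGroup H] [InnerProductSpace ℝ H] [CompleteSpace H]
    (P Q : Set H) (hPne : P.Nonempty) (hQne : Q.Nonempty)
    (hPcpt : IsCompact P) (hQcpt : IsCompact Q)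
    (hPconv : Convex ℝ P) (hQconv : Convex ℝ Q)
    (projP projQ : H → H)
    (hprojP : ∀ z : H, projP z ∈ P ∧ ∀ w ∈ P, ‖z - projP z‖ ≤ ‖z - w‖)
    (hprojQ : ∀ z : H, projQ z ∈ Q ∧ ∀ w ∈ Q, ‖z - projQ z‖ ≤ ‖z - w‖)
    (y₀ : H) (x y : ℕ → H) (hy0 : y 0 = y₀)
    (hx : ∀ t : ℕ, x (t + 1) = projP (y t))
    (hy : ∀ t : ℕ, y (t + 1) = projQ (x (t + 1)))
    (Qmin : Set H)
    (hQmin : Qmin = {z ∈ Q | ∀ w ∈ Q, infDist z P ≤ infDist w P})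
    (d : H) (hd : ∀ z ∈ Qmin, d = z - projP z) :
    ∀ T : ℕ, 1 ≤ T →
      (1 / (T : ℝ)) * ∑ t ∈ Finset.range T,
          (‖y t - x (t + 1) - d‖ ^ 2 + ‖x (t + 1) - y (t + 1) + d‖ ^ 2)
        ≤ (infDist y₀ Qmin) ^ 2 / (T : ℝ) := by
  -- Qmin is nonempty and compact
  have hQminsub : Qmin ⊆ Q := by rw [hQmin]; exact fun z hz => hz.1
  have hQminne : Qmin.Nonempty := by
    obtain ⟨z, hzQ, hz⟩ := hQcpt.exists_isMinOn hQne (continuous_infDist_pt P).continuousOn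
    exact ⟨z, by rw [hQmin]; exact ⟨hzQ, fun w hw => hz hw⟩⟩
  have hQminclosed : IsClosed Qmin := by
    rw [hQmin]
    have : {z ∈ Q | ∀ w ∈ Q, infDist z P ≤ infDist w P}
        = Q ∩ ⋂ w ∈ Q, {z | infDist z P ≤ infDist w P} := by
      ext z; simp [Set.mem_iInter]
    rw [this]
    exact hQcpt.isClosed.inter
      (isClosed_biInter fun w _ => isClosed_le (continuous_infDist_pt P) continuous_const)
  have hQmincpt : IsCompact Qmin := hQcpt.of_isClosed_subset hQminclosed hQminsub
  -- choose z realizing infDist y₀ Qmin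
  obtain ⟨z, hzmin, hzd⟩ := hQmincpt.exists_infDist_eq_dist hQminne y₀
  have hzQ : z ∈ Q := hQminsub hzmin
  have hzopt : ∀ w ∈ Q, infDist z P ≤ infDist w P := by
    rw [hQmin] at hzmin; exact hzmin.2
  set p := projP z with hp
  have hpP : p ∈ P := (hprojP z).1
  have hdz : d = z - p := hd z hzmin
  -- (C) : ⟪d, w - p⟫ ≤ 0 for all w ∈ P
  have hC : ∀ w ∈ P, ⟪d, w - p⟫ ≤ 0 := by
    intro w hw
    rw [hdz]
    exact proj_char hPconv hpP (hprojP z).2 w hw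
  -- (D) : 0 ≤ ⟪d, q - z⟫ for all q ∈ Q
  have hD : ∀ q ∈ Q, 0 ≤ ⟪d, q - z⟫ := by
    have hmin : ∀ q ∈ Q, ‖p - z‖ ≤ ‖p - q‖ := by
      intro q hq
      have h1 : infDist z P ≤ ‖z - p‖ := by
        simpa [dist_eq_norm] using infDist_le_dist_of_mem (s := P) (x := z) hpP
      have h1' : ‖z - p‖ ≤ infDist z P := by
        have hne : Nonempty P := hPne.to_subtype
        rw [infDist_eq_iInf]
        refine le_ciInf fun w => ?_
        simpa [dist_eq_norm] using (hprojP z).2 w w.2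
      have h2 : infDist q P ≤ ‖q - p‖ := by
        simpa [dist_eq_norm] using infDist_le_dist_of_mem (s := P) (x := q) hpP
      have := le_trans h1' ((hzopt q hq).trans h2)
      calc ‖p - z‖ = ‖z - p‖ := norm_sub_rev _ _
        _ ≤ ‖q - p‖ := this
        _ = ‖p - q‖ := norm_sub_rev _ _
    intro q hq
    have h' : ⟪p - z, q - z⟫ ≤ 0 := proj_char hQconv hzQ hmin q hq
    have e : ⟪d, q - z⟫ = -⟪p - z, q - z⟫ := by
      rw [hdz, ← inner_neg_left]; congr 1; abel
    linarith
  -- one-step decrease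
  have key : ∀ t : ℕ, ‖y (t+1) - z‖ ^ 2
      + (‖y t - x (t + 1) - d‖ ^ 2 + ‖x (t + 1) - y (t + 1) + d‖ ^ 2)
      ≤ ‖y t - z‖ ^ 2 := by
    intro t
    set a := x (t + 1) with ha
    set b := y (t + 1) with hb
    have haP : a ∈ P := by rw [ha, hx t]; exact (hprojP (y t)).1
    have hbQ : b ∈ Q := by rw [hb, hy t]; exact (hprojQ (x (t+1))).1
    have hA : ⟪y t - a, p - a⟫ ≤ 0 := by
      refine proj_char hPconv (z := y t) (p := a) haP ?_ p hpP
      intro w hw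
      rw [ha, hx t]
      exact (hprojP (y t)).2 w hw
    have hB : ⟪a - b, z - b⟫ ≤ 0 := by
      refine proj_char hQconv (z := a) (p := b) hbQ ?_ z hzQ
      intro w hw
      rw [hb, hy t, ← ha]
      exact (hprojQ a).2 w hw
    have hCa : ⟪d, a - p⟫ ≤ 0 := hC a haP
    have hDb : 0 ≤ ⟪d, b - z⟫ := hD b hbQ
    set u := y t - a - d with hu
    set v := a - b + d with hv
    set w := b - z with hw
    have hvw : v + w = a - p := by
      have hpz : p = z - d := by rw [hdz]; abel
      rw [hv, hw, hpz]; abel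
    have huvw : y t - z = u + (v + w) := by rw [hu, hv, hw]; abel
    have h1 : (0:ℝ) ≤ ⟪u, v + w⟫ := by
      rw [hvw, hu, inner_sub_left]
      have e : ⟪y t - a, a - p⟫ = -⟪y t - a, p - a⟫ := by
        rw [← inner_neg_right]; congr 1; abel
      linarith
    have h2 : (0:ℝ) ≤ ⟪v, w⟫ := by
      rw [hv, hw, inner_add_left]
      have e : ⟪a - b, b - z⟫ = -⟪a - b, z - b⟫ := by
        rw [← inner_neg_right]; congr 1; abel
      linarith
    have e1 : ‖y t - z‖^2 = ‖u‖^2 + 2*⟪u, v+w⟫ + ‖v+w‖^2 := by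
      rw [huvw]; exact norm_add_sq_real _ _
    have e2 : ‖v+w‖^2 = ‖v‖^2 + 2*⟪v,w⟫ + ‖w‖^2 := norm_add_sq_real _ _
    have hw2 : ‖w‖^2 = ‖y (t+1) - z‖^2 := by rw [hw, hb]
    linarith
  -- telescoping
  have tele : ∀ T : ℕ,
      (∑ t ∈ Finset.range T,
        (‖y t - x (t + 1) - d‖ ^ 2 + ‖x (t + 1) - y (t + 1) + d‖ ^ 2))
        + ‖y T - z‖ ^ 2 ≤ ‖y 0 - z‖ ^ 2 := by
    intro T
    induction T with
    | zero => simp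
    | succ n ih =>
      rw [Finset.sum_range_succ]
      have := key n
      linarith
  intro T hT
  have hTpos : (0:ℝ) < T := by exact_mod_cast hT
  have h0 : ‖y 0 - z‖ ^ 2 = (infDist y₀ Qmin) ^ 2 := by
    rw [hy0, ← dist_eq_norm, ← hzd]
  have hS : (∑ t ∈ Finset.range T,
      (‖y t - x (t + 1) - d‖ ^ 2 + ‖x (t + 1) - y (t + 1) + d‖ ^ 2))
      ≤ (infDist y₀ Qmin) ^ 2 := by
    have := tele T
    nlinarith [sq_nonneg ‖y T - z‖]
  calc (1 / (T : ℝ)) * ∑ t ∈ Finset.range T,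
        (‖y t - x (t + 1) - d‖ ^ 2 + ‖x (t + 1) - y (t + 1) + d‖ ^ 2)
      ≤ (1 / (T : ℝ)) * (infDist y₀ Qmin) ^ 2 :=
        mul_le_mul_of_nonneg_left hS (by positivity)
    _ = (infDist y₀ Qmin) ^ 2 / (T : ℝ) := by rw [one_div, inv_mul_eq_div]
end

section
/- Let P and Q be nonempty compact convex sets in a real Hilbert space with P ∩ Q ≠ ∅, and with metric projections Π_P and Π_Q. Starting from y₀, define the alternating projection iterates x_{t+1} = Π_P(y_t) and y_{t+1} = Π_Q(x_{t+1}) for t ≥ 0. Then for every T ≥ 1, ‖x_T − y_T‖² ≤ (1/T) · Σ_{t=0}^{T−1} ( ‖y_t − x_{t+1}‖² + ‖x_{t+1} − y_{t+1}‖² ) ≤ dist(y₀, P ∩ Q)² / T. -/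
open RealInnerProductSpace Metric

lemma proj_key {H : Type*} [NormedAddCommGroup H] [InnerProductSpace ℝ H]
    {K : Set H} (hK : Convex ℝ K) (π : H → H)
    (hπ : ∀ z : H, π z ∈ K ∧ ∀ w ∈ K, ‖z - π z‖ ≤ ‖z - w‖)
    (w z : H) (hz : z ∈ K) :
    ‖w - π w‖ ^ 2 + ‖π w - z‖ ^ 2 ≤ ‖w - z‖ ^ 2 := by
  obtain ⟨hmem, hmin⟩ := hπ w
  have hne : Nonempty K := ⟨⟨π w, hmem⟩⟩
  have heq : ‖w - π w‖ = ⨅ v : K, ‖w - v‖ := by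
    refine le_antisymm (le_ciInf fun v => hmin v v.2) ?_
    exact ciInf_le ⟨0, fun a ⟨v, hv⟩ => hv ▸ norm_nonneg _⟩ (⟨π w, hmem⟩ : K)
  have hinner : ⟪w - π w, z - π w⟫ ≤ 0 :=
    (norm_eq_iInf_iff_real_inner_le_zero hK hmem).mp heq z hz
  have hexp := norm_add_sq_real (w - π w) (π w - z)
  have h1 : w - π w + (π w - z) = w - z := by abel
  rw [h1] at hexp
  have h2 : ⟪w - π w, π w - z⟫ = -⟪w - π w, z - π w⟫ := by
    rw [← inner_neg_right, neg_sub]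
  nlinarith [hexp, hinner, h2]

/-- **Convergence rate of von Neumann's alternating projections** in the intersecting
case: `‖x_T − y_T‖² ≤ (1/T)·Σ_{t<T}(‖y_t − x_{t+1}‖² + ‖x_{t+1} − y_{t+1}‖²)
≤ dist(y₀, P ∩ Q)²/T`. -/
theorem alternating_projections_rate_intersecting
    {H : Type*} [NormedAddCommGroup H] [InnerProductSpace ℝ H] [CompleteSpace H]
    (P Q : Set H) (hPne : P.Nonempty) (hQne : Q.Nonempty)
    (hPcpt : IsCompact P) (hQcpt : IsCompact Q)
    (hPconv : Convex ℝ P) (hQconv : Convex ℝ Q)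
    (hPQ : (P ∩ Q).Nonempty)
    (projP projQ : H → H)
    (hprojP : ∀ z : H, projP z ∈ P ∧ ∀ w ∈ P, ‖z - projP z‖ ≤ ‖z - w‖)
    (hprojQ : ∀ z : H, projQ z ∈ Q ∧ ∀ w ∈ Q, ‖z - projQ z‖ ≤ ‖z - w‖)
    (y₀ : H) (x y : ℕ → H) (hy0 : y 0 = y₀)
    (hx : ∀ t : ℕ, x (t + 1) = projP (y t))
    (hy : ∀ t : ℕ, y (t + 1) = projQ (x (t + 1))) :
    ∀ T : ℕ, 1 ≤ T →
      ‖x T - y T‖ ^ 2 ≤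
        (1 / (T : ℝ)) * ∑ t ∈ Finset.range T,
          (‖y t - x (t + 1)‖ ^ 2 + ‖x (t + 1) - y (t + 1)‖ ^ 2) ∧
      (1 / (T : ℝ)) * ∑ t ∈ Finset.range T,
          (‖y t - x (t + 1)‖ ^ 2 + ‖x (t + 1) - y (t + 1)‖ ^ 2)
        ≤ (infDist y₀ (P ∩ Q)) ^ 2 / (T : ℝ) := by
  intro T hT
  have hTpos : (0 : ℝ) < T := by exact_mod_cast hT
  -- gap sequence is antitone
  have hgap : ∀ t : ℕ, ‖x (t + 2) - y (t + 2)‖ ≤ ‖x (t + 1) - y (t + 1)‖ := by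
    intro t
    have h1 : ‖x (t + 2) - y (t + 2)‖ ≤ ‖x (t + 2) - y (t + 1)‖ := by
      rw [hy (t + 1)]
      have hyQ : y (t + 1) ∈ Q := by rw [hy t]; exact (hprojQ _).1
      exact (hprojQ (x (t + 2))).2 _ hyQ
    have h2 : ‖x (t + 2) - y (t + 1)‖ ≤ ‖x (t + 1) - y (t + 1)‖ := by
      rw [norm_sub_rev, norm_sub_rev (x (t+1))]
      rw [hx (t + 1)]
      exact (hprojP (y (t + 1))).2 _ (by rw [hx t]; exact (hprojP _).1)
    exact h1.trans h2
  have hanti : Antitone (fun t => ‖x (t + 1) - y (t + 1)‖) :=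
    antitone_nat_of_succ_le fun t => hgap t
  -- telescoping bound
  obtain ⟨z, hzPQ, hzdist⟩ :=
    (hPcpt.inter_right hQcpt.isClosed).exists_infDist_eq_dist hPQ y₀
  have hzP : z ∈ P := hzPQ.1
  have hzQ : z ∈ Q := hzPQ.2
  have hstep : ∀ t : ℕ,
      ‖y t - x (t + 1)‖ ^ 2 + ‖x (t + 1) - y (t + 1)‖ ^ 2 + ‖y (t + 1) - z‖ ^ 2
        ≤ ‖y t - z‖ ^ 2 := by
    intro t
    have h1 : ‖y t - x (t + 1)‖ ^ 2 + ‖x (t + 1) - z‖ ^ 2 ≤ ‖y t - z‖ ^ 2 := by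
      rw [hx t]; exact proj_key hPconv projP (fun w => hprojP w) (y t) z hzP
    have h2 : ‖x (t + 1) - y (t + 1)‖ ^ 2 + ‖y (t + 1) - z‖ ^ 2 ≤ ‖x (t + 1) - z‖ ^ 2 := by
      rw [hy t]; exact proj_key hQconv projQ (fun w => hprojQ w) (x (t + 1)) z hzQ
    linarith
  have htel : ∀ S : ℕ,
      (∑ t ∈ Finset.range S, (‖y t - x (t + 1)‖ ^ 2 + ‖x (t + 1) - y (t + 1)‖ ^ 2))
        + ‖y S - z‖ ^ 2 ≤ ‖y 0 - z‖ ^ 2 := by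
    intro S
    induction S with
    | zero => simp
    | succ n ih =>
      rw [Finset.sum_range_succ]
      have := hstep n
      linarith
  have hsum_le : (∑ t ∈ Finset.range T, (‖y t - x (t + 1)‖ ^ 2 + ‖x (t + 1) - y (t + 1)‖ ^ 2))
      ≤ (infDist y₀ (P ∩ Q)) ^ 2 := by
    have := htel T
    have h0 : ‖y 0 - z‖ = infDist y₀ (P ∩ Q) := by
      rw [hy0, hzdist, dist_eq_norm]
    nlinarith [sq_nonneg ‖y T - z‖, h0 ▸ this]
  constructor
  · -- first inequality
    have hT1 : T = (T - 1) + 1 := (Nat.succ_pred_eq_of_pos hT).symm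
    have hlow : ∀ t ∈ Finset.range T,
        ‖x T - y T‖ ^ 2 ≤ ‖y t - x (t + 1)‖ ^ 2 + ‖x (t + 1) - y (t + 1)‖ ^ 2 := by
      intro t ht
      rw [Finset.mem_range] at ht
      have h1 : ‖x T - y T‖ ≤ ‖x (t + 1) - y (t + 1)‖ := by
        rw [hT1]
        exact hanti (Nat.le_pred_of_lt ht)
      nlinarith [norm_nonneg (x T - y T), norm_nonneg (x (t+1) - y (t+1)),
        sq_nonneg ‖y t - x (t + 1)‖]
    have hcard := Finset.card_nsmul_le_sum (Finset.range T) _ _ hlow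
    rw [Finset.card_range, nsmul_eq_mul] at hcard
    calc ‖x T - y T‖ ^ 2 = (1 / (T : ℝ)) * ((T : ℝ) * ‖x T - y T‖ ^ 2) := by
          field_simp
      _ ≤ _ := mul_le_mul_of_nonneg_left hcard (by positivity)
  · rw [div_eq_mul_one_div (infDist y₀ (P ∩ Q) ^ 2), mul_comm (infDist y₀ (P ∩ Q) ^ 2)]
    exact mul_le_mul_of_nonneg_left hsum_le (by positivity)
end

section
/- Let k ≥ 1 and let P₀, …, P_{k−1} be nonempty compact convex sets, P_i in a real inner product space E_i, with diameters D₀, …, D_{k−1}, and let D = √(Σ_i D_i²). Let f be a convex function on the product that is L-smooth on the product, partially L_i-smooth (with L_i > 0) and partially G_i-Lipschitz in each block P_i. Consider the cyclic block-coordinate conditional gradient iterates with the short-step rule: at iteration t set i = t mod k, choose v^t ∈ P_i minimizing ⟨∇_{P_i} f(x^t), x⟩ over P_i, set γ_t = min{ ⟨∇_{P_i} f(x^t), x^t_i − v^t⟩ / (L_i ‖x^t_i − v^t‖²), 1 }, and update x^{t+1}_i = x^t_i + γ_t (v^t − x^t_i), other blocks unchanged. Then for every t ≥ 0, f(x^{kt})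 − f(x*) ≤ (4k/(t + 4)) · ( max_{0 ≤ i ≤ k−1} max{L_i D_i², G_i D_i} + k L² D² / min_{0 ≤ i ≤ k−1} L_i ), where x* is a minimizer of f over the product. -/
open RealInnerProductSpace

/-- A finite `L²`-product of complete spaces is complete. -/
instance piLpCompleteSpace {k : ℕ} (p : ENNReal) {E : Fin k → Type*}
    [∀ i, NormedAddCommGroup (E i)] [∀ i, CompleteSpace (E i)] :
    CompleteSpace (PiLp p E) :=
  inferInstance

set_option maxHeartbeats 1000000

lemma line_hasDerivAt {F : Type*} [NormedAddCommGroup F] [InnerProductSpace ℝ F]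
    [CompleteSpace F] (f : F → ℝ) (g : F → F) (hgrad : ∀ z, HasGradientAt f (g z) z)
    (z e : F) (τ : ℝ) :
    HasDerivAt (fun s : ℝ => f (z + s • e)) ⟪g (z + τ • e), e⟫ τ := by
  have hc : HasDerivAt (fun s : ℝ => z + s • e) e τ := by
    simpa using ((hasDerivAt_id τ).smul_const e).const_add z
  have := (hgrad (z + τ • e)).hasFDerivAt.comp_hasDerivAt τ hc
  simp at this
  exact this

lemma quadratic_upper_bound {φ φ' : ℝ → ℝ} (hφ : ∀ τ, HasDerivAt φ (φ' τ) τ)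
    {a M : ℝ} (hbound : ∀ τ ∈ Set.Icc (0:ℝ) 1, φ' τ ≤ a + M * τ) :
    φ 1 ≤ φ 0 + a + M / 2 := by
  set ψ : ℝ → ℝ := fun τ => φ τ - a * τ - M * τ ^ 2 / 2 with hψ
  have hd : ∀ τ, HasDerivAt ψ (φ' τ - (a + M * τ)) τ := by
    intro τ
    have h1 : HasDerivAt (fun τ : ℝ => a * τ) a τ := by
      simpa using (hasDerivAt_id τ).const_mul a
    have h2 : HasDerivAt (fun τ : ℝ => M * τ ^ 2 / 2) (M * τ) τ := by
      have := ((hasDerivAt_pow 2 τ).const_mul M).div_const 2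
      simpa using this.congr_deriv (by ring)
    exact ((hφ τ).sub h1).sub h2 |>.congr_deriv (by ring)
  have hanti : AntitoneOn ψ (Set.Icc (0:ℝ) 1) := by
    apply antitoneOn_of_deriv_nonpos (convex_Icc 0 1)
    · exact fun x _ => ((hd x).continuousAt).continuousWithinAt
    · exact fun x _ => ((hd x).differentiableAt).differentiableWithinAt
    · intro x hx
      rw [interior_Icc] at hx
      rw [(hd x).deriv]
      have := hbound x ⟨hx.1.le, hx.2.le⟩
      linarith
  have := hanti (Set.left_mem_Icc.2 zero_le_one) (Set.right_mem_Icc.2 zero_le_one) zero_le_one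
  simp only [hψ] at this
  nlinarith [this]

lemma convex_grad_ineq {F : Type*} [NormedAddCommGroup F] [InnerProductSpace ℝ F]
    [CompleteSpace F] (f : F → ℝ) (g : F → F) (hgrad : ∀ z, HasGradientAt f (g z) z)
    {S : Set F} (hconv : ConvexOn ℝ S f) {x y : F} (hx : x ∈ S) (hy : y ∈ S) :
    f x + ⟪g x, y - x⟫ ≤ f y := by
  have heq : (f ∘ (AffineMap.lineMap x y : ℝ →ᵃ[ℝ] F)) = fun τ : ℝ => f (x + τ • (y - x)) := by
    funext τ
    simp only [Function.comp_apply, AffineMap.lineMap_apply_module]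
    congr 1
    module
  have hq : ConvexOn ℝ (Set.Icc (0:ℝ) 1) (fun τ : ℝ => f (x + τ • (y - x))) := by
    rw [← heq]
    refine ConvexOn.subset (hconv.comp_affineMap _) ?_ (convex_Icc 0 1)
    intro τ hτ
    simp only [Set.mem_preimage, AffineMap.lineMap_apply_module]
    have h2 : (1 - τ) • x + τ • y = x + τ • (y - x) := by module
    rw [h2]
    exact hconv.1.add_smul_sub_mem hx hy hτ
  by_cases hxy : y = x
  · simp [hxy]
  have hder : HasDerivAt (fun τ : ℝ => f (x + τ • (y - x))) ⟪g x, y - x⟫ 0 := by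
    have := line_hasDerivAt f g hgrad x (y - x) 0
    simpa using this
  have hslope := hq.le_slope_of_hasDerivAt (Set.left_mem_Icc.2 zero_le_one)
    (Set.right_mem_Icc.2 zero_le_one) zero_lt_one hder
  rw [slope_def_field] at hslope
  simp only [zero_smul, add_zero, one_smul, sub_zero, div_one] at hslope
  have hx1 : x + (y - x) = y := by abel
  rw [hx1] at hslope
  linarith

lemma block_norm_le {k : ℕ} {E : Fin k → Type*} [∀ i, NormedAddCommGroup (E i)]
    [∀ i, InnerProductSpace ℝ (E i)] (u : PiLp 2 E) (i : Fin k) : ‖u i‖ ≤ ‖u‖ := by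
  have h1 : ‖u i‖ ^ 2 ≤ ‖u‖ ^ 2 := by
    rw [PiLp.norm_sq_eq_of_L2]
    exact Finset.single_le_sum (f := fun j => ‖u j‖ ^ 2)
      (fun j _ => by positivity) (Finset.mem_univ i)
  exact le_of_pow_le_pow_left₀ two_ne_zero (norm_nonneg u) h1

lemma block_descent {k : ℕ} {E : Fin k → Type*} [∀ i, NormedAddCommGroup (E i)]
    [∀ i, InnerProductSpace ℝ (E i)] [∀ i, CompleteSpace (E i)]
    (P : ∀ i, Set (E i)) (hPconv : ∀ i, Convex ℝ (P i))
    (S : Set (PiLp 2 E)) (hS : S = {z : PiLp 2 E | ∀ i, z i ∈ P i})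
    (f : PiLp 2 E → ℝ) (g : PiLp 2 E → PiLp 2 E)
    (hgrad : ∀ z, HasGradientAt f (g z) z)
    (Lblk : Fin k → ℝ)
    (hLblk : ∀ i : Fin k, ∀ z ∈ S, ∀ w ∈ P i,
      ‖g z i - g (WithLp.toLp 2 (Function.update z i w)) i‖ ≤ Lblk i * ‖z i - w‖)
    (i : Fin k) (z : PiLp 2 E) (hz : z ∈ S) (b : E i) (hb : b ∈ P i) :
    f (WithLp.toLp 2 (Function.update z i b)) ≤
      f z + ⟪g z i, b - z i⟫ + Lblk i * ‖b - z i‖ ^ 2 / 2 := by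
  classical
  set e : PiLp 2 E := WithLp.toLp 2 (Pi.single i (b - z i)) with he
  have hpath : ∀ τ : ℝ, z + τ • e = WithLp.toLp 2 (Function.update z i (z i + τ • (b - z i))) := by
    intro τ
    apply WithLp.ofLp_injective 2
    funext j
    by_cases hj : j = i
    · subst hj
      simp [he, PiLp.add_apply, PiLp.smul_apply, Function.update_self]
    · simp [he, PiLp.add_apply, PiLp.smul_apply, Function.update_of_ne hj,
        Pi.single_eq_of_ne hj]
  have hmem : ∀ τ : ℝ, τ ∈ Set.Icc (0:ℝ) 1 → z i + τ • (b - z i) ∈ P i := by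
    intro τ hτ
    exact (hPconv i).add_smul_sub_mem (by rw [hS] at hz; exact hz i) hb hτ
  have hip : ∀ w : PiLp 2 E, ⟪w, e⟫ = ⟪w i, b - z i⟫ := by
    intro w
    rw [PiLp.inner_apply]
    rw [Finset.sum_eq_single i]
    · simp [he]
    · intro j _ hj
      simp [he, Pi.single_eq_of_ne hj]
    · simp
  have hφ : ∀ τ : ℝ, HasDerivAt (fun s : ℝ => f (z + s • e))
      ⟪g (z + τ • e) i, b - z i⟫ τ := by
    intro τ
    have := line_hasDerivAt f g hgrad z e τ
    rwa [hip] at this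
  have hbound : ∀ τ ∈ Set.Icc (0:ℝ) 1,
      ⟪g (z + τ • e) i, b - z i⟫ ≤ ⟪g z i, b - z i⟫ + (Lblk i * ‖b - z i‖ ^ 2) * τ := by
    intro τ hτ
    have hLip := hLblk i z hz (z i + τ • (b - z i)) (hmem τ hτ)
    rw [← hpath τ] at hLip
    have hn : ‖z i - (z i + τ • (b - z i))‖ = τ * ‖b - z i‖ := by
      rw [show z i - (z i + τ • (b - z i)) = -(τ • (b - z i)) by abel]
      rw [norm_neg, norm_smul, Real.norm_eq_abs, abs_of_nonneg hτ.1]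
    rw [hn] at hLip
    have hsplit : ⟪g (z + τ • e) i, b - z i⟫ =
        ⟪g z i, b - z i⟫ - ⟪g z i - g (z + τ • e) i, b - z i⟫ := by
      rw [inner_sub_left]; ring
    rw [hsplit]
    have habs := abs_real_inner_le_norm (g z i - g (z + τ • e) i) (b - z i)
    have h2 : |⟪g z i - g (z + τ • e) i, b - z i⟫| ≤ (Lblk i * (τ * ‖b - z i‖)) * ‖b - z i‖ :=
      habs.trans (mul_le_mul_of_nonneg_right hLip (norm_nonneg _))
    have h3 := neg_abs_le ⟪g z i - g (z + τ • e) i, b - z i⟫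
    nlinarith [h2, h3]
  have := quadratic_upper_bound hφ hbound
  simp only [one_smul, zero_smul, add_zero] at this
  have h1 : z + e = WithLp.toLp 2 (Function.update z i b) := by
    have h2 := hpath 1
    rw [one_smul] at h2
    simpa using h2
  rw [h1] at this
  exact this

lemma rate_induction (A : ℝ) (hA : 0 ≤ A) (h : ℕ → ℝ) (hnn : ∀ t, 0 ≤ h t)
    (hmono : ∀ t, h (t + 1) ≤ h t) (h0 : h 0 ≤ A / 4)
    (hrec : ∀ t, (h t) ^ 2 ≤ A * (h t - h (t + 1))) :
    ∀ t, h t ≤ A / ((t : ℝ) + 4) := by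
  intro t
  induction t with
  | zero => simpa using h0
  | succ n ih =>
    rcases eq_or_lt_of_le hA with hA0 | hApos
    · have : h (n + 1) ≤ h 0 := by
        clear ih hrec
        induction n with
        | zero => exact hmono 0
        | succ m ihm => exact (hmono (m + 1)).trans ihm
      have h1 : h (n + 1) ≤ 0 := this.trans (by linarith)
      have h2 : (0:ℝ) ≤ A / ((n : ℝ) + 1 + 4) := by positivity
      push_cast
      linarith
    · have hrecn := hrec n
      have hbn : h n * ((n : ℝ) + 4) ≤ A := by
        rw [le_div_iff₀ (by positivity : (0:ℝ) < (n:ℝ) + 4)] at ih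
        exact ih
      have hgoal : h (n + 1) * ((n : ℝ) + 5) ≤ A := by
        nlinarith [hnn n, hnn (n + 1), sq_nonneg (A - ((n : ℝ) + 4) * h n),
          sq_nonneg (h n), Nat.cast_nonneg (α := ℝ) n, hApos, hrecn, hbn,
          mul_nonneg (mul_nonneg (sub_nonneg.2 hbn) (hnn n)) (Nat.cast_nonneg (α := ℝ) n)]
      push_cast
      rw [le_div_iff₀ (by positivity : (0:ℝ) < (n:ℝ) + 1 + 4)]
      linarith

lemma add_sq_le_two_sq (a b : ℝ) : (a + b) ^ 2 ≤ 2 * a ^ 2 + 2 * b ^ 2 := by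
  nlinarith [sq_nonneg (a - b)]

/-- **Primal convergence of the Cyclic Block-Coordinate Conditional Gradient algorithm**
with the short-step rule:
`f(x^{kt}) − f(x*) ≤ (4k/(t+4)) (max_i max{L_i D_i², G_i D_i} + k L² D² / min_i L_i)`. -/
theorem cbcg_short_step_primal_rate
    {k : ℕ} (hk : 0 < k)
    {E : Fin k → Type*} [∀ i, NormedAddCommGroup (E i)]
    [∀ i, InnerProductSpace ℝ (E i)] [∀ i, CompleteSpace (E i)]
    (P : ∀ i, Set (E i))
    (hPne : ∀ i, (P i).Nonempty) (hPcpt : ∀ i, IsCompact (P i))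
    (hPconv : ∀ i, Convex ℝ (P i))
    (Dblk : Fin k → ℝ) (hD : ∀ i, Metric.diam (P i) = Dblk i)
    (D : ℝ) (hDdef : D = Real.sqrt (∑ i, Dblk i ^ 2))
    (S : Set (PiLp 2 E)) (hS : S = {z : PiLp 2 E | ∀ i, z i ∈ P i})
    (f : PiLp 2 E → ℝ) (g : PiLp 2 E → PiLp 2 E)
    (hgrad : ∀ z : PiLp 2 E, HasGradientAt f (g z) z)
    (hconv : ConvexOn ℝ S f)
    (L : ℝ) (hL : ∀ z ∈ S, ∀ w ∈ S, ‖g z - g w‖ ≤ L * ‖z - w‖)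
    (Lblk : Fin k → ℝ) (hLblkpos : ∀ i, 0 < Lblk i)
    (hLblk : ∀ i : Fin k, ∀ z ∈ S, ∀ w ∈ P i,
      ‖g z i - g (WithLp.toLp 2 (Function.update z i w)) i‖ ≤ Lblk i * ‖z i - w‖)
    (Gblk : Fin k → ℝ)
    (hGblk : ∀ i : Fin k, ∀ z ∈ S, ‖g z i‖ ≤ Gblk i)
    (idx : ℕ → Fin k) (hidx : ∀ t : ℕ, (idx t : ℕ) = t % k)
    (X : ℕ → PiLp 2 E) (hX0 : X 0 ∈ S)
    (v : (t : ℕ) → E (idx t))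
    (hvmem : ∀ t : ℕ, v t ∈ P (idx t))
    (hvmin : ∀ t : ℕ, ∀ w ∈ P (idx t), ⟪g (X t) (idx t), v t⟫ ≤ ⟪g (X t) (idx t), w⟫)
    (γ : ℕ → ℝ)
    (hγ : ∀ t : ℕ, γ t = min (⟪g (X t) (idx t), X t (idx t) - v t⟫ /
      (Lblk (idx t) * ‖X t (idx t) - v t‖ ^ 2)) 1)
    (hupd : ∀ t : ℕ, X (t + 1) =
      Function.update (X t) (idx t) (X t (idx t) + γ t • (v t - X t (idx t))))
    (xstar : PiLp 2 E) (hxstarS : xstar ∈ S) (hxstar : ∀ z ∈ S, f xstar ≤ f z) :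
    ∀ t : ℕ, f (X (k * t)) - f xstar ≤
      (4 * (k : ℝ) / ((t : ℝ) + 4)) *
        ((Finset.univ.sup' ⟨⟨0, hk⟩, Finset.mem_univ _⟩ fun i : Fin k =>
            max (Lblk i * Dblk i ^ 2) (Gblk i * Dblk i)) +
          (k : ℝ) * L ^ 2 * D ^ 2 /
            (Finset.univ.inf' ⟨⟨0, hk⟩, Finset.mem_univ _⟩ fun i : Fin k => Lblk i)) := by
  classical
  set C1 : ℝ := Finset.univ.sup' ⟨⟨0, hk⟩, Finset.mem_univ _⟩ (fun i : Fin k =>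
      max (Lblk i * Dblk i ^ 2) (Gblk i * Dblk i)) with hC1def
  clear_value C1
  set Lmin : ℝ := Finset.univ.inf' ⟨⟨0, hk⟩, Finset.mem_univ _⟩ (fun i : Fin k => Lblk i)
    with hLmindef
  clear_value Lmin
  have hLminpos : 0 < Lmin := by
    rw [hLmindef]
    exact (Finset.lt_inf'_iff _).2 fun i _ => hLblkpos i
  have hLminle : ∀ i, Lmin ≤ Lblk i := by
    intro i
    rw [hLmindef]
    exact Finset.inf'_le (fun i : Fin k => Lblk i) (Finset.mem_univ i)
  have hC1ge : ∀ i, max (Lblk i * Dblk i ^ 2) (Gblk i * Dblk i) ≤ C1 := by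
    intro i
    rw [hC1def]
    exact Finset.le_sup' (fun i : Fin k => max (Lblk i * Dblk i ^ 2) (Gblk i * Dblk i)) (Finset.mem_univ i)
  have hDnn : ∀ i, 0 ≤ Dblk i := fun i => (hD i) ▸ Metric.diam_nonneg
  have hC1nn : 0 ≤ C1 := by
    refine le_trans ?_ (le_trans (le_max_left _ _) (hC1ge ⟨0, hk⟩))
    have := (hLblkpos ⟨0, hk⟩).le
    positivity
  have hdist : ∀ (i : Fin k), ∀ a ∈ P i, ∀ b ∈ P i, ‖a - b‖ ≤ Dblk i := by
    intro i a ha b hb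
    rw [← hD i, ← dist_eq_norm]
    exact Metric.dist_le_diam_of_mem (hPcpt i).isBounded ha hb
  set L' : ℝ := max L 0 with hL'def
  have hL'nn : 0 ≤ L' := le_max_right _ _
  have hL' : ∀ z ∈ S, ∀ w ∈ S, ‖g z - g w‖ ≤ L' * ‖z - w‖ := fun z hz w hw =>
    (hL z hz w hw).trans (mul_le_mul_of_nonneg_right (le_max_left _ _) (norm_nonneg _))
  have hL'sq : L' ^ 2 ≤ L ^ 2 := by
    rcases max_cases L 0 with ⟨h1, h2⟩ | ⟨h1, h2⟩ <;> rw [hL'def, h1] <;> nlinarith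
  clear_value L'
  have hxP : ∀ i, xstar i ∈ P i := by rw [hS] at hxstarS; exact hxstarS
  -- membership of iterates
  have hgap0' : ∀ t, X t ∈ S → 0 ≤ ⟪g (X t) (idx t), X t (idx t) - v t⟫ := by
    intro t ht
    have h1 := hvmin t (X t (idx t)) (by rw [hS] at ht; exact ht (idx t))
    rw [inner_sub_right]
    linarith
  have hγ01' : ∀ t, X t ∈ S → 0 ≤ γ t ∧ γ t ≤ 1 := by
    intro t ht
    refine ⟨?_, by rw [hγ t]; exact min_le_right _ _⟩
    rw [hγ t]
    refine le_min (div_nonneg (hgap0' t ht) ?_) zero_le_one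
    have := (hLblkpos (idx t)).le
    positivity
  have hXmem : ∀ t, X t ∈ S := by
    intro t
    induction t with
    | zero => exact hX0
    | succ n ih =>
      obtain ⟨h0, h1⟩ := hγ01' n ih
      rw [hS]
      intro j
      show X (n + 1) j ∈ P j
      rw [hupd n]
      by_cases hj : j = idx n
      · subst hj
        rw [Function.update_self]
        exact (hPconv _).add_smul_sub_mem (by rw [hS] at ih; exact ih _) (hvmem n) ⟨h0, h1⟩
      · rw [Function.update_of_ne hj]
        rw [hS] at ih; exact ih j
  have hXP : ∀ t i, X t i ∈ P i := fun t i => by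
    have := hXmem t; rw [hS] at this; exact this i
  -- descent inequality
  have hdesc : ∀ t, f (X (t + 1)) ≤ f (X t) -
      (γ t * ⟪g (X t) (idx t), X t (idx t) - v t⟫ -
        Lblk (idx t) * ‖X t (idx t) - v t‖ ^ 2 / 2 * γ t ^ 2) := by
    intro t
    obtain ⟨h0, h1⟩ := hγ01' t (hXmem t)
    have hb : X t (idx t) + γ t • (v t - X t (idx t)) ∈ P (idx t) :=
      (hPconv _).add_smul_sub_mem (hXP t _) (hvmem t) ⟨h0, h1⟩
    have hbd := block_descent P hPconv S hS f g hgrad Lblk hLblk (idx t) (X t) (hXmem t) _ hb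
    rw [← hupd t, WithLp.toLp_ofLp] at hbd
    have hbx : (X t (idx t) + γ t • (v t - X t (idx t))) - X t (idx t) =
        γ t • (v t - X t (idx t)) := by abel
    rw [hbx, real_inner_smul_right] at hbd
    have hvx : ⟪g (X t) (idx t), v t - X t (idx t)⟫ =
        -⟪g (X t) (idx t), X t (idx t) - v t⟫ := by
      rw [← inner_neg_right]; congr 1; abel
    rw [hvx] at hbd
    have hnrm : ‖γ t • (v t - X t (idx t))‖ ^ 2 = γ t ^ 2 * ‖X t (idx t) - v t‖ ^ 2 := by
      rw [norm_smul, Real.norm_eq_abs, mul_pow, sq_abs, norm_sub_rev]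
    rw [hnrm] at hbd
    nlinarith [hbd]
  have hstepnorm : ∀ t, ‖X (t + 1) - X t‖ ^ 2 = γ t ^ 2 * ‖X t (idx t) - v t‖ ^ 2 := by
    intro t
    rw [PiLp.norm_sq_eq_of_L2]
    rw [Finset.sum_eq_single (idx t)]
    · rw [PiLp.sub_apply, hupd t, Function.update_self]
      have hh : X t (idx t) + γ t • (v t - X t (idx t)) - X t (idx t) =
          γ t • (v t - X t (idx t)) := by abel
      rw [hh, norm_smul, Real.norm_eq_abs, mul_pow, sq_abs, norm_sub_rev]
    · intro j _ hj
      rw [PiLp.sub_apply, hupd t, Function.update_of_ne hj, sub_self, norm_zero]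
      exact zero_pow two_ne_zero
    · intro h; exact absurd (Finset.mem_univ _) h
  -- per-step key facts
  have hstep : ∀ t, ⟪g (X t) (idx t), X t (idx t) - v t⟫ ^ 2 ≤
        2 * C1 * (f (X t) - f (X (t + 1))) ∧
      Lmin * ‖X (t + 1) - X t‖ ^ 2 ≤ 2 * (f (X t) - f (X (t + 1))) ∧
      f (X (t + 1)) ≤ f (X t) := by
    intro t
    have hγt := hγ t
    have hdesct := hdesc t
    have hsn := hstepnorm t
    have hG0 : 0 ≤ ⟪g (X t) (idx t), X t (idx t) - v t⟫ := hgap0' t (hXmem t)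
    set i := idx t with hidef
    set G := ⟪g (X t) i, X t i - v t⟫ with hGdef
    clear_value G
    set nn := ‖X t i - v t‖ ^ 2 with hnndef
    clear_value nn
    have hnn0 : 0 ≤ nn := by rw [hnndef]; positivity
    have hLi : 0 < Lblk i := hLblkpos i
    have hLm : Lmin ≤ Lblk i := hLminle i
    have hDle : ‖X t i - v t‖ ≤ Dblk i := hdist i _ (hXP t i) _ (hvmem t)
    have hnnD : nn ≤ Dblk i ^ 2 := by
      rw [hnndef]
      exact pow_le_pow_left₀ (norm_nonneg _) hDle 2
    have hLiD : Lblk i * Dblk i ^ 2 ≤ C1 := le_trans (le_max_left _ _) (hC1ge i)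
    have hGDC : Gblk i * Dblk i ≤ C1 := le_trans (le_max_right _ _) (hC1ge i)
    have hGub : G ≤ C1 := by
      have h1 := real_inner_le_norm (g (X t) i) (X t i - v t)
      have h2 := hGblk i (X t) (hXmem t)
      have h3 : ‖g (X t) i‖ * ‖X t i - v t‖ ≤ Gblk i * Dblk i :=
        mul_le_mul h2 hDle (norm_nonneg _) ((norm_nonneg _).trans h2)
      rw [hGdef]
      exact h1.trans (h3.trans hGDC)
    by_cases hzero : X t i - v t = 0
    · have hnn_eq : nn = 0 := by rw [hnndef, hzero]; simp
      have hG_eq : G = 0 := by rw [hGdef, hzero, inner_zero_right]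
      have hδ : 0 ≤ f (X t) - f (X (t + 1)) := by
        rw [hG_eq, hnn_eq] at hdesct
        nlinarith [hdesct]
      refine ⟨?_, ?_, by linarith⟩
      · rw [hG_eq]
        nlinarith [hC1nn, hδ]
      · rw [hsn, hnn_eq]
        nlinarith [hδ]
    · have hnnpos : 0 < nn := by
        rw [hnndef]
        exact pow_pos (norm_pos_iff.mpr hzero) 2
      have hMpos : 0 < Lblk i * nn := mul_pos hLi hnnpos
      rcases le_or_gt (G / (Lblk i * nn)) 1 with hle | hlt
      · have hγeq : γ t = G / (Lblk i * nn) := by rw [hγt, min_eq_left hle]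
        have hγM : γ t * (Lblk i * nn) = G := by
          rw [hγeq]; field_simp
        have hδ : γ t ^ 2 * (Lblk i * nn) / 2 ≤ f (X t) - f (X (t + 1)) := by
          nlinarith [hdesct, hγM]
        have hδ0 : 0 ≤ f (X t) - f (X (t + 1)) := by
          nlinarith [hδ, sq_nonneg (γ t), hMpos]
        have hMC1 : Lblk i * nn ≤ C1 := by nlinarith [hLiD, hnnD, hLi]
        refine ⟨?_, ?_, by linarith⟩
        · nlinarith [hδ, hδ0, hMpos, hMC1, hγM, sq_nonneg (γ t),
            mul_nonneg (sub_nonneg.2 hMC1) hδ0,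
            mul_nonneg hMpos.le (by nlinarith [hδ] : 0 ≤ 2 * (f (X t) - f (X (t + 1))) - γ t ^ 2 * (Lblk i * nn))]
        · rw [hsn]
          nlinarith [hδ, mul_nonneg (sub_nonneg.2 hLm) (mul_nonneg (sq_nonneg (γ t)) hnn0)]
      · have hγeq : γ t = 1 := by rw [hγt, min_eq_right hlt.le]
        have hMG : Lblk i * nn < G := (one_lt_div hMpos).mp hlt
        rw [hγeq] at hdesct
        have hδG : G / 2 ≤ f (X t) - f (X (t + 1)) := by nlinarith [hdesct, hMG]
        have hδ0 : 0 ≤ f (X t) - f (X (t + 1)) := by linarith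
        refine ⟨?_, ?_, by linarith⟩
        · nlinarith [hGub, hG0, hδG, hC1nn]
        · rw [hsn, hγeq]
          nlinarith [hδG, hMG, mul_nonneg (sub_nonneg.2 hLm) hnn0]
  have hmonoF : Antitone (fun n => f (X n)) :=
    antitone_nat_of_succ_le fun n => (hstep n).2.2
  -- global convexity bound
  have hglob : ∀ z, z ∈ S → f z - f xstar ≤ ∑ i, ⟪g z i, z i - xstar i⟫ := by
    intro z hz
    have hcx := convex_grad_ineq f g hgrad hconv hz hxstarS
    have hneg : ⟪g z, xstar - z⟫ = -⟪g z, z - xstar⟫ := by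
      rw [← inner_neg_right]; congr 1; abel
    have hip : ⟪g z, z - xstar⟫ = ∑ i, ⟪g z i, z i - xstar i⟫ := by
      rw [PiLp.inner_apply]
      exact Finset.sum_congr rfl fun i _ => by rw [PiLp.sub_apply]
    rw [hneg, hip] at hcx
    linarith
  have hterm : ∀ z, z ∈ S → ∀ i, ⟪g z i, z i - xstar i⟫ ≤ C1 := by
    intro z hz i
    have h1 := real_inner_le_norm (g z i) (z i - xstar i)
    have h2 := hGblk i z hz
    have h3 : ‖z i - xstar i‖ ≤ Dblk i := by
      rw [hS] at hz
      exact hdist i _ (hz i) _ (hxP i)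
    have h4 : ‖g z i‖ * ‖z i - xstar i‖ ≤ Gblk i * Dblk i :=
      mul_le_mul h2 h3 (norm_nonneg _) ((norm_nonneg _).trans h2)
    exact h1.trans (h4.trans (le_trans (le_max_right _ _) (hC1ge i)))
  have hinit : f (X 0) - f xstar ≤ (k : ℝ) * C1 := by
    have h1 := hglob (X 0) hX0
    have h2 : ∑ i, ⟪g (X 0) i, X 0 i - xstar i⟫ ≤ ∑ _i : Fin k, C1 :=
      Finset.sum_le_sum fun i _ => hterm (X 0) hX0 i
    rw [Finset.sum_const, Finset.card_univ, Fintype.card_fin, nsmul_eq_mul] at h2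
    linarith
  -- epoch analysis
  have hepoch : ∀ t : ℕ, (f (X (k * t)) - f xstar) ^ 2 ≤
      4 * (k : ℝ) * (C1 + (k : ℝ) * L ^ 2 * D ^ 2 / Lmin) *
        (f (X (k * t)) - f (X (k * (t + 1)))) := by
    intro t
    set s := k * t with hsdef
    clear_value s
    have hidxs : ∀ j, (hj : j < k) → idx (s + j) = ⟨j, hj⟩ := by
      intro j hj
      apply Fin.ext
      rw [hidx, hsdef, Nat.mul_add_mod]
      exact Nat.mod_eq_of_lt hj
    have hfrozen : ∀ j, j ≤ k → ∀ b : Fin k, j ≤ (b : ℕ) → X (s + j) b = X s b := by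
      intro j
      induction j with
      | zero => intro _ b _; rfl
      | succ m ihm =>
        intro hjk b hb
        have hm : idx (s + m) = ⟨m, by omega⟩ := hidxs m (by omega)
        have hne : b ≠ idx (s + m) := by
          rw [hm]
          intro hcon
          have := congrArg Fin.val hcon
          simp at this
          omega
        have he : X (s + (m + 1)) b = X (s + m) b := by
          rw [show s + (m + 1) = (s + m) + 1 from rfl, hupd (s + m),
            Function.update_of_ne hne]
        rw [he]
        exact ihm (by omega) b (by omega)
    have hΔ0 : 0 ≤ f (X s) - f (X (s + k)) :=
      sub_nonneg.2 (hmonoF (Nat.le_add_right s k))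
    have htel : ∑ l ∈ Finset.range k, (f (X (s + l)) - f (X (s + l + 1))) =
        f (X s) - f (X (s + k)) := by
      have h := Finset.sum_range_sub' (fun l => f (X (s + l))) k
      exact h
    have hreindex : ∀ (F : Fin k → ℝ), ∑ l ∈ Finset.range k, F (idx (s + l)) = ∑ i, F i := by
      intro F
      rw [← Fin.sum_univ_eq_sum_range (fun l => F (idx (s + l))) k]
      refine Finset.sum_congr rfl fun i _ => ?_
      rw [hidxs i.val i.isLt, Fin.eta]
    have hsum2 : Lmin * ∑ l ∈ Finset.range k, ‖X (s + l + 1) - X (s + l)‖ ^ 2 ≤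
        2 * (f (X s) - f (X (s + k))) := by
      rw [Finset.mul_sum]
      calc ∑ l ∈ Finset.range k, Lmin * ‖X (s + l + 1) - X (s + l)‖ ^ 2
          ≤ ∑ l ∈ Finset.range k, 2 * (f (X (s + l)) - f (X (s + l + 1))) :=
            Finset.sum_le_sum fun l _ => (hstep (s + l)).2.1
        _ = 2 * (f (X s) - f (X (s + k))) := by rw [← Finset.mul_sum, htel]
    set T := ∑ l ∈ Finset.range k, ‖X (s + l + 1) - X (s + l)‖ with hTdef
    clear_value T
    have hT0 : 0 ≤ T := by
      rw [hTdef]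
      exact Finset.sum_nonneg fun l _ => norm_nonneg _
    have hTsq : Lmin * T ^ 2 ≤ 2 * (k : ℝ) * (f (X s) - f (X (s + k))) := by
      have hcs := sq_sum_le_card_mul_sum_sq
        (s := Finset.range k) (f := fun l => ‖X (s + l + 1) - X (s + l)‖)
      rw [Finset.card_range] at hcs
      have h1 : Lmin * T ^ 2 ≤ Lmin * ((k : ℝ) *
          ∑ l ∈ Finset.range k, ‖X (s + l + 1) - X (s + l)‖ ^ 2) := by
        rw [hTdef]
        exact mul_le_mul_of_nonneg_left hcs hLminpos.le
      have h3 : (k : ℝ) * (Lmin * ∑ l ∈ Finset.range k, ‖X (s + l + 1) - X (s + l)‖ ^ 2) ≤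
          (k : ℝ) * (2 * (f (X s) - f (X (s + k)))) :=
        mul_le_mul_of_nonneg_left hsum2 (Nat.cast_nonneg k)
      linarith only [h1, h3]
    have hsum1 : ∑ l ∈ Finset.range k,
        ⟪g (X (s + l)) (idx (s + l)), X (s + l) (idx (s + l)) - v (s + l)⟫ ^ 2 ≤
        2 * C1 * (f (X s) - f (X (s + k))) := by
      calc ∑ l ∈ Finset.range k,
          ⟪g (X (s + l)) (idx (s + l)), X (s + l) (idx (s + l)) - v (s + l)⟫ ^ 2
          ≤ ∑ l ∈ Finset.range k, 2 * C1 * (f (X (s + l)) - f (X (s + l + 1))) :=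
            Finset.sum_le_sum fun l _ => (hstep (s + l)).1
        _ = 2 * C1 * (f (X s) - f (X (s + k))) := by rw [← Finset.mul_sum, htel]
    set A := ∑ l ∈ Finset.range k,
        ⟪g (X (s + l)) (idx (s + l)), X (s + l) (idx (s + l)) - v (s + l)⟫ with hAdef
    clear_value A
    have hA0 : 0 ≤ A := by
      rw [hAdef]
      exact Finset.sum_nonneg fun l _ => hgap0' (s + l) (hXmem _)
    have hAsq : A ^ 2 ≤ 2 * (k : ℝ) * C1 * (f (X s) - f (X (s + k))) := by
      have hcs := sq_sum_le_card_mul_sum_sq (s := Finset.range k)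
        (f := fun l => ⟪g (X (s + l)) (idx (s + l)), X (s + l) (idx (s + l)) - v (s + l)⟫)
      rw [Finset.card_range] at hcs
      calc A ^ 2 ≤ (k : ℝ) * ∑ l ∈ Finset.range k,
            ⟪g (X (s + l)) (idx (s + l)), X (s + l) (idx (s + l)) - v (s + l)⟫ ^ 2 := by
            rw [hAdef]; exact hcs
        _ ≤ (k : ℝ) * (2 * C1 * (f (X s) - f (X (s + k)))) :=
            mul_le_mul_of_nonneg_left hsum1 (Nat.cast_nonneg k)
        _ = 2 * (k : ℝ) * C1 * (f (X s) - f (X (s + k))) := by ring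
    set SD := ∑ i : Fin k, Dblk i with hSDdef
    clear_value SD
    have hSD0 : 0 ≤ SD := by
      rw [hSDdef]
      exact Finset.sum_nonneg fun i _ => hDnn i
    have hDsq : D ^ 2 = ∑ i, Dblk i ^ 2 := by
      rw [hDdef]
      exact Real.sq_sqrt (Finset.sum_nonneg fun i _ => sq_nonneg _)
    have hSDsq : SD ^ 2 ≤ (k : ℝ) * D ^ 2 := by
      have hcs := sq_sum_le_card_mul_sum_sq
        (s := (Finset.univ : Finset (Fin k))) (f := Dblk)
      rw [Finset.card_univ, Fintype.card_fin] at hcs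
      rw [hDsq, hSDdef]
      exact hcs
    have hdispl : ∀ j, j ≤ k → ‖X (s + j) - X s‖ ≤ T := by
      intro j hj
      have htri : ∀ m, ‖X (s + m) - X s‖ ≤
          ∑ l ∈ Finset.range m, ‖X (s + l + 1) - X (s + l)‖ := by
        intro m
        induction m with
        | zero => simp
        | succ a iha =>
          rw [Finset.sum_range_succ]
          calc ‖X (s + (a + 1)) - X s‖
              = ‖(X (s + a + 1) - X (s + a)) + (X (s + a) - X s)‖ := by
                rw [show s + (a + 1) = s + a + 1 from rfl]; congr 1; abel
            _ ≤ ‖X (s + a + 1) - X (s + a)‖ + ‖X (s + a) - X s‖ := norm_add_le _ _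
            _ ≤ _ := by linarith [iha]
      refine (htri j).trans ?_
      rw [hTdef]
      exact Finset.sum_le_sum_of_subset_of_nonneg (Finset.range_subset_range.2 hj)
        (fun _ _ _ => norm_nonneg _)
    have hperl : ∀ l, l < k →
        ⟪g (X s) (idx (s + l)), X s (idx (s + l)) - xstar (idx (s + l))⟫ ≤
        ⟪g (X (s + l)) (idx (s + l)), X (s + l) (idx (s + l)) - v (s + l)⟫ +
          L' * T * Dblk (idx (s + l)) := by
      intro l hl
      have hXfr : X (s + l) (idx (s + l)) = X s (idx (s + l)) := by
        apply hfrozen l hl.le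
        rw [hidxs l hl]
      have h1 : ⟪g (X (s + l)) (idx (s + l)), X (s + l) (idx (s + l)) - xstar (idx (s + l))⟫ ≤
          ⟪g (X (s + l)) (idx (s + l)), X (s + l) (idx (s + l)) - v (s + l)⟫ := by
        rw [inner_sub_right, inner_sub_right]
        have := hvmin (s + l) (xstar (idx (s + l))) (hxP _)
        linarith
      rw [hXfr] at h1
      have h2 : ⟪g (X s) (idx (s + l)), X s (idx (s + l)) - xstar (idx (s + l))⟫ -
          ⟪g (X (s + l)) (idx (s + l)), X s (idx (s + l)) - xstar (idx (s + l))⟫ ≤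
          L' * T * Dblk (idx (s + l)) := by
        have e1 : ⟪g (X s) (idx (s + l)), X s (idx (s + l)) - xstar (idx (s + l))⟫ -
            ⟪g (X (s + l)) (idx (s + l)), X s (idx (s + l)) - xstar (idx (s + l))⟫ =
            ⟪g (X s) (idx (s + l)) - g (X (s + l)) (idx (s + l)),
              X s (idx (s + l)) - xstar (idx (s + l))⟫ := (inner_sub_left _ _ _).symm
        rw [e1]
        have hblk : ‖g (X s) (idx (s + l)) - g (X (s + l)) (idx (s + l))‖ ≤
            ‖g (X s) - g (X (s + l))‖ := by
          rw [← PiLp.sub_apply]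
          exact block_norm_le _ _
        have hLip : ‖g (X s) - g (X (s + l))‖ ≤ L' * ‖X s - X (s + l)‖ :=
          hL' _ (hXmem s) _ (hXmem (s + l))
        have hXd : ‖X s - X (s + l)‖ = ‖X (s + l) - X s‖ := norm_sub_rev _ _
        have hTb : ‖X (s + l) - X s‖ ≤ T := hdispl l hl.le
        have hDb : ‖X s (idx (s + l)) - xstar (idx (s + l))‖ ≤ Dblk (idx (s + l)) :=
          hdist _ _ (hXP s _) _ (hxP _)
        calc ⟪g (X s) (idx (s + l)) - g (X (s + l)) (idx (s + l)),
              X s (idx (s + l)) - xstar (idx (s + l))⟫ ≤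
            ‖g (X s) (idx (s + l)) - g (X (s + l)) (idx (s + l))‖ *
              ‖X s (idx (s + l)) - xstar (idx (s + l))‖ := real_inner_le_norm _ _
          _ ≤ (L' * T) * Dblk (idx (s + l)) := by
              refine mul_le_mul ?_ hDb (norm_nonneg _) (mul_nonneg hL'nn hT0)
              refine hblk.trans (hLip.trans ?_)
              rw [hXd]
              exact mul_le_mul_of_nonneg_left hTb hL'nn
          _ = L' * T * Dblk (idx (s + l)) := by ring
      rw [hXfr]
      linarith [h1, h2]
    have hmain : f (X s) - f xstar ≤ A + L' * T * SD := by
      calc f (X s) - f xstar ≤ ∑ i, ⟪g (X s) i, X s i - xstar i⟫ := hglob (X s) (hXmem s)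
        _ = ∑ l ∈ Finset.range k,
            ⟪g (X s) (idx (s + l)), X s (idx (s + l)) - xstar (idx (s + l))⟫ :=
            (hreindex fun i => ⟪g (X s) i, X s i - xstar i⟫).symm
        _ ≤ ∑ l ∈ Finset.range k,
            (⟪g (X (s + l)) (idx (s + l)), X (s + l) (idx (s + l)) - v (s + l)⟫ +
              L' * T * Dblk (idx (s + l))) :=
            Finset.sum_le_sum fun l hl => hperl l (Finset.mem_range.1 hl)
        _ = A + L' * T * SD := by
            rw [Finset.sum_add_distrib, ← Finset.mul_sum, hreindex Dblk, ← hAdef, ← hSDdef]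
    have hh0 : 0 ≤ f (X s) - f xstar := sub_nonneg.2 (hxstar _ (hXmem s))
    have hLTS0 : 0 ≤ L' * T * SD := mul_nonneg (mul_nonneg hL'nn hT0) hSD0
    have hsq1 : (f (X s) - f xstar) ^ 2 ≤ 2 * A ^ 2 + 2 * (L' * T * SD) ^ 2 := by
      have hsq0 : (f (X s) - f xstar) ^ 2 ≤ (A + L' * T * SD) ^ 2 :=
        pow_le_pow_left₀ hh0 hmain 2
      exact hsq0.trans (add_sq_le_two_sq A (L' * T * SD))
    have p2 : L' ^ 2 * SD ^ 2 ≤ L ^ 2 * ((k : ℝ) * D ^ 2) :=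
      mul_le_mul hL'sq hSDsq (sq_nonneg _) (sq_nonneg _)
    have p4 : 2 * (L' ^ 2 * SD ^ 2) * (Lmin * T ^ 2) ≤
        2 * (L' ^ 2 * SD ^ 2) * (2 * (k : ℝ) * (f (X s) - f (X (s + k)))) := by
      refine mul_le_mul_of_nonneg_left hTsq (by positivity)
    have p5 : 2 * (L' ^ 2 * SD ^ 2) * (2 * (k : ℝ) * (f (X s) - f (X (s + k)))) ≤
        2 * (L ^ 2 * ((k : ℝ) * D ^ 2)) * (2 * (k : ℝ) * (f (X s) - f (X (s + k)))) := by
      refine mul_le_mul_of_nonneg_right (by linarith [p2]) ?_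
      exact mul_nonneg (by positivity) hΔ0
    have p6 : Lmin * (2 * A ^ 2) ≤
        Lmin * (2 * (2 * (k : ℝ) * C1 * (f (X s) - f (X (s + k))))) := by
      refine mul_le_mul_of_nonneg_left (by linarith [hAsq]) hLminpos.le
    have hfin : Lmin * ((f (X s) - f xstar) ^ 2) ≤
        Lmin * (4 * (k : ℝ) * C1 * (f (X s) - f (X (s + k)))) +
          4 * (k : ℝ) ^ 2 * L ^ 2 * D ^ 2 * (f (X s) - f (X (s + k))) := by
      have q1 : Lmin * ((f (X s) - f xstar) ^ 2) ≤
          Lmin * (2 * A ^ 2 + 2 * (L' * T * SD) ^ 2) :=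
        mul_le_mul_of_nonneg_left hsq1 hLminpos.le
      have q2 : Lmin * (2 * (L' * T * SD) ^ 2) = 2 * (L' ^ 2 * SD ^ 2) * (Lmin * T ^ 2) := by
        ring
      linarith only [q1, q2, p4, p5, p6]
    have hk1 : k * (t + 1) = s + k := by rw [hsdef]; ring
    rw [hk1]
    rw [← mul_le_mul_iff_right₀ hLminpos]
    have e2 : Lmin * (4 * (k : ℝ) * (C1 + (k : ℝ) * L ^ 2 * D ^ 2 / Lmin) *
        (f (X s) - f (X (s + k)))) =
        Lmin * (4 * (k : ℝ) * C1 * (f (X s) - f (X (s + k)))) +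
          4 * (k : ℝ) ^ 2 * L ^ 2 * D ^ 2 * (f (X s) - f (X (s + k))) := by
      field_simp
    rw [e2]
    exact hfin
  -- final induction
  have hCcnn : 0 ≤ C1 + (k : ℝ) * L ^ 2 * D ^ 2 / Lmin :=
    add_nonneg hC1nn (div_nonneg (by positivity) hLminpos.le)
  have hknn : (0 : ℝ) ≤ (k : ℝ) := Nat.cast_nonneg k
  have hAnn : 0 ≤ 4 * (k : ℝ) * (C1 + (k : ℝ) * L ^ 2 * D ^ 2 / Lmin) :=
    mul_nonneg (mul_nonneg (by norm_num) hknn) hCcnn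
  have hhnn : ∀ t : ℕ, 0 ≤ f (X (k * t)) - f xstar :=
    fun t => sub_nonneg.2 (hxstar _ (hXmem _))
  have hhmono : ∀ t : ℕ, f (X (k * (t + 1))) - f xstar ≤ f (X (k * t)) - f xstar := by
    intro t
    have hle : k * t ≤ k * (t + 1) := Nat.mul_le_mul le_rfl (Nat.le_succ t)
    exact sub_le_sub_right (by simpa using hmonoF hle) _
  have hh00 : f (X (k * 0)) - f xstar ≤
      4 * (k : ℝ) * (C1 + (k : ℝ) * L ^ 2 * D ^ 2 / Lmin) / 4 := by
    have e4 : 4 * (k : ℝ) * (C1 + (k : ℝ) * L ^ 2 * D ^ 2 / Lmin) / 4 =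
        (k : ℝ) * C1 + (k : ℝ) * ((k : ℝ) * L ^ 2 * D ^ 2 / Lmin) := by ring
    have hnn2 : 0 ≤ (k : ℝ) * ((k : ℝ) * L ^ 2 * D ^ 2 / Lmin) :=
      mul_nonneg hknn (div_nonneg (by positivity) hLminpos.le)
    rw [e4, Nat.mul_zero]
    linarith only [hinit, hnn2]
  have hhrec : ∀ t : ℕ, (f (X (k * t)) - f xstar) ^ 2 ≤
      4 * (k : ℝ) * (C1 + (k : ℝ) * L ^ 2 * D ^ 2 / Lmin) *
        ((f (X (k * t)) - f xstar) - (f (X (k * (t + 1))) - f xstar)) := by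
    intro t
    have e : (f (X (k * t)) - f xstar) - (f (X (k * (t + 1))) - f xstar) =
        f (X (k * t)) - f (X (k * (t + 1))) := by ring
    rw [e]
    exact hepoch t
  have hrate := rate_induction (4 * (k : ℝ) * (C1 + (k : ℝ) * L ^ 2 * D ^ 2 / Lmin))
    hAnn (fun t => f (X (k * t)) - f xstar) hhnn hhmono hh00 hhrec
  intro t
  calc f (X (k * t)) - f xstar ≤
      4 * (k : ℝ) * (C1 + (k : ℝ) * L ^ 2 * D ^ 2 / Lmin) / ((t : ℝ) + 4) := hrate t
    _ = 4 * (k : ℝ) / ((t : ℝ) + 4) * (C1 + (k : ℝ) * L ^ 2 * D ^ 2 / Lmin) := by ring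
end

section
/- Let P and Q be nonempty compact convex sets in a real inner product space with diameters D_P and D_Q. Consider the Alternating Linear Minimizations iterates with agnostic steps: x₀ ∈ P, y₀ ∈ Q, and for t ≥ 0, u_t ∈ P minimizes ⟨x_t − y_t, x⟩ over x ∈ P, x_{t+1} = x_t + (2/(t+2))(u_t − x_t); v_t ∈ Q minimizes ⟨y_t − x_{t+1}, y⟩ over y ∈ Q, y_{t+1} = y_t + (2/(t+2))(v_t − y_t). Then for every T ≥ 1: min_{1 ≤ t ≤ T} max_{x ∈ P, y ∈ Q} ( ‖x_t − y_t‖² − ⟨x_t − y_t, x − y⟩ ) ≤ 6.75 (1 + 2√2) (D_P² + D_Q²) / (T + 2). -/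
open RealInnerProductSpace Metric

private lemma alm_expand {G : Type*} [NormedAddCommGroup G] [InnerProductSpace ℝ G]
    (d a : G) (γ : ℝ) :
    ‖d + γ • a‖^2 = ‖d‖^2 + 2*γ*⟪d,a⟫ + γ^2*‖a‖^2 := by
  rw [norm_add_sq_real, real_inner_smul_right, norm_smul, mul_pow, Real.norm_eq_abs, sq_abs]
  ring

private lemma alm_numeric (T : ℝ) (hT : 1 ≤ T) :
    (T+2)*(16/(T+5) + 8/(T+3))/(2*T) + 2/(T+5) ≤ 25/(T+2) := by
  rw [← sub_nonneg]
  have h1 : (0:ℝ) < T := by linarith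
  have h2 : (0:ℝ) < T+2 := by linarith
  have h3 : (0:ℝ) < T+3 := by linarith
  have h5 : (0:ℝ) < T+5 := by linarith
  have key : 25/(T+2) - ((T+2)*(16/(T+5) + 8/(T+3))/(2*T) + 2/(T+5))
      = (22*T^3+196*T^2+278*T-352) / (2*T*(T+2)*(T+3)*(T+5)) := by
    field_simp; ring
  rw [key]
  apply div_nonneg
  · nlinarith [sq_nonneg (T-1)]
  · positivity

private lemma alm_numeric' (T C : ℝ) (hT : 1 ≤ T) (hC : 0 ≤ C) :
    (T+2)*(16*C/(T+5) + 8*C/(T+3))/(2*T) + 2*C/(T+5) ≤ 25*C/(T+2) := by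
  have h1 : (0:ℝ) < T := by linarith
  have h3 : (0:ℝ) < T+3 := by linarith
  have h5 : (0:ℝ) < T+5 := by linarith
  have e : (T+2)*(16*C/(T+5)+8*C/(T+3))/(2*T) + 2*C/(T+5)
      = C*((T+2)*(16/(T+5)+8/(T+3))/(2*T) + 2/(T+5)) := by
    field_simp
  have e2 : 25*C/(T+2) = C*(25/(T+2)) := by ring
  rw [e, e2]
  exact mul_le_mul_of_nonneg_left (alm_numeric T hT) hC

private lemma alm_ih_step (r C : ℝ) (hr : 0 ≤ r) (hC : 0 ≤ C) :
    (1 - 2/(r+2))*(8*C/(r+2)) + 2*(2/(r+2))^2*C ≤ 8*C/(r+3) := by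
  rw [show (1 - 2/(r+2))*(8*C/(r+2)) + 2*(2/(r+2))^2*C
      = 8*C*(r+1)/(r+2)^2 by field_simp; ring,
    div_le_div_iff₀ (by positivity) (by positivity)]
  nlinarith

set_option maxHeartbeats 1000000 in
/-- **Frank–Wolfe-gap convergence of Alternating Linear Minimizations** with the
agnostic step-size rule `γ_t = 2/(t+2)`:
`min_{1 ≤ t ≤ T} max_{x ∈ P, y ∈ Q} (‖x_t − y_t‖² − ⟨x_t − y_t, x − y⟩)
≤ 6.75 (1+2√2)(D_P²+D_Q²)/(T+2)`. -/
theorem alm_agnostic_dual_gap_rate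
    {G : Type*} [NormedAddCommGroup G] [InnerProductSpace ℝ G]
    (P Q : Set G) (hPne : P.Nonempty) (hQne : Q.Nonempty)
    (hPcpt : IsCompact P) (hQcpt : IsCompact Q)
    (hPconv : Convex ℝ P) (hQconv : Convex ℝ Q)
    (DP DQ : ℝ) (hDP : Metric.diam P = DP) (hDQ : Metric.diam Q = DQ)
    (x y u v : ℕ → G) (hx0 : x 0 ∈ P) (hy0 : y 0 ∈ Q)
    (humem : ∀ t : ℕ, u t ∈ P)
    (humin : ∀ t : ℕ, ∀ w ∈ P, ⟪x t - y t, u t⟫ ≤ ⟪x t - y t, w⟫)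
    (hxupd : ∀ t : ℕ, x (t + 1) = x t + (2 / ((t : ℝ) + 2)) • (u t - x t))
    (hvmem : ∀ t : ℕ, v t ∈ Q)
    (hvmin : ∀ t : ℕ, ∀ w ∈ Q, ⟪y t - x (t + 1), v t⟫ ≤ ⟪y t - x (t + 1), w⟫)
    (hyupd : ∀ t : ℕ, y (t + 1) = y t + (2 / ((t : ℝ) + 2)) • (v t - y t)) :
    ∀ T : ℕ, 1 ≤ T → ∃ t : ℕ, 1 ≤ t ∧ t ≤ T ∧
      ∀ p ∈ P, ∀ q ∈ Q,
        ‖x t - y t‖ ^ 2 - ⟪x t - y t, p - q⟫ ≤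
          6.75 * (1 + 2 * Real.sqrt 2) * (DP ^ 2 + DQ ^ 2) / ((T : ℝ) + 2) := by
  intro T hT
  set C : ℝ := DP^2 + DQ^2 with hCdef
  have hC0 : 0 ≤ C := by positivity
  -- step sizes
  set γ : ℕ → ℝ := fun t => 2 / ((t:ℝ) + 2) with hγdef
  have hγeq : ∀ t : ℕ, γ t = 2 / ((t:ℝ) + 2) := fun t => rfl
  have hγpos : ∀ t : ℕ, 0 < γ t := by
    intro t; rw [hγeq]; positivity
  have hγle1 : ∀ t : ℕ, γ t ≤ 1 := by
    intro t
    rw [hγeq, div_le_one (by positivity)]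
    have : (0:ℝ) ≤ (t:ℝ) := Nat.cast_nonneg t
    linarith
  have hγmono : ∀ a b : ℕ, a ≤ b → γ b ≤ γ a := by
    intro a b hab
    rw [hγeq, hγeq]
    apply div_le_div_of_nonneg_left (by norm_num) (by positivity)
    have : (a:ℝ) ≤ (b:ℝ) := Nat.cast_le.mpr hab
    linarith
  -- diameters
  have hDP0 : 0 ≤ DP := hDP ▸ diam_nonneg
  have hDQ0 : 0 ≤ DQ := hDQ ▸ diam_nonneg
  have hPd : ∀ a ∈ P, ∀ b ∈ P, ‖a - b‖ ≤ DP := by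
    intro a ha b hb
    rw [← dist_eq_norm, ← hDP]
    exact dist_le_diam_of_mem hPcpt.isBounded ha hb
  have hQd : ∀ a ∈ Q, ∀ b ∈ Q, ‖a - b‖ ≤ DQ := by
    intro a ha b hb
    rw [← dist_eq_norm, ← hDQ]
    exact dist_le_diam_of_mem hQcpt.isBounded ha hb
  -- iterates stay in the sets
  have hxP : ∀ t : ℕ, x t ∈ P := by
    intro t
    induction t with
    | zero => exact hx0
    | succ t ih =>
      have h1 : 0 ≤ 1 - γ t := by linarith [hγle1 t]
      have h2 : 0 ≤ γ t := (hγpos t).le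
      have := hPconv ih (humem t) h1 h2 (by ring)
      rw [hxupd t]
      convert this using 1
      rw [← hγeq t]
      module
  have hyQ : ∀ t : ℕ, y t ∈ Q := by
    intro t
    induction t with
    | zero => exact hy0
    | succ t ih =>
      have h1 : 0 ≤ 1 - γ t := by linarith [hγle1 t]
      have h2 : 0 ≤ γ t := (hγpos t).le
      have := hQconv ih (hvmem t) h1 h2 (by ring)
      rw [hyupd t]
      convert this using 1
      rw [← hγeq t]
      module
  -- update identities in terms of γ
  have hxupd' : ∀ t : ℕ, x (t+1) - y t = (x t - y t) + γ t • (u t - x t) := by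
    intro t; rw [hxupd t, ← hγeq t]; abel
  have hyupd' : ∀ t : ℕ, x (t+1) - y (t+1) = (x (t+1) - y t) + γ t • (-(v t - y t)) := by
    intro t; rw [hyupd t, ← hγeq t]; module
  -- minimizer of ‖p - q‖ over P × Q
  obtain ⟨z, hz, hzmin⟩ := (hPcpt.prod hQcpt).exists_isMinOn (hPne.prod hQne)
    ((continuous_norm.comp (continuous_fst.sub continuous_snd)).continuousOn :
      ContinuousOn (fun w : G × G => ‖w.1 - w.2‖) (P ×ˢ Q))
  have hz1 : z.1 ∈ P := hz.1
  have hz2 : z.2 ∈ Q := hz.2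
  set fs : ℝ := ‖z.1 - z.2‖^2 with hfsdef
  set f : ℕ → ℝ := fun t => ‖x t - y t‖^2 with hfdef
  have hfsle : ∀ t : ℕ, fs ≤ f t := by
    intro t
    have := hzmin (Set.mk_mem_prod (hxP t) (hyQ t))
    simp only at this
    exact pow_le_pow_left₀ (norm_nonneg _) this 2
  set A : ℕ → ℝ := fun t => ⟪x t - y t, x t - u t⟫ with hAdef
  set B : ℕ → ℝ := fun t => ⟪x (t+1) - y t, v t - y t⟫ with hBdef
  have hA0 : ∀ t, 0 ≤ A t := by
    intro t
    have h := humin t (x t) (hxP t)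
    simp only [hAdef, inner_sub_right]
    linarith
  have hvkey : ∀ t : ℕ, ∀ q ∈ Q, ⟪x (t+1) - y t, q - y t⟫ ≤ B t := by
    intro t q hq
    have h := hvmin t q hq
    rw [show y t - x (t+1) = -(x (t+1) - y t) by abel] at h
    rw [inner_neg_left, inner_neg_left] at h
    simp only [hBdef, inner_sub_right]
    linarith
  have hB0 : ∀ t, 0 ≤ B t := by
    intro t
    have h := hvkey t (y t) (hyQ t)
    simpa using h
  -- exact one-step identity
  have hstep : ∀ t : ℕ, f (t+1) =
      f t - 2*γ t*(A t + B t) + (γ t)^2*(‖u t - x t‖^2 + ‖v t - y t‖^2) := by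
    intro t
    have e1 : ‖x (t+1) - y t‖^2
        = f t + 2*γ t*⟪x t - y t, u t - x t⟫ + (γ t)^2*‖u t - x t‖^2 := by
      rw [hxupd' t]; exact alm_expand _ _ _
    have e2 : f (t+1) = ‖x (t+1) - y t‖^2
        + 2*γ t*⟪x (t+1) - y t, -(v t - y t)⟫ + (γ t)^2*‖-(v t - y t)‖^2 := by
      simp only [hfdef]
      rw [hyupd' t]
      exact alm_expand _ _ _
    have e3 : ⟪x t - y t, u t - x t⟫ = -A t := by
      simp only [hAdef, inner_sub_right]; ring
    have e4 : ⟪x (t+1) - y t, -(v t - y t)⟫ = -B t := by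
      simp only [hBdef, inner_neg_right]
    rw [e2, e1, e3, e4, norm_neg]
    ring
  have hstep_le : ∀ t : ℕ, f (t+1) ≤ f t - 2*γ t*(A t + B t) + (γ t)^2*C := by
    intro t
    have h1 : ‖u t - x t‖ ≤ DP := hPd _ (humem t) _ (hxP t)
    have h2 : ‖v t - y t‖ ≤ DQ := hQd _ (hvmem t) _ (hyQ t)
    have h1' : ‖u t - x t‖^2 ≤ DP^2 := pow_le_pow_left₀ (norm_nonneg _) h1 2
    have h2' : ‖v t - y t‖^2 ≤ DQ^2 := pow_le_pow_left₀ (norm_nonneg _) h2 2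
    have h3 := hstep t
    nlinarith [sq_nonneg (γ t)]
  -- gap bound
  have hgap : ∀ t : ℕ, ∀ p ∈ P, ∀ q ∈ Q,
      f t - ⟪x t - y t, p - q⟫ ≤ A t + B t + γ t * (DP*DQ) := by
    intro t p hp q hq
    have e1 : f t - ⟪x t - y t, p - q⟫
        = ⟪x t - y t, x t - p⟫ + ⟪x t - y t, q - y t⟫ := by
      simp only [hfdef, ← real_inner_self_eq_norm_sq, inner_sub_right]
      ring
    have e2 : ⟪x t - y t, x t - p⟫ ≤ A t := by
      have h := humin t p hp
      simp only [hAdef, inner_sub_right]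
      linarith
    have e3 : ⟪x t - y t, q - y t⟫
        = ⟪x (t+1) - y t, q - y t⟫ - γ t * ⟪u t - x t, q - y t⟫ := by
      rw [hxupd' t, inner_add_left, real_inner_smul_left]; ring
    have e4 : ⟪x (t+1) - y t, q - y t⟫ ≤ B t := hvkey t q hq
    have e5 : -⟪u t - x t, q - y t⟫ ≤ DP * DQ := by
      have h1 := abs_real_inner_le_norm (u t - x t) (q - y t)
      have h2 : ‖u t - x t‖ ≤ DP := hPd _ (humem t) _ (hxP t)
      have h3 : ‖q - y t‖ ≤ DQ := hQd _ hq _ (hyQ t)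
      have h4 := mul_le_mul h2 h3 (norm_nonneg _) hDP0
      linarith [neg_le_abs ⟪u t - x t, q - y t⟫]
    have e6 : γ t * (-⟪u t - x t, q - y t⟫) ≤ γ t * (DP*DQ) :=
      mul_le_mul_of_nonneg_left e5 (hγpos t).le
    linarith
  -- primal gap
  set h : ℕ → ℝ := fun t => f t - fs with hhdef
  have hh0 : ∀ t, 0 ≤ h t := fun t => by
    simp only [hhdef, sub_nonneg]; exact hfsle t
  have hABlow : ∀ t : ℕ, h t / 2 - γ t * (DP*DQ) ≤ A t + B t := by
    intro t
    have hg := hgap t z.1 hz1 z.2 hz2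
    have hip : ⟪x t - y t, z.1 - z.2⟫ ≤ (f t + fs)/2 := by
      have h1 := real_inner_le_norm (x t - y t) (z.1 - z.2)
      simp only [hfdef, hfsdef]
      nlinarith [sq_nonneg (‖x t - y t‖ - ‖z.1 - z.2‖)]
    simp only [hhdef]
    linarith
  have hrec : ∀ t : ℕ, h (t+1) ≤ (1 - γ t) * h t + 2*(γ t)^2*C := by
    intro t
    have h1 := hstep_le t
    have h2 := hABlow t
    have hDD : 2*(DP*DQ) ≤ C := by nlinarith [sq_nonneg (DP - DQ)]
    have h3 : 2*γ t*(h t / 2 - γ t * (DP*DQ)) ≤ 2*γ t*(A t + B t) :=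
      mul_le_mul_of_nonneg_left h2 (by linarith [hγpos t])
    have h4 : 2*(γ t)^2*(DP*DQ) ≤ (γ t)^2*C := by nlinarith [sq_nonneg (γ t)]
    simp only [hhdef] at *
    nlinarith
  clear_value C γ fs f A B h
  -- induction bound : h t ≤ 8C/(t+2) for t ≥ 1
  have hbound : ∀ t : ℕ, 1 ≤ t → h t ≤ 8*C/((t:ℝ)+2) := by
    intro t ht
    induction t, ht using Nat.le_induction with
    | base =>
      have hr := hrec 0
      have hγ0 : γ 0 = 1 := by rw [hγeq]; norm_num
      rw [hγ0] at hr
      norm_num at hr ⊢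
      linarith
    | succ n hn ih =>
      have hr := hrec n
      have hr0 : (0:ℝ) ≤ (n:ℝ) := Nat.cast_nonneg n
      have h1γ : 0 ≤ 1 - γ n := by linarith [hγle1 n]
      have key := alm_ih_step (n:ℝ) C hr0 hC0
      have h5 : (1 - γ n) * h n ≤ (1 - γ n) * (8*C/((n:ℝ)+2)) :=
        mul_le_mul_of_nonneg_left ih h1γ
      have goal_cast : ((n+1:ℕ):ℝ) + 2 = (n:ℝ)+3 := by push_cast; ring
      rw [goal_cast]
      rw [hγeq] at hr h5
      linarith
  -- the averaging window
  set s : ℕ := T/2 + 1 with hsdef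
  set n : ℕ := T - s + 1 with hndef
  have hsle : s ≤ T := by omega
  have hs1 : 1 ≤ s := by omega
  have hsn : s + n = T + 1 := by omega
  have h2s : T + 1 ≤ 2*s := by omega
  have h2n : T ≤ 2*n := by omega
  have hn0 : 0 < n := by omega
  have hTr1 : (1:ℝ) ≤ (T:ℝ) := by exact_mod_cast hT
  have hsr : ((T:ℝ)+1)/2 ≤ (s:ℝ) := by
    have : ((T:ℝ)+1) ≤ 2*(s:ℝ) := by exact_mod_cast h2s
    linarith
  have hnr : (T:ℝ)/2 ≤ (n:ℝ) := by
    have : (T:ℝ) ≤ 2*(n:ℝ) := by exact_mod_cast h2n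
    linarith
  clear_value s n
  -- telescoping sums
  have tele : ∑ i ∈ Finset.range n, (f (s+i) - f (s+i+1)) = f s - f (s+n) := by
    simpa [add_assoc] using Finset.sum_range_sub' (fun i => f (s+i)) n
  have sum_gamma : ∑ i ∈ Finset.range n, (γ (s+i))^2 ≤ 4/((s:ℝ)+1) := by
    have tele2 := Finset.sum_range_sub' (fun i : ℕ => 4/((s:ℝ)+(i:ℝ)+1)) n
    have step : ∀ i ∈ Finset.range n,
        (γ (s+i))^2 ≤ 4/((s:ℝ)+(i:ℝ)+1) - 4/((s:ℝ)+((i:ℕ)+1:ℕ)+1) := by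
      intro i _
      have hX : (0:ℝ) ≤ (s:ℝ)+(i:ℝ) := by positivity
      have e : (γ (s+i))^2 = 4/(((s:ℝ)+(i:ℝ)+2))^2 := by
        rw [hγeq]; push_cast; rw [div_pow]; norm_num
      have e2 : 4/((s:ℝ)+(i:ℝ)+1) - 4/((s:ℝ)+((i:ℕ)+1:ℕ)+1)
          = 4/(((s:ℝ)+(i:ℝ)+1)*((s:ℝ)+(i:ℝ)+2)) := by
        push_cast
        rw [div_sub_div _ _ (by positivity) (by positivity)]
        ring_nf
      rw [e, e2]
      apply div_le_div_of_nonneg_left (by norm_num) (by positivity)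
      nlinarith
    calc ∑ i ∈ Finset.range n, (γ (s+i))^2
        ≤ ∑ i ∈ Finset.range n, (4/((s:ℝ)+(i:ℝ)+1) - 4/((s:ℝ)+((i:ℕ)+1:ℕ)+1)) :=
          Finset.sum_le_sum step
      _ = 4/((s:ℝ)+1) - 4/((s:ℝ)+(n:ℝ)+1) := by
          rw [show (4:ℝ)/((s:ℝ)+1) - 4/((s:ℝ)+(n:ℝ)+1)
            = 4/((s:ℝ)+((0:ℕ):ℝ)+1) - 4/((s:ℝ)+(n:ℝ)+1) by norm_num]
          exact tele2
      _ ≤ 4/((s:ℝ)+1) := by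
          have : (0:ℝ) ≤ 4/((s:ℝ)+(n:ℝ)+1) := by positivity
          linarith
  have sum1 : ∑ i ∈ Finset.range n, (2*γ (s+i)*(A (s+i)+B (s+i)))
      ≤ h s + C * (4/((s:ℝ)+1)) := by
    calc ∑ i ∈ Finset.range n, (2*γ (s+i)*(A (s+i)+B (s+i)))
        ≤ ∑ i ∈ Finset.range n, ((f (s+i) - f (s+i+1)) + C*(γ (s+i))^2) :=
          Finset.sum_le_sum (fun i _ => by
            have := hstep_le (s+i); linarith)
      _ = (f s - f (s+n)) + C * ∑ i ∈ Finset.range n, (γ (s+i))^2 := by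
          rw [Finset.sum_add_distrib, tele, Finset.mul_sum]
      _ ≤ h s + C * (4/((s:ℝ)+1)) := by
          have h1 := hfsle (s+n)
          have h2 := mul_le_mul_of_nonneg_left sum_gamma hC0
          simp only [hhdef]
          linarith
  -- pick the minimizing index
  obtain ⟨i₀, hi₀, hmin⟩ := Finset.exists_min_image (Finset.range n)
    (fun i => A (s+i) + B (s+i)) ⟨0, Finset.mem_range.mpr hn0⟩
  have hi₀n : i₀ < n := Finset.mem_range.mp hi₀
  set m : ℝ := A (s+i₀) + B (s+i₀) with hmdef
  have hm0 : 0 ≤ m := add_nonneg (hA0 _) (hB0 _)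
  clear_value m
  have lower : (n:ℝ) * (2*γ T*m) ≤ ∑ i ∈ Finset.range n, (2*γ (s+i)*(A (s+i)+B (s+i))) := by
    have := Finset.card_nsmul_le_sum (Finset.range n)
      (fun i => 2*γ (s+i)*(A (s+i)+B (s+i))) (2*γ T*m) (fun i hi => by
        have hiT : s + i ≤ T := by
          have := Finset.mem_range.mp hi; omega
        have h1 : γ T ≤ γ (s+i) := hγmono (s+i) T hiT
        have h2 : m ≤ A (s+i) + B (s+i) := hmin i hi
        have h3 := mul_nonneg (sub_nonneg.mpr h1) hm0
        have h4 := mul_nonneg (hγpos (s+i)).le (sub_nonneg.mpr h2)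
        show (2:ℝ)*γ T*m ≤ 2*γ (s+i)*(A (s+i)+B (s+i))
        nlinarith)
    rw [Finset.card_range, nsmul_eq_mul] at this
    exact this
  -- combine
  have hhs : h s ≤ 16*C/((T:ℝ)+5) := by
    have h1 := hbound s hs1
    have h2 : 8*C/((s:ℝ)+2) ≤ 16*C/((T:ℝ)+5) := by
      rw [div_le_div_iff₀ (by positivity) (by positivity)]
      nlinarith [mul_nonneg hC0 (by linarith : (0:ℝ) ≤ 2*(s:ℝ) - (T:ℝ) - 1)]
    linarith
  have hsg : C * (4/((s:ℝ)+1)) ≤ 8*C/((T:ℝ)+3) := by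
    rw [mul_div_assoc', div_le_div_iff₀ (by positivity) (by positivity)]
    nlinarith [mul_nonneg hC0 (by linarith : (0:ℝ) ≤ 2*(s:ℝ) - (T:ℝ) - 1)]
  have upper : (n:ℝ) * (2*γ T*m) ≤ 16*C/((T:ℝ)+5) + 8*C/((T:ℝ)+3) := by
    calc (n:ℝ) * (2*γ T*m) ≤ h s + C * (4/((s:ℝ)+1)) := le_trans lower sum1
      _ ≤ 16*C/((T:ℝ)+5) + 8*C/((T:ℝ)+3) := by linarith
  have hfour : 4*(n:ℝ)*m ≤ ((T:ℝ)+2) * (16*C/((T:ℝ)+5) + 8*C/((T:ℝ)+3)) := by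
    have e : (n:ℝ) * (2*γ T*m) * ((T:ℝ)+2) = 4*(n:ℝ)*m := by
      rw [hγeq]
      field_simp
      ring
    have := mul_le_mul_of_nonneg_right upper (by positivity : (0:ℝ) ≤ (T:ℝ)+2)
    rw [e] at this
    linarith
  have hmT : m ≤ ((T:ℝ)+2)*(16*C/((T:ℝ)+5) + 8*C/((T:ℝ)+3))/(2*(T:ℝ)) := by
    rw [le_div_iff₀ (by positivity)]
    have h1 : 2*(T:ℝ)*m ≤ 4*(n:ℝ)*m := by nlinarith
    linarith
  -- finish
  refine ⟨s+i₀, by omega, by omega, ?_⟩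
  intro p hp q hq
  have hg := hgap (s+i₀) p hp q hq
  have hγst : γ (s+i₀) * (DP*DQ) ≤ 2*C/((T:ℝ)+5) := by
    have h1 : γ (s+i₀) ≤ γ s := hγmono s (s+i₀) (Nat.le_add_right _ _)
    have h2 : γ s ≤ 4/((T:ℝ)+5) := by
      rw [hγeq, div_le_div_iff₀ (by positivity) (by positivity)]
      linarith
    have h3 : DP*DQ ≤ C/2 := by nlinarith [sq_nonneg (DP-DQ)]
    have h4 : γ (s+i₀) * (DP*DQ) ≤ (4/((T:ℝ)+5)) * (C/2) := by
      apply mul_le_mul (le_trans h1 h2) h3 (mul_nonneg hDP0 hDQ0) (by positivity)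
    calc γ (s+i₀) * (DP*DQ) ≤ (4/((T:ℝ)+5)) * (C/2) := h4
      _ = 2*C/((T:ℝ)+5) := by ring
  have step1 : f (s+i₀) - ⟪x (s+i₀) - y (s+i₀), p - q⟫ ≤ m + 2*C/((T:ℝ)+5) := by
    linarith
  have step2 : m + 2*C/((T:ℝ)+5)
      ≤ ((T:ℝ)+2)*(16*C/((T:ℝ)+5) + 8*C/((T:ℝ)+3))/(2*(T:ℝ)) + 2*C/((T:ℝ)+5) := by
    linarith
  have step3 := alm_numeric' (T:ℝ) C hTr1 hC0
  have hsqrt : (25:ℝ) ≤ 6.75*(1+2*Real.sqrt 2) := by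
    nlinarith [Real.sq_sqrt (show (0:ℝ) ≤ 2 by norm_num), Real.sqrt_nonneg 2]
  have step4 : 25*C/((T:ℝ)+2) ≤ 6.75 * (1 + 2 * Real.sqrt 2) * C / ((T:ℝ)+2) := by
    rw [div_le_div_iff₀ (by positivity) (by positivity)]
    nlinarith [mul_nonneg hC0 (by positivity : (0:ℝ) ≤ (T:ℝ)+2)]
  have efin : f (s+i₀) = ‖x (s+i₀) - y (s+i₀)‖^2 := by rw [hfdef]
  calc ‖x (s+i₀) - y (s+i₀)‖^2 - ⟪x (s+i₀) - y (s+i₀), p - q⟫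
      = f (s+i₀) - ⟪x (s+i₀) - y (s+i₀), p - q⟫ := by rw [efin]
    _ ≤ m + 2*C/((T:ℝ)+5) := step1
    _ ≤ ((T:ℝ)+2)*(16*C/((T:ℝ)+5) + 8*C/((T:ℝ)+3))/(2*(T:ℝ)) + 2*C/((T:ℝ)+5) := step2
    _ ≤ 25*C/((T:ℝ)+2) := step3
    _ ≤ 6.75 * (1 + 2 * Real.sqrt 2) * C / ((T:ℝ)+2) := step4
end

section
/- Let P and Q be nonempty compact convex sets in a real inner product space with diameters D_P and D_Q, let D = √(D_P² + D_Q²), and set c = (D_P + D_Q + dist(P, Q)) · max{D_P, D_Q} + 2D². Consider the Alternating Linear Minimizations iterates with short steps: x₀ ∈ P, y₀ ∈ Q, and for t ≥ 0, u_t ∈ P minimizes ⟨x_t − y_t, x⟩ over P, γ_{t,1} = min{⟨x_t − y_t, x_t − u_t⟩/‖x_t − u_t‖², 1}, x_{t+1} = x_t + γ_{t,1}(u_t − x_t); v_t ∈ Q minimizes ⟨y_t − x_{t+1}, y⟩ over Q, γ_{t,2} = min{⟨y_t − x_{t+1}, y_t − v_t⟩/‖y_t − v_t‖², 1}, y_{t+1}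 = y_t + γ_{t,2}(v_t − y_t). Then with z_t = (x_t + y_t)/2, for every t ≥ 0: max{dist(z_t, P)², dist(z_t, Q)²} ≤ ‖x_t − y_t‖²/4 ≤ 4c/(t + 4) + dist(P, Q)²/4. -/
open RealInnerProductSpace Metric

set_option maxHeartbeats 1000000

lemma fw_norm_sq {G : Type*} [NormedAddCommGroup G] [InnerProductSpace ℝ G]
    (g d : G) (γ : ℝ) :
    ‖g - γ • d‖ ^ 2 = ‖g‖ ^ 2 - 2 * γ * ⟪g, d⟫ + γ ^ 2 * ‖d‖ ^ 2 := by
  rw [norm_sub_sq_real, real_inner_smul_right, norm_smul, Real.norm_eq_abs, mul_pow, sq_abs]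
  ring

lemma fw_step {G : Type*} [NormedAddCommGroup G] [InnerProductSpace ℝ G]
    (g d : G) (K a γ : ℝ) (ha : a = ⟪g, d⟫) (hγ : γ = min (a / ‖d‖ ^ 2) 1)
    (han : 0 ≤ a) (hK1 : ‖d‖ ^ 2 ≤ K) (hK2 : ‖g‖ * ‖d‖ ≤ K) :
    0 ≤ γ ∧ γ ≤ 1 ∧ γ * ‖d‖ ^ 2 ≤ a ∧
      a ^ 2 ≤ K * (2 * γ * a - γ ^ 2 * ‖d‖ ^ 2) ∧
      γ ^ 2 * ‖d‖ ^ 2 ≤ 2 * γ * a - γ ^ 2 * ‖d‖ ^ 2 := by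
  have hγ0 : 0 ≤ γ := by
    rw [hγ]; exact le_min (div_nonneg han (sq_nonneg _)) zero_le_one
  have hγ1 : γ ≤ 1 := by rw [hγ]; exact min_le_right _ _
  have hγd : γ * ‖d‖ ^ 2 ≤ a := by
    by_cases hd : ‖d‖ = 0
    · rw [hd]; simpa using han
    · have hd2 : 0 < ‖d‖ ^ 2 := by positivity
      have hle : γ ≤ a / ‖d‖ ^ 2 := by rw [hγ]; exact min_le_left _ _
      exact (le_div_iff₀ hd2).1 hle
  have hmove : γ ^ 2 * ‖d‖ ^ 2 ≤ 2 * γ * a - γ ^ 2 * ‖d‖ ^ 2 := by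
    nlinarith [mul_nonneg hγ0 (sub_nonneg.2 hγd)]
  refine ⟨hγ0, hγ1, hγd, ?_, hmove⟩
  have hΔ0 : 0 ≤ 2 * γ * a - γ ^ 2 * ‖d‖ ^ 2 := le_trans (by positivity) hmove
  by_cases hc : a / ‖d‖ ^ 2 ≤ 1
  · have hγe : γ = a / ‖d‖ ^ 2 := by rw [hγ, min_eq_left hc]
    by_cases hd : ‖d‖ = 0
    · have hdz : d = 0 := norm_eq_zero.1 hd
      have haz : a = 0 := by rw [ha, hdz, inner_zero_right]
      have hK0 : 0 ≤ K := le_trans (sq_nonneg _) hK1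
      nlinarith [mul_nonneg hK0 hΔ0]
    · have hd2 : 0 < ‖d‖ ^ 2 := by positivity
      have hqe : (2 * γ * a - γ ^ 2 * ‖d‖ ^ 2) * ‖d‖ ^ 2 = a ^ 2 := by
        rw [hγe]; field_simp; ring
      nlinarith [mul_le_mul_of_nonneg_left hK1 hΔ0]
  · push_neg at hc
    have hγe : γ = 1 := by rw [hγ, min_eq_right hc.le]
    have hd2 : 0 < ‖d‖ ^ 2 := by
      rcases (sq_nonneg ‖d‖).lt_or_eq with h | h
      · exact h
      · exfalso; rw [← h] at hc; simp at hc; linarith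
    have hda : ‖d‖ ^ 2 < a := (one_lt_div hd2).1 hc
    have hCS : a ≤ ‖g‖ * ‖d‖ := ha ▸ real_inner_le_norm g d
    nlinarith [mul_le_mul_of_nonneg_right (le_trans hCS hK2) han]

lemma alm_rate_key (K dp dq ΔX ΔY a b rq s : ℝ)
    (hK0 : 0 ≤ K) (hΔX : 0 ≤ ΔX) (hΔY : 0 ≤ ΔY)
    (ha0 : 0 ≤ a) (hb0 : 0 ≤ b) (hr0 : 0 ≤ rq)
    (hKa : a ^ 2 ≤ K * ΔX) (hKb : b ^ 2 ≤ K * ΔY) (hrq : rq ^ 2 ≤ ΔX * dq ^ 2)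
    (hs : s ≤ 2 * a + 2 * b + 2 * rq) (hspos : 0 < s) :
    s ^ 2 ≤ (16 * K + 32 * (dp ^ 2 + dq ^ 2)) * (ΔX + ΔY) := by
  have h1 : s ^ 2 ≤ (2 * a + 2 * b + 2 * rq) ^ 2 := by nlinarith
  have h2 : (2 * a + 2 * b + 2 * rq) ^ 2 ≤ 12 * (a ^ 2 + b ^ 2 + rq ^ 2) := by
    nlinarith [sq_nonneg (a - b), sq_nonneg (a - rq), sq_nonneg (b - rq)]
  have h3 : 12 * (a ^ 2 + b ^ 2 + rq ^ 2) ≤ 12 * (K * ΔX) + 12 * (K * ΔY) + 12 * (ΔX * dq ^ 2) := by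
    linarith
  nlinarith [mul_nonneg hK0 hΔX, mul_nonneg hK0 hΔY,
    mul_nonneg (sq_nonneg dp) hΔX, mul_nonneg (sq_nonneg dq) hΔX,
    mul_nonneg (sq_nonneg dp) hΔY, mul_nonneg (sq_nonneg dq) hΔY]

lemma alm_rate_recur (m s Z T : ℝ) (hm : 0 < m) (hs : 0 < s) (hT : 0 ≤ T)
    (hu : s * (T + 4) ≤ m) (hZ : s ^ 2 ≤ m * Z) :
    (s - Z) * (T + 5) ≤ m := by
  have h1 : m * ((s - Z) * (T + 5)) ≤ (m * s - s ^ 2) * (T + 5) := by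
    have hmz : m * s - m * Z ≤ m * s - s ^ 2 := by linarith
    have h5 : (0:ℝ) ≤ T + 5 := by linarith
    calc m * ((s - Z) * (T + 5)) = (m * s - m * Z) * (T + 5) := by ring
      _ ≤ (m * s - s ^ 2) * (T + 5) := mul_le_mul_of_nonneg_right hmz h5
  have h2 : (m * s - s ^ 2) * (T + 5) ≤ m * m := by
    nlinarith [mul_nonneg (mul_nonneg hs.le (sub_nonneg.2 hu)) (by linarith : (0:ℝ) ≤ T + 3),
      sq_nonneg (m - s * (T + 4)), sq_nonneg s]
  exact le_of_mul_le_mul_left (by linarith) hm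

lemma alm_base (dp dq M mx n K c : ℝ) (h : n ≤ dp + dq + M) (hn0 : 0 ≤ n)
    (hdp : 0 ≤ dp) (hdq : 0 ≤ dq) (hM : 0 ≤ M)
    (hmx1 : dp ≤ mx) (hmx2 : dq ≤ mx)
    (hK : K = (dp + dq + M) * mx) (hc : c = K + 2 * (dp ^ 2 + dq ^ 2)) :
    n ^ 2 - M ^ 2 ≤ 4 * c := by
  nlinarith [sq_nonneg (dp - dq), mul_le_mul_of_nonneg_left hmx1 hM,
    mul_le_mul_of_nonneg_left hmx2 hM, sq_nonneg (dp + dq)]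

lemma alm_Kb1 (n dd S mx : ℝ) (h0 : 0 ≤ n) (h1 : n ≤ dd) (h2 : dd ≤ mx) (h3 : dd ≤ S) :
    n ^ 2 ≤ S * mx := by nlinarith

lemma alm_Kb2 (ng nd S dd mx : ℝ) (h0 : 0 ≤ ng) (h0' : 0 ≤ nd) (h1 : ng ≤ S)
    (h2 : nd ≤ dd) (h3 : dd ≤ mx) (h4 : 0 ≤ S) : ng * nd ≤ S * mx := by nlinarith

/-- **Primal convergence of Alternating Linear Minimizations** with the short-step
rule: with `z_t = (x_t + y_t)/2` and
`c = (D_P + D_Q + dist(P,Q)) max{D_P, D_Q} + 2D²`, `D = √(D_P² + D_Q²)`,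
`max{dist(z_t,P)², dist(z_t,Q)²} ≤ ‖x_t − y_t‖²/4 ≤ 4c/(t+4) + dist(P,Q)²/4`. -/
theorem alm_short_step_primal_rate
    {G : Type*} [NormedAddCommGroup G] [InnerProductSpace ℝ G]
    (P Q : Set G) (hPne : P.Nonempty) (hQne : Q.Nonempty)
    (hPcpt : IsCompact P) (hQcpt : IsCompact Q)
    (hPconv : Convex ℝ P) (hQconv : Convex ℝ Q)
    (DP DQ : ℝ) (hDP : Metric.diam P = DP) (hDQ : Metric.diam Q = DQ)
    (xs ys : G) (hxs : xs ∈ P) (hys : ys ∈ Q)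
    (hmin : ∀ p ∈ P, ∀ q ∈ Q, ‖xs - ys‖ ≤ ‖p - q‖)
    (D c : ℝ) (hDdef : D = Real.sqrt (DP ^ 2 + DQ ^ 2))
    (hc : c = (DP + DQ + ‖xs - ys‖) * max DP DQ + 2 * D ^ 2)
    (x y u v : ℕ → G) (hx0 : x 0 ∈ P) (hy0 : y 0 ∈ Q)
    (humem : ∀ t : ℕ, u t ∈ P)
    (humin : ∀ t : ℕ, ∀ w ∈ P, ⟪x t - y t, u t⟫ ≤ ⟪x t - y t, w⟫)
    (hxupd : ∀ t : ℕ, x (t + 1) = x t +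
      (min (⟪x t - y t, x t - u t⟫ / ‖x t - u t‖ ^ 2) 1) • (u t - x t))
    (hvmem : ∀ t : ℕ, v t ∈ Q)
    (hvmin : ∀ t : ℕ, ∀ w ∈ Q, ⟪y t - x (t + 1), v t⟫ ≤ ⟪y t - x (t + 1), w⟫)
    (hyupd : ∀ t : ℕ, y (t + 1) = y t +
      (min (⟪y t - x (t + 1), y t - v t⟫ / ‖y t - v t‖ ^ 2) 1) • (v t - y t)) :
    ∀ t : ℕ,
      max (infDist ((2 : ℝ)⁻¹ • (x t + y t)) P ^ 2)
          (infDist ((2 : ℝ)⁻¹ • (x t + y t)) Q ^ 2) ≤ ‖x t - y t‖ ^ 2 / 4 ∧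
      ‖x t - y t‖ ^ 2 / 4 ≤ 4 * c / ((t : ℝ) + 4) + ‖xs - ys‖ ^ 2 / 4 := by
  have hM0 : (0:ℝ) ≤ ‖xs - ys‖ := norm_nonneg _
  have hDP0 : 0 ≤ DP := hDP ▸ diam_nonneg
  have hDQ0 : 0 ≤ DQ := hDQ ▸ diam_nonneg
  have hD2 : D ^ 2 = DP ^ 2 + DQ ^ 2 := by
    rw [hDdef, Real.sq_sqrt (by positivity)]
  set M : ℝ := ‖xs - ys‖ with hMdef
  set K : ℝ := (DP + DQ + M) * max DP DQ with hKdef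
  have hmax1 : DP ≤ max DP DQ := le_max_left _ _
  have hmax2 : DQ ≤ max DP DQ := le_max_right _ _
  have hK0 : 0 ≤ K := by
    have h : 0 ≤ max DP DQ := le_trans hDP0 hmax1
    rw [hKdef]; positivity
  have hcK : c = K + 2 * (DP ^ 2 + DQ ^ 2) := by rw [hc, hD2]
  have hc0 : 0 ≤ c := by
    have := sq_nonneg DP; have := sq_nonneg DQ; linarith
  have hDPS : DP ≤ DP + DQ + M := by linarith
  have hDQS : DQ ≤ DP + DQ + M := by linarith
  have hS0 : (0:ℝ) ≤ DP + DQ + M := by linarith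
  have hPd : ∀ p ∈ P, ∀ p' ∈ P, ‖p - p'‖ ≤ DP := by
    intro p hp p' hp'
    rw [← dist_eq_norm, ← hDP]
    exact dist_le_diam_of_mem hPcpt.isBounded hp hp'
  have hQd : ∀ q ∈ Q, ∀ q' ∈ Q, ‖q - q'‖ ≤ DQ := by
    intro q hq q' hq'
    rw [← dist_eq_norm, ← hDQ]
    exact dist_le_diam_of_mem hQcpt.isBounded hq hq'
  have hPQ : ∀ p ∈ P, ∀ q ∈ Q, ‖p - q‖ ≤ DP + DQ + M := by
    intro p hp q hq
    have h1 : ‖p - q‖ ≤ ‖p - xs‖ + ‖xs - ys‖ + ‖ys - q‖ := by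
      calc ‖p - q‖ = ‖(p - xs) + (xs - ys) + (ys - q)‖ := by abel_nf
        _ ≤ ‖(p - xs) + (xs - ys)‖ + ‖ys - q‖ := norm_add_le _ _
        _ ≤ ‖p - xs‖ + ‖xs - ys‖ + ‖ys - q‖ := by
            have := norm_add_le (p - xs) (xs - ys); linarith
    have h2 : ‖p - xs‖ ≤ DP := hPd _ hp _ hxs
    have h3 : ‖ys - q‖ ≤ DQ := hQd _ hys _ hq
    rw [← hMdef] at h1
    linarith
  -- main induction
  have main : ∀ t : ℕ, x t ∈ P ∧ y t ∈ Q ∧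
      ‖x t - y t‖ ^ 2 - M ^ 2 ≤ 16 * c / ((t : ℝ) + 4) := by
    intro t
    induction t with
    | zero =>
      refine ⟨hx0, hy0, ?_⟩
      have h1 : ‖x 0 - y 0‖ ≤ DP + DQ + M := hPQ _ hx0 _ hy0
      have h3 : ((0:ℕ) : ℝ) + 4 = 4 := by norm_num
      rw [h3, show (16:ℝ) * c / 4 = 4 * c by ring]
      exact alm_base DP DQ M (max DP DQ) ‖x 0 - y 0‖ K c h1 (norm_nonneg _)
        hDP0 hDQ0 hM0 hmax1 hmax2 hKdef hcK
    | succ t ih =>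
      obtain ⟨hxt, hyt, hrec⟩ := ih
      have hxu := hxupd t
      set a : ℝ := ⟪x t - y t, x t - u t⟫ with hadef
      set γ₁ : ℝ := min (a / ‖x t - u t‖ ^ 2) 1 with hγ₁def
      have hA0 : 0 ≤ a := by
        have h := humin t (x t) hxt
        rw [hadef, inner_sub_right]; linarith
      have hdP : ‖x t - u t‖ ≤ DP := hPd _ hxt _ (humem t)
      have hgS : ‖x t - y t‖ ≤ DP + DQ + M := hPQ _ hxt _ hyt
      have hK1 : ‖x t - u t‖ ^ 2 ≤ K := by
        rw [hKdef]; exact alm_Kb1 _ DP _ _ (norm_nonneg _) hdP hmax1 hDPS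
      have hK2 : ‖x t - y t‖ * ‖x t - u t‖ ≤ K := by
        rw [hKdef]
        exact alm_Kb2 _ _ _ DP _ (norm_nonneg _) (norm_nonneg _) hgS hdP hmax1 hS0
      obtain ⟨hγ0, hγ1, hγd, hKa, hmoveX⟩ :=
        fw_step (x t - y t) (x t - u t) K a γ₁ hadef hγ₁def hA0 hK1 hK2
      set ΔX : ℝ := 2 * γ₁ * a - γ₁ ^ 2 * ‖x t - u t‖ ^ 2 with hΔXdef
      have hΔX0 : 0 ≤ ΔX := le_trans (by positivity) hmoveX
      have hx' : x (t + 1) ∈ P := by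
        have h := hPconv hxt (humem t) (by linarith : (0:ℝ) ≤ 1 - γ₁) hγ0 (by ring)
        rw [hxu]
        convert h using 1
        module
      have hnormX : ‖x (t + 1) - y t‖ ^ 2 = ‖x t - y t‖ ^ 2 - ΔX := by
        have he : x (t + 1) - y t = (x t - y t) - γ₁ • (x t - u t) := by
          rw [hxu]; module
        rw [he, fw_norm_sq, hΔXdef, ← hadef]; ring
      -- y step
      have hyu := hyupd t
      set b : ℝ := ⟪y t - x (t + 1), y t - v t⟫ with hbdef
      set γ₂ : ℝ := min (b / ‖y t - v t‖ ^ 2) 1 with hγ₂def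
      have hB0 : 0 ≤ b := by
        have h := hvmin t (y t) hyt
        rw [hbdef, inner_sub_right]; linarith
      have heQ : ‖y t - v t‖ ≤ DQ := hQd _ hyt _ (hvmem t)
      have hg2S : ‖y t - x (t + 1)‖ ≤ DP + DQ + M := by
        rw [norm_sub_rev]; exact hPQ _ hx' _ hyt
      have hK1' : ‖y t - v t‖ ^ 2 ≤ K := by
        rw [hKdef]; exact alm_Kb1 _ DQ _ _ (norm_nonneg _) heQ hmax2 hDQS
      have hK2' : ‖y t - x (t + 1)‖ * ‖y t - v t‖ ≤ K := by
        rw [hKdef]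
        exact alm_Kb2 _ _ _ DQ _ (norm_nonneg _) (norm_nonneg _) hg2S heQ hmax2 hS0
      obtain ⟨hδ0, hδ1, hδd, hKb, hmoveY⟩ :=
        fw_step (y t - x (t + 1)) (y t - v t) K b γ₂ hbdef hγ₂def hB0 hK1' hK2'
      set ΔY : ℝ := 2 * γ₂ * b - γ₂ ^ 2 * ‖y t - v t‖ ^ 2 with hΔYdef
      have hΔY0 : 0 ≤ ΔY := le_trans (by positivity) hmoveY
      have hy' : y (t + 1) ∈ Q := by
        have h := hQconv hyt (hvmem t) (by linarith : (0:ℝ) ≤ 1 - γ₂) hδ0 (by ring)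
        rw [hyu]
        convert h using 1
        module
      have hnormY : ‖y (t + 1) - x (t + 1)‖ ^ 2 = ‖y t - x (t + 1)‖ ^ 2 - ΔY := by
        have he : y (t + 1) - x (t + 1) = (y t - x (t + 1)) - γ₂ • (y t - v t) := by
          rw [hyu]; module
        rw [he, fw_norm_sq, hΔYdef, ← hbdef]; ring
      have htotal : ‖x (t + 1) - y (t + 1)‖ ^ 2 = ‖x t - y t‖ ^ 2 - ΔX - ΔY := by
        have h1 : ‖x (t + 1) - y (t + 1)‖ ^ 2 = ‖y (t + 1) - x (t + 1)‖ ^ 2 := by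
          rw [norm_sub_rev]
        have h2 : ‖y t - x (t + 1)‖ ^ 2 = ‖x (t + 1) - y t‖ ^ 2 := by
          rw [norm_sub_rev]
        rw [h1, hnormY, h2, hnormX]
      -- movement bound
      have hr2 : ‖x (t + 1) - x t‖ ^ 2 ≤ ΔX := by
        have he : x (t + 1) - x t = (-γ₁) • (x t - u t) := by
          rw [hxu]; module
        have heq : ‖x (t + 1) - x t‖ ^ 2 = γ₁ ^ 2 * ‖x t - u t‖ ^ 2 := by
          rw [he, norm_smul, Real.norm_eq_abs, mul_pow, sq_abs, neg_pow]
          ring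
        linarith [hmoveX]
      -- gap inequality
      have hgap : ‖x t - y t‖ ^ 2 - M ^ 2 ≤
          2 * ⟪x t - y t, x t - xs⟫ + 2 * ⟪x t - y t, ys - y t⟫ := by
        have h1 : (x t - xs) + (ys - y t) = (x t - y t) - (xs - ys) := by abel
        have h2 : ⟪x t - y t, x t - xs⟫ + ⟪x t - y t, ys - y t⟫
            = ⟪x t - y t, (x t - y t) - (xs - ys)⟫ := by
          rw [← inner_add_right, h1]
        have h3 := norm_sub_sq_real (x t - y t) (xs - ys)
        rw [← hMdef] at h3
        have h4 : ⟪x t - y t, (x t - y t) - (xs - ys)⟫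
            = ‖x t - y t‖ ^ 2 - ⟪x t - y t, xs - ys⟫ := by
          rw [inner_sub_right, real_inner_self_eq_norm_sq]
        linarith [sq_nonneg ‖(x t - y t) - (xs - ys)‖, h2, h3, h4]
      have h1a : ⟪x t - y t, x t - xs⟫ ≤ a := by
        have h := humin t xs hxs
        rw [hadef, inner_sub_right, inner_sub_right]
        linarith
      have h2b : ⟪x t - y t, ys - y t⟫ ≤ b + ‖x (t + 1) - x t‖ * DQ := by
        have hv := hvmin t ys hys
        have hid : ⟪x t - y t, ys - y t⟫
            = ⟪y t - x (t + 1), y t - ys⟫ + ⟪x (t + 1) - x t, y t - ys⟫ := by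
          rw [← inner_add_left,
            show (y t - x (t + 1)) + (x (t + 1) - x t) = y t - x t by abel,
            show y t - x t = -(x t - y t) by abel,
            show y t - ys = -(ys - y t) by abel, inner_neg_neg]
        have hfirst : ⟪y t - x (t + 1), y t - ys⟫ ≤ b := by
          rw [hbdef, inner_sub_right, inner_sub_right]
          linarith
        have hsecond : ⟪x (t + 1) - x t, y t - ys⟫ ≤ ‖x (t + 1) - x t‖ * DQ := by
          calc ⟪x (t + 1) - x t, y t - ys⟫ ≤ ‖x (t + 1) - x t‖ * ‖y t - ys‖ :=
              real_inner_le_norm _ _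
            _ ≤ ‖x (t + 1) - x t‖ * DQ :=
              mul_le_mul_of_nonneg_left (hQd _ hyt _ hys) (norm_nonneg _)
        linarith
      -- assemble
      have hr0 : (0:ℝ) ≤ ‖x (t + 1) - x t‖ * DQ := by positivity
      have hrDQ2 : (‖x (t + 1) - x t‖ * DQ) ^ 2 ≤ ΔX * DQ ^ 2 := by
        rw [mul_pow]
        exact mul_le_mul_of_nonneg_right hr2 (sq_nonneg _)
      have hT0 : (0:ℝ) ≤ (t : ℝ) := Nat.cast_nonneg t
      have hcast : ((t + 1 : ℕ) : ℝ) + 4 = (t : ℝ) + 5 := by push_cast; ring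
      refine ⟨hx', hy', ?_⟩
      rw [htotal, hcast]
      by_cases hspos : 0 < ‖x t - y t‖ ^ 2 - M ^ 2
      · have hsab : ‖x t - y t‖ ^ 2 - M ^ 2
            ≤ 2 * a + 2 * b + 2 * (‖x (t + 1) - x t‖ * DQ) := by linarith
        have key := alm_rate_key K DP DQ ΔX ΔY a b (‖x (t + 1) - x t‖ * DQ)
          (‖x t - y t‖ ^ 2 - M ^ 2) hK0 hΔX0 hΔY0 hA0 hB0 hr0 hKa hKb hrDQ2 hsab hspos
        have h16 : (16 * K + 32 * (DP ^ 2 + DQ ^ 2)) = 16 * c := by rw [hcK]; ring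
        rw [h16] at key
        have hcpos : 0 < c := by
          by_contra hcle
          push_neg at hcle
          have hle : 16 * c / ((t : ℝ) + 4) ≤ 0 :=
            div_nonpos_of_nonpos_of_nonneg (by linarith) (by positivity)
          linarith
        have hu : (‖x t - y t‖ ^ 2 - M ^ 2) * ((t : ℝ) + 4) ≤ 16 * c := by
          have h := (le_div_iff₀ (by positivity : (0:ℝ) < (t : ℝ) + 4)).1 hrec
          linarith
        have hrecur := alm_rate_recur (16 * c) (‖x t - y t‖ ^ 2 - M ^ 2) (ΔX + ΔY)
          (t : ℝ) (by linarith) hspos hT0 hu key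
        rw [le_div_iff₀ (by positivity : (0:ℝ) < (t : ℝ) + 5)]
        calc (‖x t - y t‖ ^ 2 - ΔX - ΔY - M ^ 2) * ((t : ℝ) + 5)
            = (‖x t - y t‖ ^ 2 - M ^ 2 - (ΔX + ΔY)) * ((t : ℝ) + 5) := by ring
          _ ≤ 16 * c := hrecur
      · push_neg at hspos
        have hdiv : (0:ℝ) ≤ 16 * c / ((t : ℝ) + 5) := by positivity
        linarith
  -- conclude
  intro t
  obtain ⟨hxt, hyt, hrec⟩ := main t
  constructor
  · have hzx : infDist ((2 : ℝ)⁻¹ • (x t + y t)) P ≤ 2⁻¹ * ‖x t - y t‖ := by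
      have h1 : infDist ((2 : ℝ)⁻¹ • (x t + y t)) P ≤ dist ((2 : ℝ)⁻¹ • (x t + y t)) (x t) :=
        infDist_le_dist_of_mem hxt
      have h2 : (2 : ℝ)⁻¹ • (x t + y t) - x t = (2 : ℝ)⁻¹ • (y t - x t) := by module
      rw [dist_eq_norm, h2, norm_smul, Real.norm_eq_abs,
        show |(2:ℝ)⁻¹| = 2⁻¹ by norm_num, norm_sub_rev (y t)] at h1
      exact h1
    have hzy : infDist ((2 : ℝ)⁻¹ • (x t + y t)) Q ≤ 2⁻¹ * ‖x t - y t‖ := by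
      have h1 : infDist ((2 : ℝ)⁻¹ • (x t + y t)) Q ≤ dist ((2 : ℝ)⁻¹ • (x t + y t)) (y t) :=
        infDist_le_dist_of_mem hyt
      have h2 : (2 : ℝ)⁻¹ • (x t + y t) - y t = (2 : ℝ)⁻¹ • (x t - y t) := by module
      rw [dist_eq_norm, h2, norm_smul, Real.norm_eq_abs,
        show |(2:ℝ)⁻¹| = 2⁻¹ by norm_num] at h1
      exact h1
    have hn0 : (0:ℝ) ≤ ‖x t - y t‖ := norm_nonneg _
    have hhalf : (2⁻¹ * ‖x t - y t‖) ^ 2 = ‖x t - y t‖ ^ 2 / 4 := by ring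
    apply max_le
    · calc infDist ((2 : ℝ)⁻¹ • (x t + y t)) P ^ 2 ≤ (2⁻¹ * ‖x t - y t‖) ^ 2 :=
          pow_le_pow_left₀ infDist_nonneg hzx 2
        _ = ‖x t - y t‖ ^ 2 / 4 := hhalf
    · calc infDist ((2 : ℝ)⁻¹ • (x t + y t)) Q ^ 2 ≤ (2⁻¹ * ‖x t - y t‖) ^ 2 :=
          pow_le_pow_left₀ infDist_nonneg hzy 2
        _ = ‖x t - y t‖ ^ 2 / 4 := hhalf
  · have h4 : 16 * c / ((t : ℝ) + 4) / 4 = 4 * c / ((t : ℝ) + 4) := by ring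
    linarith [hrec, h4.le, h4.ge]
end

section
/- Let P and Q be nonempty compact convex sets in a real inner product space with diameters D_P and D_Q, let D = √(D_P² + D_Q²), and set c = (D_P + D_Q + dist(P, Q)) · max{D_P, D_Q} + 2D². Consider the Alternating Linear Minimizations iterates with short steps: x₀ ∈ P, y₀ ∈ Q, and for t ≥ 0, u_t ∈ P minimizes ⟨x_t − y_t, x⟩ over P, γ_{t,1} = min{⟨x_t − y_t, x_t − u_t⟩/‖x_t − u_t‖², 1}, x_{t+1} = x_t + γ_{t,1}(u_t − x_t); v_t ∈ Q minimizes ⟨y_t − x_{t+1}, y⟩ over Q, γ_{t,2} = min{⟨y_t − x_{t+1}, y_t − v_t⟩/‖y_t − v_t‖², 1}, y_{t+1} = y_t + γ_{t,2}(v_t − y_t). Then for every T ≥ 1: min_{1 ≤ t ≤ T} max_{x ∈ P, y ∈ Q} ( ‖x_t − y_t‖² − ⟨x_t − y_t, x − y⟩ ) ≤ 16c/(T + 4). -/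
open RealInnerProductSpace Metric

lemma cs2 {a b p q X Y : ℝ} (ha : 0 ≤ a) (hb : 0 ≤ b) (hp : 0 ≤ p) (hq : 0 ≤ q)
    (hX : 0 ≤ X) (hY : 0 ≤ Y) (h1 : a^2 ≤ p*X) (h2 : b^2 ≤ q*Y) :
    (a+b)^2 ≤ (p+q)*(X+Y) := by
  have hsq : (2*a*b)^2 ≤ (p*Y+q*X)^2 := by
    nlinarith [sq_nonneg (p*Y - q*X), mul_le_mul h1 h2 (sq_nonneg b) (mul_nonneg hp hX)]
  have h2ab : 2*a*b ≤ p*Y+q*X := by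
    have hx0 : (0:ℝ) ≤ 2*a*b := by positivity
    have hy0 : (0:ℝ) ≤ p*Y+q*X := by positivity
    exact (pow_le_pow_iff_left₀ hx0 hy0 (by norm_num)).mp hsq
  nlinarith

lemma hstep {H K : ℝ} (hK : 0 < K) (t : ℝ) (ht : 0 ≤ t) (hH0 : 0 ≤ H)
    (hHle : H ≤ K / (t+4)) : H - H^2/K ≤ K/(t+5) := by
  have h1 : (0:ℝ) < t + 4 := by linarith
  have h2 : (0:ℝ) < t + 5 := by linarith
  have hH4 : H * (t+4) ≤ K := (le_div_iff₀ h1).mp hHle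
  have key : H - H^2/K = (H*K - H^2)/K := by field_simp
  rw [key, div_le_div_iff₀ hK h2]
  nlinarith [sq_nonneg H, sq_nonneg (K - H*(t+4)), mul_nonneg (mul_nonneg (by linarith : (0:ℝ) ≤ t+3) hH0) (by linarith : 0 ≤ K - H*(t+4))]

lemma step_facts {G : Type*} [NormedAddCommGroup G] [InnerProductSpace ℝ G]
    (w z e : G) (Dp R g θ : ℝ)
    (hg : g = ⟪w - z, w - e⟫) (hθ : θ = min (g / ‖w - e‖ ^ 2) 1)
    (hd : ‖w - e‖ ≤ Dp) (hwz : ‖w - z‖ ≤ R) (hg0 : 0 ≤ g)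
    (hDp0 : 0 ≤ Dp) (hR0 : 0 ≤ R) :
    0 ≤ θ ∧ θ ≤ 1 ∧
    (θ * ‖w - e‖) ^ 2 ≤ ‖w - z‖ ^ 2 - ‖w + θ • (e - w) - z‖ ^ 2 ∧
    g ^ 2 ≤ (‖w - z‖ ^ 2 - ‖w + θ • (e - w) - z‖ ^ 2) * (Dp * (Dp + R)) ∧
    g ≤ R * Dp := by
  have hθ0 : 0 ≤ θ := by
    rw [hθ]; exact le_min (div_nonneg hg0 (by positivity)) zero_le_one
  have hθ1 : θ ≤ 1 := by rw [hθ]; exact min_le_right _ _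
  have hid : ‖w + θ • (e - w) - z‖ ^ 2 = ‖w - z‖^2 - 2*θ*g + θ^2 * ‖w - e‖^2 := by
    have h1 : w + θ • (e - w) - z = (w - z) + θ • (e - w) := by abel
    have h2 : ⟪w - z, e - w⟫ = -g := by
      rw [hg, show e - w = -(w - e) by abel, inner_neg_right]
    rw [h1, norm_add_sq_real, real_inner_smul_right, h2, norm_smul]
    rw [Real.norm_eq_abs, abs_of_nonneg hθ0, norm_sub_rev e w]
    ring
  have hδ : ‖w - z‖ ^ 2 - ‖w + θ • (e - w) - z‖ ^ 2 = 2*θ*g - θ^2*‖w - e‖^2 := by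
    rw [hid]; ring
  have hθd : θ * ‖w - e‖^2 ≤ g := by
    rcases eq_or_ne (‖w - e‖) 0 with h0 | h0
    · rw [h0]; simpa using hg0
    · have hs : 0 < ‖w - e‖^2 := by positivity
      have hm : θ ≤ g / ‖w - e‖^2 := hθ ▸ min_le_left _ _
      calc θ * ‖w - e‖^2 ≤ (g/‖w - e‖^2) * ‖w - e‖^2 := by nlinarith
        _ = g := div_mul_cancel₀ _ (ne_of_gt hs)
  have fact3 : (θ * ‖w - e‖) ^ 2 ≤ ‖w - z‖ ^ 2 - ‖w + θ • (e - w) - z‖ ^ 2 := by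
    rw [hδ]
    nlinarith [mul_le_mul_of_nonneg_left hθd hθ0]
  have fact5 : g ≤ R * Dp := by
    rw [hg]
    calc ⟪w - z, w - e⟫ ≤ ‖w - z‖ * ‖w - e‖ := real_inner_le_norm _ _
      _ ≤ R * Dp := mul_le_mul hwz hd (norm_nonneg _) hR0
  refine ⟨hθ0, hθ1, fact3, ?_, fact5⟩
  rcases le_or_gt (g / ‖w - e‖ ^ 2) 1 with hle | hlt
  · have hθeq : θ = g / ‖w - e‖^2 := hθ ▸ min_eq_left hle
    rcases eq_or_ne (‖w - e‖) 0 with h0 | h0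
    · have hgz : g = 0 := by
        rw [hg, norm_eq_zero.mp h0, inner_zero_right]
      rw [hδ, hgz, h0]; norm_num
    · have hs : 0 < ‖w - e‖^2 := by positivity
      have hδeq : ‖w - z‖ ^ 2 - ‖w + θ • (e - w) - z‖ ^ 2 = g^2/‖w - e‖^2 := by
        rw [hδ, hθeq]; field_simp; ring
      rw [hδeq]
      have hsD : ‖w - e‖^2 ≤ Dp*(Dp+R) := by
        nlinarith [mul_le_mul hd hd (norm_nonneg (w - e)) hDp0, mul_nonneg hDp0 hR0]
      have h1 : 0 ≤ g^2/‖w - e‖^2 := div_nonneg (sq_nonneg g) hs.le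
      calc g^2 = g^2/‖w - e‖^2 * ‖w - e‖^2 := (div_mul_cancel₀ _ (ne_of_gt hs)).symm
        _ ≤ g^2/‖w - e‖^2 * (Dp*(Dp+R)) := mul_le_mul_of_nonneg_left hsD h1
  · have h0 : ‖w - e‖ ≠ 0 := by
      intro h0; rw [h0] at hlt; norm_num at hlt
    have hs : 0 < ‖w - e‖^2 := by positivity
    have hθeq : θ = 1 := hθ ▸ min_eq_right hlt.le
    have hsg : ‖w - e‖^2 < g := (one_lt_div hs).mp hlt
    rw [hδ, hθeq]
    nlinarith [mul_le_mul_of_nonneg_left fact5 hg0, sq_nonneg (‖w - e‖), mul_nonneg hDp0 hDp0]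

set_option maxHeartbeats 1000000 in
/-- **Frank–Wolfe-gap convergence of Alternating Linear Minimizations** with the
short-step rule: with `c = (D_P + D_Q + dist(P,Q)) max{D_P, D_Q} + 2D²`,
`D = √(D_P² + D_Q²)`, one has
`min_{1 ≤ t ≤ T} max_{x ∈ P, y ∈ Q} (‖x_t − y_t‖² − ⟨x_t − y_t, x − y⟩) ≤ 16c/(T+4)`. -/
theorem alm_short_step_dual_gap_rate
    {G : Type*} [NormedAddCommGroup G] [InnerProductSpace ℝ G]
    (P Q : Set G) (hPne : P.Nonempty) (hQne : Q.Nonempty)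
    (hPcpt : IsCompact P) (hQcpt : IsCompact Q)
    (hPconv : Convex ℝ P) (hQconv : Convex ℝ Q)
    (DP DQ : ℝ) (hDP : Metric.diam P = DP) (hDQ : Metric.diam Q = DQ)
    (xs ys : G) (hxs : xs ∈ P) (hys : ys ∈ Q)
    (hmin : ∀ p ∈ P, ∀ q ∈ Q, ‖xs - ys‖ ≤ ‖p - q‖)
    (D c : ℝ) (hDdef : D = Real.sqrt (DP ^ 2 + DQ ^ 2))
    (hc : c = (DP + DQ + ‖xs - ys‖) * max DP DQ + 2 * D ^ 2)
    (x y u v : ℕ → G) (hx0 : x 0 ∈ P) (hy0 : y 0 ∈ Q)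
    (humem : ∀ t : ℕ, u t ∈ P)
    (humin : ∀ t : ℕ, ∀ w ∈ P, ⟪x t - y t, u t⟫ ≤ ⟪x t - y t, w⟫)
    (hxupd : ∀ t : ℕ, x (t + 1) = x t +
      (min (⟪x t - y t, x t - u t⟫ / ‖x t - u t‖ ^ 2) 1) • (u t - x t))
    (hvmem : ∀ t : ℕ, v t ∈ Q)
    (hvmin : ∀ t : ℕ, ∀ w ∈ Q, ⟪y t - x (t + 1), v t⟫ ≤ ⟪y t - x (t + 1), w⟫)
    (hyupd : ∀ t : ℕ, y (t + 1) = y t +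
      (min (⟪y t - x (t + 1), y t - v t⟫ / ‖y t - v t‖ ^ 2) 1) • (v t - y t)) :
    ∀ T : ℕ, 1 ≤ T → ∃ t : ℕ, 1 ≤ t ∧ t ≤ T ∧
      ∀ p ∈ P, ∀ q ∈ Q,
        ‖x t - y t‖ ^ 2 - ⟪x t - y t, p - q⟫ ≤ 16 * c / ((T : ℝ) + 4) := by
  intro T hT
  have hDP0 : 0 ≤ DP := hDP ▸ Metric.diam_nonneg
  have hDQ0 : 0 ≤ DQ := hDQ ▸ Metric.diam_nonneg
  set M : ℝ := max DP DQ with hM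
  set R : ℝ := DP + DQ + ‖xs - ys‖ with hR
  have hM0 : 0 ≤ M := le_trans hDP0 (le_max_left _ _)
  have hDPM : DP ≤ M := le_max_left _ _
  have hDQM : DQ ≤ M := le_max_right _ _
  have hR0 : 0 ≤ R := by rw [hR]; positivity
  have hMR : M ≤ R := by
    rw [hM, hR]; exact max_le (by linarith [norm_nonneg (xs - ys)]) (by linarith [norm_nonneg (xs - ys)])
  have hD2 : D^2 = DP^2 + DQ^2 := by rw [hDdef, Real.sq_sqrt (by positivity)]
  have hc0 : 0 ≤ c := by rw [hc]; linarith [mul_nonneg hR0 hM0, sq_nonneg D]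
  have hPd : ∀ p ∈ P, ∀ p' ∈ P, ‖p - p'‖ ≤ DP := by
    intro p hp p' hp'
    rw [← dist_eq_norm, ← hDP]
    exact Metric.dist_le_diam_of_mem hPcpt.isBounded hp hp'
  have hQd : ∀ q ∈ Q, ∀ q' ∈ Q, ‖q - q'‖ ≤ DQ := by
    intro q hq q' hq'
    rw [← dist_eq_norm, ← hDQ]
    exact Metric.dist_le_diam_of_mem hQcpt.isBounded hq hq'
  have hPQR : ∀ p ∈ P, ∀ q ∈ Q, ‖p - q‖ ≤ R := by
    intro p hp q hq
    have h1 : p - q = (p - xs) + (xs - ys) + (ys - q) := by abel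
    have h2 : ‖p - q‖ ≤ ‖p - xs‖ + ‖xs - ys‖ + ‖ys - q‖ := by
      rw [h1]; exact norm_add₃_le
    have h3 := hPd p hp xs hxs
    have h4 := hQd ys hys q hq
    rw [hR]; linarith
  -- membership of iterates
  have hseg : ∀ (S : Set G), Convex ℝ S → ∀ a ∈ S, ∀ b ∈ S, ∀ θ : ℝ, 0 ≤ θ → θ ≤ 1 →
      a + θ • (b - a) ∈ S := by
    intro S hS a ha b hb θ h0 h1
    have : a + θ • (b - a) = (1 - θ) • a + θ • b := by module
    rw [this]
    exact hS ha hb (by linarith) h0 (by ring)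
  have hmemXY : ∀ t, x t ∈ P ∧ y t ∈ Q := by
    intro t; induction t with
    | zero => exact ⟨hx0, hy0⟩
    | succ n ih =>
      have hg10 : 0 ≤ ⟪x n - y n, x n - u n⟫ := by
        have := humin n (x n) ih.1
        rw [inner_sub_right]; linarith
      have hxP : x (n+1) ∈ P := by
        rw [hxupd n]
        exact hseg P hPconv _ ih.1 _ (humem n)  _
          (le_min (div_nonneg hg10 (by positivity)) zero_le_one) (min_le_right _ _)
      have hg20 : 0 ≤ ⟪y n - x (n+1), y n - v n⟫ := by
        have := hvmin n (y n) ih.2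
        rw [inner_sub_right]; linarith
      have hyQ : y (n+1) ∈ Q := by
        rw [hyupd n]
        exact hseg Q hQconv _ ih.2 _ (hvmem n) _
          (le_min (div_nonneg hg20 (by positivity)) zero_le_one) (min_le_right _ _)
      exact ⟨hxP, hyQ⟩
  -- key facts per step
  have keyfacts : ∀ t : ℕ, ∃ s δ : ℝ, 0 ≤ s ∧ 0 ≤ δ ∧
      ‖x (t+1) - y (t+1)‖^2 = ‖x t - y t‖^2 - δ ∧
      (∀ p ∈ P, ∀ q ∈ Q, ‖x t - y t‖^2 - ⟪x t - y t, p - q⟫ ≤ s) ∧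
      s^2 ≤ 4*c*δ ∧ s ≤ 3*c := by
    intro t
    obtain ⟨hxt, hyt⟩ := hmemXY t
    obtain ⟨hxt1, hyt1⟩ := hmemXY (t+1)
    have hg10 : 0 ≤ ⟪x t - y t, x t - u t⟫ := by
      have := humin t (x t) hxt
      rw [inner_sub_right]; linarith
    have hd1DP : ‖x t - u t‖ ≤ DP := hPd _ hxt _ (humem t)
    obtain ⟨hγ0, hγ1, hx3, hx4, hx5⟩ := step_facts (x t) (y t) (u t) DP R _ _ rfl rfl
      hd1DP (hPQR _ hxt _ hyt) hg10 hDP0 hR0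
    rw [← hxupd t] at hx3 hx4
    have hg20 : 0 ≤ ⟪y t - x (t+1), y t - v t⟫ := by
      have := hvmin t (y t) hyt
      rw [inner_sub_right]; linarith
    obtain ⟨hμ0, hμ1, hy3, hy4, hy5⟩ := step_facts (y t) (x (t+1)) (v t) DQ R _ _ rfl rfl
      (hQd _ hyt _ (hvmem t)) (by rw [norm_sub_rev]; exact hPQR _ hxt1 _ hyt) hg20 hDQ0 hR0
    rw [← hyupd t] at hy3 hy4
    set γ : ℝ := min (⟪x t - y t, x t - u t⟫ / ‖x t - u t‖ ^ 2) 1 with hγdef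
    set δx : ℝ := ‖x t - y t‖^2 - ‖x (t+1) - y t‖^2 with hδxd
    set δy : ℝ := ‖y t - x (t+1)‖^2 - ‖y (t+1) - x (t+1)‖^2 with hδyd
    set m : ℝ := γ * ‖x t - u t‖ * DQ with hmd
    have hδx0 : 0 ≤ δx := le_trans (sq_nonneg _) hx3
    have hδy0 : 0 ≤ δy := le_trans (sq_nonneg _) hy3
    have hm0 : 0 ≤ m := by
      rw [hmd]; exact mul_nonneg (mul_nonneg hγ0 (norm_nonneg _)) hDQ0
    refine ⟨⟪x t - y t, x t - u t⟫ + ⟪y t - x (t+1), y t - v t⟫ + m, δx + δy,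
      by linarith, by linarith, ?_, ?_, ?_, ?_⟩
    · rw [hδxd, hδyd, norm_sub_rev (y t) (x (t+1)), norm_sub_rev (y (t+1)) (x (t+1))]
      ring
    · intro p hp q hq
      have e1 : ⟪x t - y t, x t - p⟫ ≤ ⟪x t - y t, x t - u t⟫ := by
        simp only [inner_sub_right]; linarith [humin t p hp]
      have e2 : ⟪x (t+1) - y t, q - y t⟫ ≤ ⟪y t - x (t+1), y t - v t⟫ := by
        have h' : ⟪x (t+1) - y t, q - y t⟫ = ⟪y t - x (t+1), y t - q⟫ := by
          rw [show x (t+1) - y t = -(y t - x (t+1)) from by abel,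
            show q - y t = -(y t - q) from by abel, inner_neg_neg]
        rw [h']
        simp only [inner_sub_right]; linarith [hvmin t q hq]
      have e3 : ⟪x t - x (t+1), q - y t⟫ ≤ m := by
        have hxx : x t - x (t+1) = γ • (x t - u t) := by
          rw [hxupd t]; module
        rw [hxx, real_inner_smul_left]
        have hin : ⟪x t - u t, q - y t⟫ ≤ ‖x t - u t‖ * DQ := by
          calc ⟪x t - u t, q - y t⟫ ≤ ‖x t - u t‖ * ‖q - y t‖ := real_inner_le_norm _ _
            _ ≤ ‖x t - u t‖ * DQ :=
              mul_le_mul_of_nonneg_left (hQd q hq (y t) hyt) (norm_nonneg _)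
        calc γ * ⟪x t - u t, q - y t⟫ ≤ γ * (‖x t - u t‖ * DQ) :=
            mul_le_mul_of_nonneg_left hin hγ0
          _ = m := by rw [hmd]; ring
      have expand : ‖x t - y t‖^2 - ⟪x t - y t, p - q⟫ =
          ⟪x t - y t, x t - p⟫ + ⟪x t - x (t+1), q - y t⟫ + ⟪x (t+1) - y t, q - y t⟫ := by
        rw [← real_inner_self_eq_norm_sq]
        simp only [inner_sub_left, inner_sub_right]
        ring
      linarith
    · -- s^2 ≤ 4cδ
      have hm2 : m^2 ≤ DQ^2 * δx := by
        have := mul_le_mul_of_nonneg_right hx3 (sq_nonneg DQ)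
        calc m^2 = (γ * ‖x t - u t‖)^2 * DQ^2 := by rw [hmd]; ring
          _ ≤ δx * DQ^2 := this
          _ = DQ^2 * δx := by ring
      have hg12 : ⟪x t - y t, x t - u t⟫^2 ≤ (DP*(DP+R)) * δx := by
        rw [mul_comm]; exact hx4
      have hg22 : ⟪y t - x (t+1), y t - v t⟫^2 ≤ (DQ*(DQ+R)) * δy := by
        rw [mul_comm]; exact hy4
      have csa := cs2 hg10 hm0 (mul_nonneg hDP0 (by linarith)) (sq_nonneg DQ)
        hδx0 hδx0 hg12 hm2
      have csb := cs2 (add_nonneg hg10 hm0) hg20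
        (add_nonneg (mul_nonneg hDP0 (by linarith)) (sq_nonneg DQ)) (mul_nonneg hDQ0 (by linarith))
        (by linarith : (0:ℝ) ≤ δx + δx) hδy0 csa hg22
      have hABC : DP*(DP+R) + DQ^2 + DQ*(DQ+R) ≤ 2*c := by
        rw [hc]
        have e1 : DP*R ≤ M*R := mul_le_mul_of_nonneg_right hDPM hR0
        have e2 : DQ*R ≤ M*R := mul_le_mul_of_nonneg_right hDQM hR0
        linarith [sq_nonneg DP, sq_nonneg DQ, hD2, e1, e2]
      have hfin : (⟪x t - y t, x t - u t⟫ + m + ⟪y t - x (t+1), y t - v t⟫)^2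
          ≤ (2*c) * (2*(δx + δy)) := by
        calc (⟪x t - y t, x t - u t⟫ + m + ⟪y t - x (t+1), y t - v t⟫)^2
            ≤ (DP*(DP+R) + DQ^2 + DQ*(DQ+R)) * ((δx + δx) + δy) := csb
          _ ≤ (2*c) * (2*(δx + δy)) := by
            apply mul_le_mul hABC (by linarith) (by linarith) (by linarith)
      calc (⟪x t - y t, x t - u t⟫ + ⟪y t - x (t+1), y t - v t⟫ + m)^2
          = (⟪x t - y t, x t - u t⟫ + m + ⟪y t - x (t+1), y t - v t⟫)^2 := by ring
        _ ≤ (2*c)*(2*(δx+δy)) := hfin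
        _ = 4*c*(δx+δy) := by ring
    · -- s ≤ 3c
      have hmb : m ≤ DP * DQ := by
        rw [hmd]
        have h1 : γ * ‖x t - u t‖ ≤ DP := by
          have := mul_le_mul hγ1 hd1DP (norm_nonneg (x t - u t)) zero_le_one
          linarith
        exact mul_le_mul_of_nonneg_right h1 hDQ0
      have f1 : R*DP ≤ R*M := mul_le_mul_of_nonneg_left hDPM hR0
      have f2 : R*DQ ≤ R*M := mul_le_mul_of_nonneg_left hDQM hR0
      have f3 : DP*DQ ≤ M*M := mul_le_mul hDPM hDQM hDQ0 hM0
      have f4 : M*M ≤ R*M := mul_le_mul_of_nonneg_right hMR hM0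
      linarith [hx5, hy5, hmb, f1, f2, f3, f4, sq_nonneg D, hc]
  -- the primal gap h
  set h : ℕ → ℝ := fun t => ‖x t - y t‖^2 - ‖xs - ys‖^2 with hhdef
  clear_value h
  have hh0 : ∀ t, 0 ≤ h t := by
    intro t
    obtain ⟨hxt, hyt⟩ := hmemXY t
    have h1 := hmin (x t) hxt (y t) hyt
    have h2 : ‖xs - ys‖^2 ≤ ‖x t - y t‖^2 := pow_le_pow_left₀ (norm_nonneg _) h1 2
    simp only [hhdef]; linarith
  have hkey2 : ∀ t : ℕ, ∀ s : ℝ, (‖x t - y t‖^2 - ⟪x t - y t, xs - ys⟫ ≤ s) → h t ≤ 2*s := by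
    intro t s hs
    have h1 := norm_sub_sq_real (x t - y t) (xs - ys)
    have h2 : (0:ℝ) ≤ ‖x t - y t - (xs - ys)‖^2 := sq_nonneg _
    simp only [hhdef]; linarith
  have hb : ∀ t : ℕ, h t ≤ 16*c/((t:ℝ)+4) := by
    intro t; induction t with
    | zero =>
      have hn0 : ‖x 0 - y 0‖ ≤ R := hPQR _ hx0 _ hy0
      have hss : ‖xs - ys‖ ≤ R := by rw [hR]; linarith [norm_nonneg (xs - ys)]
      have h0le : h 0 ≤ 4*c := by
        simp only [hhdef]
        have hRM : R*M ≤ c := by rw [hc]; linarith [sq_nonneg D]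
        rcases le_or_gt (‖xs - ys‖) (‖x 0 - y 0‖) with hle | hlt
        · have h1 : ‖x 0 - y 0‖ - ‖xs - ys‖ ≤ DP + DQ := by
            rw [hR] at hn0; linarith
          have h2 : ‖x 0 - y 0‖ + ‖xs - ys‖ ≤ 2*R := by linarith
          have h3 := mul_le_mul h1 h2 (by positivity) (by linarith)
          have h4 : (DP+DQ)*(2*R) ≤ (2*M)*(2*R) := by
            apply mul_le_mul_of_nonneg_right (by linarith) (by linarith)
          nlinarith [mul_nonneg hR0 hM0]
        · have h5 : ‖x 0 - y 0‖^2 < ‖xs - ys‖^2 :=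
            pow_lt_pow_left₀ hlt (norm_nonneg _) (by norm_num)
          linarith [mul_nonneg hR0 hM0]
      rw [le_div_iff₀ (by positivity)]
      push_cast
      linarith
    | succ n ih =>
      obtain ⟨s, δ, hs0, hδ0, hFrec, hpt, hsδ, hs3⟩ := keyfacts n
      have hrec : h (n+1) = h n - δ := by simp only [hhdef]; rw [hFrec]; ring
      have hkey := hkey2 n s (hpt xs hxs ys hys)
      rcases eq_or_lt_of_le hc0 with hceq | hcpos
      · have hs00 : s ≤ 0 := by rw [← hceq] at hs3; linarith
        have h1 : h (n+1) ≤ 0 := by linarith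
        have h2 : (0:ℝ) ≤ 16*c/((n:ℝ)+1+4) := by rw [← hceq]; norm_num
        push_cast
        linarith
      · have hδh : h n^2/(16*c) ≤ δ := by
          rw [div_le_iff₀ (by positivity)]
          linarith [pow_le_pow_left₀ (hh0 n) hkey 2, hsδ]
        have hst := hstep (K := 16*c) (by positivity) (n:ℝ) (Nat.cast_nonneg n) (hh0 n) ih
        have hcast5 : ((n:ℝ)+1)+4 = (n:ℝ)+5 := by ring
        push_cast
        rw [hcast5]
        linarith
  -- conclusion
  rcases eq_or_lt_of_le hc0 with hceq | hcpos
  · refine ⟨1, le_refl _, hT, ?_⟩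
    intro p hp q hq
    obtain ⟨s, δ, hs0, hδ0, hFrec, hpt, hsδ, hs3⟩ := keyfacts 1
    have hs00 : s ≤ 0 := by rw [← hceq] at hs3; linarith
    have h1 := hpt p hp q hq
    rw [← hceq]
    simp
    linarith
  · by_cases hT1 : T = 1
    · subst hT1
      refine ⟨1, le_refl _, le_refl _, ?_⟩
      intro p hp q hq
      obtain ⟨s, δ, hs0, hδ0, hFrec, hpt, hsδ, hs3⟩ := keyfacts 1
      have h1 := hpt p hp q hq
      rw [le_div_iff₀ (by positivity)]
      push_cast
      linarith
    · have hT2 : 2 ≤ T := by omega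
      obtain ⟨t0, ht0⟩ : ∃ t0 : ℕ, t0 = T/2 := ⟨_, rfl⟩
      have ht01 : 1 ≤ t0 := by omega
      have ht0T : t0 ≤ T := by omega
      by_contra hcon
      push_neg at hcon
      have hEpos : 0 < 16*c/((T:ℝ)+4) := by positivity
      have hsum : ∀ n : ℕ, t0 + n ≤ T + 1 →
          h (t0+n) ≤ h t0 - (n:ℝ) * ((16*c/((T:ℝ)+4))^2/(4*c)) := by
        intro n
        induction n with
        | zero => intro _; simp
        | succ k ihk =>
          intro hkT
          have hk1 : t0 + k ≤ T + 1 := by omega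
          have hkT' : t0 + k ≤ T := by omega
          obtain ⟨s, δ, hs0, hδ0, hFrec, hpt, hsδ, hs3⟩ := keyfacts (t0+k)
          obtain ⟨p, hp, q, hq, hval⟩ := hcon (t0+k) (by omega) hkT'
          have hsE : 16*c/((T:ℝ)+4) < s := lt_of_lt_of_le hval (hpt p hp q hq)
          have hE2s : (16*c/((T:ℝ)+4))^2 < s^2 :=
            pow_lt_pow_left₀ hsE hEpos.le (by norm_num)
          have hδE : (16*c/((T:ℝ)+4))^2/(4*c) ≤ δ := by
            rw [div_le_iff₀ (by positivity)]
            linarith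
          have hrec : h (t0+k+1) = h (t0+k) - δ := by
            simp only [hhdef]; rw [hFrec]; ring
          have hkk := ihk hk1
          have hgoal : t0 + (k+1) = t0 + k + 1 := by omega
          rw [hgoal]
          push_cast
          linarith
      have hfin := hsum (T+1-t0) (by omega)
      have heq : t0 + (T+1-t0) = T+1 := by omega
      rw [heq] at hfin
      have hcast : ((T+1-t0:ℕ):ℝ) = (T:ℝ)+1-(t0:ℝ) := by
        rw [Nat.cast_sub (by omega : t0 ≤ T+1)]
        push_cast
        ring
      rw [hcast] at hfin
      have hE2 : (16*c/((T:ℝ)+4))^2/(4*c) = 64*c/((T:ℝ)+4)^2 := by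
        field_simp
        ring
      rw [hE2] at hfin
      have hbt0 := hb t0
      have hhT1 := hh0 (T+1)
      have hquadR : ((T:ℝ)+4)^2 + 1 ≤ 4*((T:ℝ)+1-(t0:ℝ))*((t0:ℝ)+4) := by
        have ht0r1 : (1:ℝ) ≤ (t0:ℝ) := by exact_mod_cast ht01
        have hj : T = 2*t0 ∨ T = 2*t0+1 := by omega
        rcases hj with hj | hj <;> rw [hj] <;> push_cast <;> nlinarith [ht0r1]
      have hA : (0:ℝ) < (t0:ℝ)+4 := by positivity
      have hB2 : (0:ℝ) < ((T:ℝ)+4)^2 := by positivity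
      have hmain : ((T:ℝ)+1-(t0:ℝ)) * (64*c/((T:ℝ)+4)^2) ≤ 16*c/((t0:ℝ)+4) := by
        linarith
      have hmain2 : ((T:ℝ)+1-(t0:ℝ)) * (64*c) * ((t0:ℝ)+4) ≤ 16*c*((T:ℝ)+4)^2 := by
        have h1 : ((T:ℝ)+1-(t0:ℝ)) * (64*c/((T:ℝ)+4)^2)
            = (((T:ℝ)+1-(t0:ℝ)) * (64*c))/((T:ℝ)+4)^2 := by ring
        rw [h1, div_le_div_iff₀ hB2 hA] at hmain
        linarith
      nlinarith [mul_le_mul_of_nonneg_left hquadR (by linarith : (0:ℝ) ≤ 16*c), hmain2, hcpos]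
end

section
/- Let P and Q be nonempty compact convex sets in a real inner product space with diameters D_P and D_Q. Consider the Alternating Linear Minimizations iterates with agnostic steps γ_{t,1} = γ_{t,2} = 2/(t+2): x₀ ∈ P, y₀ ∈ Q, and for t ≥ 0, u_t ∈ P minimizes ⟨x_t − y_t, x⟩ over P, x_{t+1} = x_t + (2/(t+2))(u_t − x_t); v_t ∈ Q minimizes ⟨y_t − x_{t+1}, y⟩ over Q, y_{t+1} = y_t + (2/(t+2))(v_t − y_t). Then: (a) if for some t ≥ 0 one has ‖x_t − y_t‖² > 4(1 + 2√2)(D_P² + D_Q²)/(t + 2), then P ∩ Q = ∅; (b) conversely, if P ∩ Q = ∅, then the inequality ‖x_t − y_t‖² > 4(1 + 2√2)(D_P² + D_Q²)/(t + 2) holds for every t with t + 2 > 4(1 + 2√2)(D_P² + D_Q²)/dist(P, Q)². -/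
open RealInnerProductSpace Metric

set_option maxHeartbeats 1000000 in
lemma alm_key {G : Type*} [NormedAddCommGroup G] [InnerProductSpace ℝ G]
    (a b uu vv z : G) (γ DP DQ : ℝ) (hγ : 0 ≤ γ)
    (h1 : ⟪a - b, uu⟫ ≤ ⟪a - b, z⟫)
    (h2 : ⟪b - (a + γ • (uu - a)), vv⟫ ≤ ⟪b - (a + γ • (uu - a)), z⟫)
    (hY : ‖uu - a‖ ≤ DP) (hZ : ‖vv - b‖ ≤ DQ) (hzb : ‖z - b‖ ≤ DQ)
    (hDP : 0 ≤ DP) (hDQ : 0 ≤ DQ) :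
    ‖(a + γ • (uu - a)) - (b + γ • (vv - b))‖ ^ 2 ≤
      (1 - 2 * γ) * ‖a - b‖ ^ 2 + γ ^ 2 * (DP + DQ) ^ 2 := by
  set X := a - b with hX
  set Y := uu - a with hYdef
  set Z := vv - b with hZdef
  have hw : (a + γ • (uu - a)) - (b + γ • (vv - b)) = X + γ • Y - γ • Z := by
    rw [hX, hYdef, hZdef]; module
  rw [hw]
  have expand : ‖X + γ • Y - γ • Z‖ ^ 2
      = ‖X‖^2 + γ^2 * ‖Y‖^2 + γ^2 * ‖Z‖^2
        + 2*γ*⟪X, Y⟫ - 2*γ*⟪X, Z⟫ - 2*γ^2*⟪Y, Z⟫ := by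
    rw [← real_inner_self_eq_norm_sq, ← real_inner_self_eq_norm_sq X,
      ← real_inner_self_eq_norm_sq Y, ← real_inner_self_eq_norm_sq Z]
    simp only [inner_sub_left, inner_sub_right, inner_add_left, inner_add_right,
      real_inner_smul_left, real_inner_smul_right]
    rw [real_inner_comm Y X, real_inner_comm Z X, real_inner_comm Z Y]
    ring
  rw [expand]
  have hb : b - (a + γ • (uu - a)) = -(X + γ • Y) := by rw [hX, hYdef]; module
  rw [hb] at h2
  simp only [inner_neg_left, neg_le_neg_iff, inner_add_left, real_inner_smul_left] at h2
  have h1' : ⟪X, Y⟫ ≤ ⟪X, z⟫ - ⟪X, a⟫ := by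
    rw [hYdef, inner_sub_right]; linarith [h1]
  have hXZ : ⟪X, Z⟫ = ⟪X, vv⟫ - ⟪X, b⟫ := by rw [hZdef, inner_sub_right]
  have hYZ : ⟪Y, Z⟫ = ⟪Y, vv⟫ - ⟪Y, b⟫ := by rw [hZdef, inner_sub_right]
  have hXba : ⟪X, b⟫ - ⟪X, a⟫ = -‖X‖^2 := by
    rw [← real_inner_self_eq_norm_sq, hX]
    simp [inner_sub_right]
    rw [← real_inner_self_eq_norm_sq]
    simp only [inner_sub_left, inner_sub_right, real_inner_comm a b]
    ring
  have hCS : |⟪Y, z - b⟫| ≤ DP * DQ := by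
    calc |⟪Y, z - b⟫| ≤ ‖Y‖ * ‖z - b‖ := abs_real_inner_le_norm Y (z - b)
      _ ≤ DP * DQ := mul_le_mul hY hzb (norm_nonneg _) hDP
  have hYzb : ⟪Y, z - b⟫ = ⟪Y, z⟫ - ⟪Y, b⟫ := inner_sub_right Y z b
  have hA : ⟪X, Y⟫ - ⟪X, Z⟫ - γ * ⟪Y, Z⟫ ≤ -‖X‖^2 + γ * (DP * DQ) := by
    have h2γ : γ * ⟪Y, z⟫ - γ * ⟪Y, vv⟫ ≤ ⟪X, vv⟫ - ⟪X, z⟫ := by linarith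
    have habs := abs_le.mp hCS
    nlinarith [mul_le_mul_of_nonneg_left (habs.1) hγ, mul_le_mul_of_nonneg_left (habs.2) hγ]
  have hY2 : ‖Y‖^2 ≤ DP^2 := by nlinarith [norm_nonneg Y]
  have hZ2 : ‖Z‖^2 ≤ DQ^2 := by nlinarith [norm_nonneg Z]
  have k1 := mul_le_mul_of_nonneg_left hA (by positivity : (0:ℝ) ≤ 2*γ)
  have k2 := mul_le_mul_of_nonneg_left hY2 (sq_nonneg γ)
  have k3 := mul_le_mul_of_nonneg_left hZ2 (sq_nonneg γ)
  nlinarith [k1, k2, k3]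


set_option maxHeartbeats 1000000 in
/-- **Certifying disjointness via Alternating Linear Minimizations** (agnostic steps).
(a) If `‖x_t − y_t‖² > 4(1+2√2)(D_P²+D_Q²)/(t+2)` for some `t`, then `P ∩ Q = ∅`.
(b) Conversely, if `P ∩ Q = ∅`, this inequality holds for every `t` with
`t + 2 > 4(1+2√2)(D_P²+D_Q²)/dist(P,Q)²`. -/
theorem alm_certify_disjoint
    {G : Type*} [NormedAddCommGroup G] [InnerProductSpace ℝ G]
    (P Q : Set G) (hPne : P.Nonempty) (hQne : Q.Nonempty)
    (hPcpt : IsCompact P) (hQcpt : IsCompact Q)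
    (hPconv : Convex ℝ P) (hQconv : Convex ℝ Q)
    (DP DQ : ℝ) (hDP : Metric.diam P = DP) (hDQ : Metric.diam Q = DQ)
    (xs ys : G) (hxs : xs ∈ P) (hys : ys ∈ Q)
    (hmin : ∀ p ∈ P, ∀ q ∈ Q, ‖xs - ys‖ ≤ ‖p - q‖)
    (x y u v : ℕ → G) (hx0 : x 0 ∈ P) (hy0 : y 0 ∈ Q)
    (humem : ∀ t : ℕ, u t ∈ P)
    (humin : ∀ t : ℕ, ∀ w ∈ P, ⟪x t - y t, u t⟫ ≤ ⟪x t - y t, w⟫)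
    (hxupd : ∀ t : ℕ, x (t + 1) = x t + (2 / ((t : ℝ) + 2)) • (u t - x t))
    (hvmem : ∀ t : ℕ, v t ∈ Q)
    (hvmin : ∀ t : ℕ, ∀ w ∈ Q, ⟪y t - x (t + 1), v t⟫ ≤ ⟪y t - x (t + 1), w⟫)
    (hyupd : ∀ t : ℕ, y (t + 1) = y t + (2 / ((t : ℝ) + 2)) • (v t - y t)) :
    ((∃ t : ℕ, ‖x t - y t‖ ^ 2 >
        4 * (1 + 2 * Real.sqrt 2) * (DP ^ 2 + DQ ^ 2) / ((t : ℝ) + 2)) →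
      P ∩ Q = ∅) ∧
    (P ∩ Q = ∅ →
      ∀ t : ℕ,
        (t : ℝ) + 2 > 4 * (1 + 2 * Real.sqrt 2) * (DP ^ 2 + DQ ^ 2) / ‖xs - ys‖ ^ 2 →
        ‖x t - y t‖ ^ 2 >
          4 * (1 + 2 * Real.sqrt 2) * (DP ^ 2 + DQ ^ 2) / ((t : ℝ) + 2)) := by
  have hDP0 : 0 ≤ DP := hDP ▸ Metric.diam_nonneg
  have hDQ0 : 0 ≤ DQ := hDQ ▸ Metric.diam_nonneg
  have hmem : ∀ t : ℕ, x t ∈ P ∧ y t ∈ Q := by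
    intro t
    induction t with
    | zero => exact ⟨hx0, hy0⟩
    | succ n ih =>
      have hn : (0:ℝ) ≤ (n:ℝ) := Nat.cast_nonneg n
      have hγ : (2 / ((n:ℝ)+2)) ∈ Set.Icc (0:ℝ) 1 := by
        constructor
        · positivity
        · rw [div_le_one (by positivity)]; linarith
      refine ⟨?_, ?_⟩
      · rw [hxupd n]; exact hPconv.add_smul_sub_mem ih.1 (humem n) hγ
      · rw [hyupd n]; exact hQconv.add_smul_sub_mem ih.2 (hvmem n) hγ
  have hnormP : ∀ p ∈ P, ∀ p' ∈ P, ‖p - p'‖ ≤ DP := by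
    intro p hp p' hp'
    rw [← dist_eq_norm, ← hDP]
    exact Metric.dist_le_diam_of_mem hPcpt.isBounded hp hp'
  have hnormQ : ∀ q ∈ Q, ∀ q' ∈ Q, ‖q - q'‖ ≤ DQ := by
    intro q hq q' hq'
    rw [← dist_eq_norm, ← hDQ]
    exact Metric.dist_le_diam_of_mem hQcpt.isBounded hq hq'
  have hK : (DP + DQ)^2 ≤ 2*(DP^2 + DQ^2) := by nlinarith [sq_nonneg (DP - DQ)]
  have hM : (0:ℝ) ≤ DP^2 + DQ^2 := by positivity
  have main : ∀ z, z ∈ P → z ∈ Q → ∀ t : ℕ,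
      ‖x t - y t‖^2 ≤ 6*(DP^2 + DQ^2)/((t:ℝ)+2) := by
    intro z hzP hzQ t
    induction t with
    | zero =>
      have h0 : ‖x 0 - y 0‖ ≤ DP + DQ := by
        calc ‖x 0 - y 0‖ ≤ ‖x 0 - z‖ + ‖z - y 0‖ := norm_sub_le_norm_sub_add_norm_sub _ _ _
          _ ≤ DP + DQ := add_le_add (hnormP _ hx0 _ hzP) (hnormQ _ hzQ _ hy0)
      have h1 : ‖x 0 - y 0‖^2 ≤ (DP+DQ)^2 := pow_le_pow_left₀ (norm_nonneg _) h0 2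
      have : ((0:ℕ):ℝ) + 2 = 2 := by norm_num
      rw [this]
      nlinarith
    | succ n ih =>
      have hs : (0:ℝ) ≤ (n:ℝ) := Nat.cast_nonneg n
      set s : ℝ := (n:ℝ) with hsdef
      have h2p : (0:ℝ) < s + 2 := by linarith
      have h3p : (0:ℝ) < s + 3 := by linarith
      have hγ0 : (0:ℝ) ≤ 2/(s+2) := by positivity
      have h2 := hvmin n z hzQ
      rw [hxupd n] at h2
      have hkey := alm_key (x n) (y n) (u n) (v n) z (2/(s+2)) DP DQ hγ0
        (humin n z hzP) h2
        (hnormP _ (humem n) _ (hmem n).1) (hnormQ _ (hvmem n) _ (hmem n).2)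
        (hnormQ _ hzQ _ (hmem n).2) hDP0 hDQ0
      rw [← hxupd n, ← hyupd n] at hkey
      have hcast : ((n+1:ℕ):ℝ) + 2 = s + 3 := by push_cast; ring
      rw [hcast]
      set M : ℝ := DP^2 + DQ^2 with hMdef
      set K : ℝ := (DP+DQ)^2 with hKdef
      have hn0 : (0:ℝ) ≤ ‖x n - y n‖^2 := by positivity
      rcases le_or_gt (4:ℝ) (s + 2) with hcase | hcase
      · have hc0 : (0:ℝ) ≤ 1 - 2*(2/(s+2)) := by
          have : 2*(2/(s+2)) = 4/(s+2) := by ring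
          rw [this, sub_nonneg, div_le_one h2p]; linarith
        have step1 : (1 - 2*(2/(s+2))) * ‖x n - y n‖^2
            ≤ (1 - 2*(2/(s+2))) * (6*M/(s+2)) := mul_le_mul_of_nonneg_left ih hc0
        have eq1 : (1 - 2*(2/(s+2))) * (6*M/(s+2)) + (2/(s+2))^2 * K
            = ((s-2)*(6*M) + 4*K)/(s+2)^2 := by
          field_simp
          ring
        have final : ((s-2)*(6*M) + 4*K)/(s+2)^2 ≤ 6*M/(s+3) := by
          rw [div_le_div_iff₀ (by positivity) h3p]
          nlinarith [mul_le_mul_of_nonneg_right hK (le_of_lt h3p), mul_nonneg hM hs]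
        calc ‖x (n+1) - y (n+1)‖^2
            ≤ (1 - 2*(2/(s+2))) * (6*M/(s+2)) + (2/(s+2))^2 * K := by linarith
          _ = ((s-2)*(6*M) + 4*K)/(s+2)^2 := eq1
          _ ≤ 6*M/(s+3) := final
      · have hc0 : 1 - 2*(2/(s+2)) ≤ 0 := by
          have : 2*(2/(s+2)) = 4/(s+2) := by ring
          rw [this, sub_nonpos, le_div_iff₀ h2p]; linarith
        have step1 : (1 - 2*(2/(s+2))) * ‖x n - y n‖^2 ≤ 0 :=
          mul_nonpos_of_nonpos_of_nonneg hc0 hn0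
        have eq1 : (2/(s+2))^2 * K = 4*K/(s+2)^2 := by
          field_simp
          norm_num
          ring
        have final : 4*K/(s+2)^2 ≤ 6*M/(s+3) := by
          rw [div_le_div_iff₀ (by positivity) h3p]
          nlinarith [mul_le_mul_of_nonneg_right hK (le_of_lt h3p), mul_nonneg hM hs]
        calc ‖x (n+1) - y (n+1)‖^2 ≤ (2/(s+2))^2 * K := by linarith
          _ = 4*K/(s+2)^2 := eq1
          _ ≤ 6*M/(s+3) := final
  have hsqrt : (1:ℝ) ≤ Real.sqrt 2 := by
    rw [show (1:ℝ) = Real.sqrt 1 by simp]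
    exact Real.sqrt_le_sqrt one_le_two
  constructor
  · rintro ⟨t, ht⟩
    by_contra hne
    obtain ⟨z, hzP, hzQ⟩ := Set.nonempty_iff_ne_empty.mpr hne
    have hb := main z hzP hzQ t
    have ht2 : (0:ℝ) < (t:ℝ) + 2 := by positivity
    have hcoef : 6*(DP^2+DQ^2) ≤ 4*(1+2*Real.sqrt 2)*(DP^2+DQ^2) := by nlinarith
    have : 6*(DP^2+DQ^2)/((t:ℝ)+2) ≤ 4*(1+2*Real.sqrt 2)*(DP^2+DQ^2)/((t:ℝ)+2) :=
      (div_le_div_iff_of_pos_right ht2).mpr hcoef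
    linarith
  · intro hdisj t ht
    have hne : xs ≠ ys := by
      intro h
      have : xs ∈ P ∩ Q := ⟨hxs, h ▸ hys⟩
      rw [hdisj] at this
      exact absurd this (Set.notMem_empty xs)
    have hpos : (0:ℝ) < ‖xs - ys‖^2 :=
      pow_pos (norm_pos_iff.mpr (sub_ne_zero.mpr hne)) 2
    have hle : ‖xs - ys‖ ≤ ‖x t - y t‖ := hmin _ (hmem t).1 _ (hmem t).2
    have hle2 : ‖xs - ys‖^2 ≤ ‖x t - y t‖^2 := pow_le_pow_left₀ (norm_nonneg _) hle 2
    have ht2 : (0:ℝ) < (t:ℝ) + 2 := by positivity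
    have h1 : 4*(1+2*Real.sqrt 2)*(DP^2+DQ^2) < ((t:ℝ)+2) * ‖xs - ys‖^2 :=
      (div_lt_iff₀ hpos).mp ht
    rw [gt_iff_lt, div_lt_iff₀ ht2]
    nlinarith [mul_le_mul_of_nonneg_left hle2 (le_of_lt ht2)]
end

section
/- Let P and Q be disjoint nonempty compact convex sets in a real inner product space with diameters D_P and D_Q. Consider the Alternating Linear Minimizations iterates with agnostic steps γ_{t,1} = γ_{t,2} = 2/(t+2): x₀ ∈ P, y₀ ∈ Q, and for t ≥ 0, u_t ∈ P minimizes ⟨x_t − y_t, x⟩ over P, x_{t+1} = x_t + (2/(t+2))(u_t − x_t); v_t ∈ Q minimizes ⟨y_t − x_{t+1}, y⟩ over Q, y_{t+1} = y_t + (2/(t+2))(v_t − y_t). Then for every t with t > 4(1 + 2√2)(D_P² + D_Q²)(D_P + D_Q)² / dist(P, Q)⁴, one has min_{x ∈ P, y ∈ Q} ⟨x_t − y_t, x − y⟩ > 0, i.e., the hyperplane with normal x_t − y_t strictly separates P from Q. -/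
open RealInnerProductSpace Metric

set_option maxHeartbeats 1000000 in
/-- **Parameter-free separation certificate via Alternating Linear Minimizations.**
For disjoint compact convex `P`, `Q`, for every
`t > 4(1+2√2)(D_P²+D_Q²)(D_P+D_Q)²/dist(P,Q)⁴` one has
`min_{x ∈ P, y ∈ Q} ⟨x_t − y_t, x − y⟩ > 0`, i.e. `x_t − y_t` strictly separates
`P` from `Q`. -/
theorem alm_separating_hyperplane
    {G : Type*} [NormedAddCommGroup G] [InnerProductSpace ℝ G]
    (P Q : Set G) (hPne : P.Nonempty) (hQne : Q.Nonempty)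
    (hPcpt : IsCompact P) (hQcpt : IsCompact Q)
    (hPconv : Convex ℝ P) (hQconv : Convex ℝ Q)
    (hdisj : P ∩ Q = ∅)
    (DP DQ : ℝ) (hDP : Metric.diam P = DP) (hDQ : Metric.diam Q = DQ)
    (xs ys : G) (hxs : xs ∈ P) (hys : ys ∈ Q)
    (hmin : ∀ p ∈ P, ∀ q ∈ Q, ‖xs - ys‖ ≤ ‖p - q‖)
    (x y u v : ℕ → G) (hx0 : x 0 ∈ P) (hy0 : y 0 ∈ Q)
    (humem : ∀ t : ℕ, u t ∈ P)
    (humin : ∀ t : ℕ, ∀ w ∈ P, ⟪x t - y t, u t⟫ ≤ ⟪x t - y t, w⟫)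
    (hxupd : ∀ t : ℕ, x (t + 1) = x t + (2 / ((t : ℝ) + 2)) • (u t - x t))
    (hvmem : ∀ t : ℕ, v t ∈ Q)
    (hvmin : ∀ t : ℕ, ∀ w ∈ Q, ⟪y t - x (t + 1), v t⟫ ≤ ⟪y t - x (t + 1), w⟫)
    (hyupd : ∀ t : ℕ, y (t + 1) = y t + (2 / ((t : ℝ) + 2)) • (v t - y t)) :
    ∀ t : ℕ,
      (t : ℝ) > 4 * (1 + 2 * Real.sqrt 2) * (DP ^ 2 + DQ ^ 2) * (DP + DQ) ^ 2 /
        ‖xs - ys‖ ^ 4 →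
      ∀ p ∈ P, ∀ q ∈ Q, ⟪x t - y t, p - q⟫ > 0 := by
  have hd : (0:ℝ) < ‖xs - ys‖ := by
    rw [norm_pos_iff, sub_ne_zero]
    intro h
    have : xs ∈ P ∩ Q := ⟨hxs, h ▸ hys⟩
    simp [hdisj] at this
  set d : ℝ := ‖xs - ys‖ with hd_def
  have hDPnn : 0 ≤ DP := hDP ▸ diam_nonneg
  have hDQnn : 0 ≤ DQ := hDQ ▸ diam_nonneg
  set C : ℝ := DP + DQ with hC_def
  set K : ℝ := DP * DQ + C ^ 2 / 2 with hK_def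
  have hCnn : 0 ≤ C := by positivity
  have hKnn : 0 ≤ K := by
    have : 0 ≤ DP * DQ := mul_nonneg hDPnn hDQnn
    positivity
  clear_value C K
  -- iterates stay inside the sets
  have hmem : ∀ n : ℕ, x n ∈ P ∧ y n ∈ Q := by
    intro n
    induction n with
    | zero => exact ⟨hx0, hy0⟩
    | succ n ih =>
      have hγ0 : (0:ℝ) ≤ 2 / ((n:ℝ) + 2) := by positivity
      have hγ1 : 2 / ((n:ℝ) + 2) ≤ 1 := by
        rw [div_le_one (by positivity)]
        have : (0:ℝ) ≤ (n:ℝ) := Nat.cast_nonneg n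
        linarith
      constructor
      · have h1 : (1 - 2 / ((n:ℝ) + 2)) • x n + (2 / ((n:ℝ) + 2)) • u n ∈ P :=
          hPconv ih.1 (humem n) (by linarith) hγ0 (by ring)
        rw [hxupd n]
        convert h1 using 1
        module
      · have h1 : (1 - 2 / ((n:ℝ) + 2)) • y n + (2 / ((n:ℝ) + 2)) • v n ∈ Q :=
          hQconv ih.2 (hvmem n) (by linarith) hγ0 (by ring)
        rw [hyupd n]
        convert h1 using 1
        module
  -- variational inequalities at the optimal pair
  have hVIP : ∀ p ∈ P, 0 ≤ ⟪xs - ys, p - xs⟫ := by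
    have hinf : ‖ys - xs‖ = ⨅ w : P, ‖ys - (w:G)‖ := by
      haveI := hPne.to_subtype
      refine le_antisymm (le_ciInf fun w => ?_)
        (ciInf_le (f := fun w : P => ‖ys - (w:G)‖) ⟨0, by rintro _ ⟨w, rfl⟩; exact norm_nonneg _⟩ ⟨xs, hxs⟩)
      rw [norm_sub_rev ys xs, norm_sub_rev ys (w:G)]
      exact hmin w w.2 ys hys
    have h2 := (norm_eq_iInf_iff_real_inner_le_zero hPconv hxs).mp hinf
    intro p hp
    have h3 := h2 p hp
    have h4 : xs - ys = -(ys - xs) := by abel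
    rw [h4, inner_neg_left]
    linarith
  have hVIQ : ∀ q ∈ Q, 0 ≤ ⟪xs - ys, ys - q⟫ := by
    have hinf : ‖xs - ys‖ = ⨅ w : Q, ‖xs - (w:G)‖ := by
      haveI := hQne.to_subtype
      refine le_antisymm (le_ciInf fun w => hmin xs hxs w w.2)
        (ciInf_le (f := fun w : Q => ‖xs - (w:G)‖) ⟨0, by rintro _ ⟨w, rfl⟩; exact norm_nonneg _⟩ ⟨ys, hys⟩)
    have h2 := (norm_eq_iInf_iff_real_inner_le_zero hQconv hys).mp hinf
    intro q hq
    have h3 := h2 q hq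
    have h4 : ys - q = -(q - ys) := by abel
    rw [h4, inner_neg_right]
    linarith
  -- the distance between iterates is at least d
  have hwlb : ∀ n : ℕ, d ≤ ‖x n - y n‖ := fun n => hmin _ (hmem n).1 _ (hmem n).2
  -- primal gap function
  set h : ℕ → ℝ := fun n => ‖x n - y n‖ ^ 2 / 2 - d ^ 2 / 2 with hh_def
  clear_value h
  have hhnn : ∀ n, 0 ≤ h n := by
    intro n
    have := hwlb n
    have hn : d ^ 2 ≤ ‖x n - y n‖ ^ 2 := by nlinarith [norm_nonneg (x n - y n)]
    simp only [hh_def]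
    linarith
  -- diameter bounds
  have hup : ∀ n : ℕ, ‖u n - x n‖ ≤ DP := by
    intro n
    have := dist_le_diam_of_mem hPcpt.isBounded (humem n) (hmem n).1
    rwa [dist_eq_norm, hDP] at this
  have hvq : ∀ n : ℕ, ‖v n - y n‖ ≤ DQ := by
    intro n
    have := dist_le_diam_of_mem hQcpt.isBounded (hvmem n) (hmem n).2
    rwa [dist_eq_norm, hDQ] at this
  have hysv : ∀ n : ℕ, ‖ys - v n‖ ≤ DQ := by
    intro n
    have := dist_le_diam_of_mem hQcpt.isBounded hys (hvmem n)
    rwa [dist_eq_norm, hDQ] at this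
  -- key one-step recursion
  have hrec : ∀ n : ℕ,
      h (n + 1) ≤ (1 - 2 / ((n:ℝ) + 2)) * h n + (2 / ((n:ℝ) + 2)) ^ 2 * K := by
    intro n
    set γ : ℝ := 2 / ((n:ℝ) + 2) with hγ_def
    have hγpos : 0 < γ := by positivity
    set w : G := x n - y n with hw_def
    set s : G := (u n - x n) - (v n - y n) with hs_def
    have hw1 : x (n + 1) - y (n + 1) = w + γ • s := by
      rw [hxupd n, hyupd n]; module
    have hnormsq : ‖w + γ • s‖ ^ 2 = ‖w‖ ^ 2 + 2 * (γ * ⟪w, s⟫) + γ ^ 2 * ‖s‖ ^ 2 := by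
      rw [norm_add_sq_real, real_inner_smul_right, norm_smul, Real.norm_eq_abs,
        abs_of_pos hγpos, mul_pow]
    -- bound on ⟪w, v n⟫ from below
    have hv : ⟪w, ys⟫ - γ * (DP * DQ) ≤ ⟪w, v n⟫ := by
      have hb := hvmin n ys hys
      have hyx : y n - x (n + 1) = -w - γ • (u n - x n) := by
        rw [hxupd n]; module
      rw [hyx, inner_sub_left, inner_sub_left, inner_neg_left, inner_neg_left,
        real_inner_smul_left, real_inner_smul_left] at hb
      have hip : |⟪u n - x n, ys - v n⟫| ≤ DP * DQ := by
        calc |⟪u n - x n, ys - v n⟫| ≤ ‖u n - x n‖ * ‖ys - v n‖ := abs_real_inner_le_norm _ _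
          _ ≤ DP * DQ := mul_le_mul (hup n) (hysv n) (norm_nonneg _) hDPnn
      have hip2 : ⟪u n - x n, ys⟫ - ⟪u n - x n, v n⟫ = ⟪u n - x n, ys - v n⟫ := by
        rw [inner_sub_right]
      have habs := abs_le.mp hip
      nlinarith [habs.1, habs.2, hγpos]
    have hu : ⟪w, u n⟫ ≤ ⟪w, xs⟫ := humin n xs hxs
    have hws : ⟪w, s⟫ = ⟪w, u n⟫ - ⟪w, v n⟫ - ‖w‖ ^ 2 := by
      have : s = (u n - v n) - w := by rw [hs_def, hw_def]; abel
      rw [this, inner_sub_right, inner_sub_right, real_inner_self_eq_norm_sq]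
    have hcs : ⟪w, xs - ys⟫ ≤ ‖w‖ * d := by
      calc ⟪w, xs - ys⟫ ≤ ‖w‖ * ‖xs - ys‖ := real_inner_le_norm _ _
        _ = ‖w‖ * d := rfl
    have hxy : ⟪w, xs⟫ - ⟪w, ys⟫ = ⟪w, xs - ys⟫ := by rw [inner_sub_right]
    have hwsle : ⟪w, s⟫ ≤ ‖w‖ * d - ‖w‖ ^ 2 + γ * (DP * DQ) := by
      rw [hws]; linarith
    have hsnorm : ‖s‖ ≤ C := by
      calc ‖s‖ ≤ ‖u n - x n‖ + ‖v n - y n‖ := norm_sub_le _ _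
        _ ≤ DP + DQ := add_le_add (hup n) (hvq n)
        _ = C := hC_def.symm
    have hsnorm2 : ‖s‖ ^ 2 ≤ C ^ 2 := by nlinarith [norm_nonneg s]
    have hwd : ‖w‖ * d ≤ ‖w‖ ^ 2 / 2 + d ^ 2 / 2 := by nlinarith [sq_nonneg (‖w‖ - d)]
    have hγd : γ * ⟪w, s⟫ ≤ γ * (‖w‖ ^ 2 / 2 + d ^ 2 / 2 - ‖w‖ ^ 2 + γ * (DP * DQ)) := by
      apply mul_le_mul_of_nonneg_left _ hγpos.le
      linarith
    have hγs : γ ^ 2 * ‖s‖ ^ 2 ≤ γ ^ 2 * C ^ 2 := by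
      apply mul_le_mul_of_nonneg_left hsnorm2 (sq_nonneg γ)
    simp only [hh_def]
    rw [hw1, hnormsq]
    simp only [hK_def]
    nlinarith [hγd, hγs]
  -- decay of the primal gap
  have hdecay : ∀ n : ℕ, 1 ≤ n → h n ≤ 4 * K / ((n:ℝ) + 2) := by
    intro n hn
    induction n with
    | zero => omega
    | succ n ih =>
      rcases Nat.eq_zero_or_pos n with hn0 | hn1
      · subst hn0
        have h1 := hrec 0
        norm_num at h1 ⊢
        linarith
      · have ihn := ih hn1
        have h1 := hrec n
        set m : ℝ := (n:ℝ) with hm_def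
        have hm1 : 1 ≤ m := by rw [hm_def]; exact Nat.one_le_cast.mpr hn1
        have hm2 : (0:ℝ) < m + 2 := by linarith
        have hm3 : (0:ℝ) < m + 3 := by linarith
        have hγ1 : 2 / (m + 2) ≤ 1 := by rw [div_le_one hm2]; linarith
        have step1 : h (n + 1) ≤ (1 - 2 / (m + 2)) * (4 * K / (m + 2)) + (2 / (m + 2)) ^ 2 * K := by
          refine h1.trans ?_
          have : 0 ≤ 1 - 2 / (m + 2) := by linarith
          gcongr
        have step2 : (1 - 2 / (m + 2)) * (4 * K / (m + 2)) + (2 / (m + 2)) ^ 2 * K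
            = 4 * K * (m + 1) / (m + 2) ^ 2 := by
          field_simp
          ring
        have step3 : 4 * K * (m + 1) / (m + 2) ^ 2 ≤ 4 * K / (m + 3) := by
          rw [div_le_div_iff₀ (by positivity) hm3]
          nlinarith [hKnn]
        have : ((n:ℕ) + 1 : ℕ) = n + 1 := rfl
        push_cast
        calc h (n + 1) ≤ 4 * K * (m + 1) / (m + 2) ^ 2 := by rw [← step2]; exact step1
          _ ≤ 4 * K / (m + 3) := step3
          _ = 4 * K / (m + 1 + 2) := by ring_nf
  -- iterate directions are close to the optimal direction
  have hinner : ∀ n : ℕ, d ^ 2 ≤ ⟪x n - y n, xs - ys⟫ := by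
    intro n
    rw [real_inner_comm]
    have hdecomp : x n - y n = (xs - ys) + ((x n - xs) + (ys - y n)) := by abel
    rw [hdecomp, inner_add_right, inner_add_right, real_inner_self_eq_norm_sq]
    have h1 := hVIP _ (hmem n).1
    have h2 := hVIQ _ (hmem n).2
    have : ‖xs - ys‖ ^ 2 = d ^ 2 := rfl
    linarith
  have hsc : ∀ n : ℕ, ‖(x n - y n) - (xs - ys)‖ ^ 2 ≤ 2 * h n := by
    intro n
    have h1 := hinner n
    have h2 : ‖(x n - y n) - (xs - ys)‖ ^ 2
        = ‖x n - y n‖ ^ 2 - 2 * ⟪x n - y n, xs - ys⟫ + d ^ 2 := by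
      rw [norm_sub_sq_real]
    simp only [hh_def]
    linarith
  -- final assembly
  intro t htT p hp q hq
  have hd4 : (0:ℝ) < d ^ 4 := by positivity
  have hTnn : (0:ℝ) ≤ 4 * (1 + 2 * Real.sqrt 2) * (DP ^ 2 + DQ ^ 2) * C ^ 2 / d ^ 4 := by
    have hs2 : (0:ℝ) ≤ Real.sqrt 2 := Real.sqrt_nonneg 2
    positivity
  have ht1 : 1 ≤ t := by
    by_contra hcon
    push_neg at hcon
    interval_cases t
    · simp only [Nat.cast_zero] at htT
      exact absurd htT (not_lt.mpr hTnn)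
  have htpos : (0:ℝ) < (t:ℝ) + 2 := by positivity
  have hsqrt2 : 1 ≤ Real.sqrt 2 := by
    nlinarith [Real.sq_sqrt (show (0:ℝ) ≤ 2 by norm_num), Real.sqrt_nonneg 2]
  -- arithmetic: 8 K C² < (t+2) d⁴
  have hkey : 8 * K * C ^ 2 < ((t:ℝ) + 2) * d ^ 4 := by
    rw [gt_iff_lt, div_lt_iff₀ hd4] at htT
    have h81 : 0 ≤ (Real.sqrt 2 - 1) * ((DP ^ 2 + DQ ^ 2) * (DP + DQ) ^ 2) :=
      mul_nonneg (by linarith) (by positivity)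
    have h82 : 0 ≤ (DP - DQ) ^ 2 * (DP + DQ) ^ 2 := by positivity
    have h8 : 8 * K * C ^ 2 ≤ 4 * (1 + 2 * Real.sqrt 2) * (DP ^ 2 + DQ ^ 2) * C ^ 2 := by
      simp only [hK_def, hC_def]
      nlinarith [h81, h82]
    have ht0 : (0:ℝ) < t := by exact_mod_cast Nat.lt_of_lt_of_le Nat.zero_lt_one ht1
    nlinarith [hd4]
  have hht := hdecay t ht1
  set e : G := (x t - y t) - (xs - ys) with he_def
  have he2 : ‖e‖ ^ 2 ≤ 8 * K / ((t:ℝ) + 2) := by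
    have := hsc t
    have h4 : h t ≤ 4 * K / ((t:ℝ) + 2) := hht
    calc ‖e‖ ^ 2 ≤ 2 * h t := this
      _ ≤ 2 * (4 * K / ((t:ℝ) + 2)) := by linarith
      _ = 8 * K / ((t:ℝ) + 2) := by ring
  have heC : ‖e‖ * C < d ^ 2 := by
    have hsq : (‖e‖ * C) ^ 2 < (d ^ 2) ^ 2 := by
      have h1 : (‖e‖ * C) ^ 2 = ‖e‖ ^ 2 * C ^ 2 := by ring
      have h2 : ‖e‖ ^ 2 * C ^ 2 ≤ (8 * K / ((t:ℝ) + 2)) * C ^ 2 := by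
        apply mul_le_mul_of_nonneg_right he2 (by positivity)
      have h3 : (8 * K / ((t:ℝ) + 2)) * C ^ 2 < d ^ 4 := by
        rw [div_mul_eq_mul_div, div_lt_iff₀ htpos]
        calc 8 * K * C ^ 2 < ((t:ℝ) + 2) * d ^ 4 := hkey
          _ = d ^ 4 * ((t:ℝ) + 2) := by ring
      calc (‖e‖ * C) ^ 2 = ‖e‖ ^ 2 * C ^ 2 := h1
        _ ≤ (8 * K / ((t:ℝ) + 2)) * C ^ 2 := h2
        _ < d ^ 4 := h3
        _ = (d ^ 2) ^ 2 := by ring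
    exact lt_of_pow_lt_pow_left₀ 2 (by positivity) hsq
  -- lower bound on the separation inner product
  have hdecomp : p - q = (xs - ys) + (p - xs) + (ys - q) := by abel
  have hwdecomp : x t - y t = (xs - ys) + e := by rw [he_def]; abel
  have h1 : d ^ 2 ≤ ⟪x t - y t, xs - ys⟫ := hinner t
  have h2 : -(‖e‖ * DP) ≤ ⟪x t - y t, p - xs⟫ := by
    rw [hwdecomp, inner_add_left]
    have ha := hVIP p hp
    have hb : |⟪e, p - xs⟫| ≤ ‖e‖ * DP := by
      calc |⟪e, p - xs⟫| ≤ ‖e‖ * ‖p - xs‖ := abs_real_inner_le_norm _ _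
        _ ≤ ‖e‖ * DP := by
          apply mul_le_mul_of_nonneg_left _ (norm_nonneg e)
          have := dist_le_diam_of_mem hPcpt.isBounded hp hxs
          rwa [dist_eq_norm, hDP] at this
    have := abs_le.mp hb
    linarith [this.1]
  have h3 : -(‖e‖ * DQ) ≤ ⟪x t - y t, ys - q⟫ := by
    rw [hwdecomp, inner_add_left]
    have ha := hVIQ q hq
    have hb : |⟪e, ys - q⟫| ≤ ‖e‖ * DQ := by
      calc |⟪e, ys - q⟫| ≤ ‖e‖ * ‖ys - q‖ := abs_real_inner_le_norm _ _
        _ ≤ ‖e‖ * DQ := by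
          apply mul_le_mul_of_nonneg_left _ (norm_nonneg e)
          have := dist_le_diam_of_mem hQcpt.isBounded hys hq
          rwa [dist_eq_norm, hDQ] at this
    have := abs_le.mp hb
    linarith [this.1]
  have hfinal : d ^ 2 - ‖e‖ * C ≤ ⟪x t - y t, p - q⟫ := by
    rw [hdecomp, inner_add_right, inner_add_right]
    simp only [hC_def]
    linarith
  linarith
end

section
/- Let P and Q be nonempty compact convex sets in a real Hilbert space and let d = x* − y* be the distance vector between P and Q, where x* ∈ P, y* ∈ Q attain ‖x* − y*‖ = dist(P, Q). Then for every x ∈ P and y ∈ Q: ‖x − y − d‖² ≤ ‖x − y‖² − dist(P, Q)². -/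
open RealInnerProductSpace

/-- For compact convex sets `P`, `Q` in a real Hilbert space with distance vector
`d = x* − y*` (where `x* ∈ P`, `y* ∈ Q` attain `dist(P,Q)`), every `x ∈ P`, `y ∈ Q`
satisfy `‖x − y − d‖² ≤ ‖x − y‖² − dist(P,Q)²`. -/
theorem norm_sub_distance_vector_sq_le
    {H : Type*} [NormedAddCommGroup H] [InnerProductSpace ℝ H] [CompleteSpace H]
    (P Q : Set H) (hPne : P.Nonempty) (hQne : Q.Nonempty)
    (hPcpt : IsCompact P) (hQcpt : IsCompact Q)
    (hPconv : Convex ℝ P) (hQconv : Convex ℝ Q)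
    (xstar ystar : H) (hxstar : xstar ∈ P) (hystar : ystar ∈ Q)
    (hmin : ∀ p ∈ P, ∀ q ∈ Q, ‖xstar - ystar‖ ≤ ‖p - q‖) :
    ∀ x ∈ P, ∀ y ∈ Q,
      ‖x - y - (xstar - ystar)‖ ^ 2 ≤ ‖x - y‖ ^ 2 - ‖xstar - ystar‖ ^ 2 := by
  intro x hx y hy
  set d := xstar - ystar with hd
  set w := x - y - d with hw
  have key : 0 ≤ ⟪d, w⟫ := by
    by_contra h
    push_neg at h
    have hwne : w ≠ 0 := by
      intro h0
      rw [h0, inner_zero_right] at h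
      exact lt_irrefl _ h
    have hwpos : (0:ℝ) < ‖w‖ ^ 2 := pow_pos (norm_pos_iff.mpr hwne) 2
    set t : ℝ := min 1 (-⟪d, w⟫ / ‖w‖ ^ 2) with ht
    have ht0 : 0 < t := lt_min one_pos (div_pos (neg_pos.mpr h) hwpos)
    have ht1 : t ≤ 1 := min_le_left _ _
    have hp : (1 - t) • xstar + t • x ∈ P :=
      hPconv hxstar hx (by linarith) (le_of_lt ht0) (by ring)
    have hq : (1 - t) • ystar + t • y ∈ Q :=
      hQconv hystar hy (by linarith) (le_of_lt ht0) (by ring)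
    have hmin' := hmin _ hp _ hq
    have heq : ((1 - t) • xstar + t • x) - ((1 - t) • ystar + t • y) = d + t • w := by
      rw [hw, hd]
      module
    rw [heq] at hmin'
    have hsq : ‖d‖ ^ 2 ≤ ‖d + t • w‖ ^ 2 := by
      have := norm_nonneg d
      nlinarith [hmin']
    rw [norm_add_sq_real, real_inner_smul_right, norm_smul, Real.norm_eq_abs,
      abs_of_pos ht0, mul_pow] at hsq
    have h2 : 0 ≤ 2 * ⟪d, w⟫ + t * ‖w‖ ^ 2 := by
      have := mul_pos ht0 ht0
      nlinarith
    have h3 : t * ‖w‖ ^ 2 ≤ -⟪d, w⟫ := by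
      have : t ≤ -⟪d, w⟫ / ‖w‖ ^ 2 := min_le_right _ _
      calc t * ‖w‖ ^ 2 ≤ (-⟪d, w⟫ / ‖w‖ ^ 2) * ‖w‖ ^ 2 := by
            exact mul_le_mul_of_nonneg_right this (le_of_lt hwpos)
        _ = -⟪d, w⟫ := by field_simp
    linarith
  have hxy : x - y = w + d := by rw [hw]; abel
  rw [hxy, norm_add_sq_real]
  rw [real_inner_comm] at key
  linarith
end

section
/- Let P and Q be nonempty compact convex sets in a real Hilbert space with diameters D_P and D_Q. Then for all z, x ∈ P and all w, y ∈ Q: ⟨z − w, x − y⟩ ≥ dist(P, Q)² − √(‖z − w‖² − dist(P, Q)²) · (D_P + D_Q). (Note that ‖z − w‖ ≥ dist(P, Q), so the square root is well-defined.) -/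
open RealInnerProductSpace

theorem aux_var_ineq
    {H : Type*} [NormedAddCommGroup H] [InnerProductSpace ℝ H]
    {K : Set H} (hK : Convex ℝ K) {u v : H} (hv : v ∈ K)
    (hmin : ∀ w ∈ K, ‖u - v‖ ≤ ‖u - w‖) :
    ∀ w ∈ K, ⟪u - v, w - v⟫ ≤ 0 := by
  rw [← norm_eq_iInf_iff_real_inner_le_zero hK hv]
  haveI : Nonempty K := ⟨⟨v, hv⟩⟩
  refine le_antisymm (le_ciInf fun w => hmin w w.2) ?_
  exact ciInf_le ⟨0, fun _ ⟨_, h⟩ => h ▸ norm_nonneg _⟩ (⟨v, hv⟩ : K)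

/-- For compact convex sets `P`, `Q` in a real Hilbert space with diameters `D_P`,
`D_Q`, for all `z, x ∈ P` and `w, y ∈ Q`:
`⟨z − w, x − y⟩ ≥ dist(P,Q)² − √(‖z − w‖² − dist(P,Q)²)·(D_P + D_Q)`. -/
theorem inner_ge_dist_sq_sub_sqrt
    {H : Type*} [NormedAddCommGroup H] [InnerProductSpace ℝ H] [CompleteSpace H]
    (P Q : Set H) (hPne : P.Nonempty) (hQne : Q.Nonempty)
    (hPcpt : IsCompact P) (hQcpt : IsCompact Q)
    (hPconv : Convex ℝ P) (hQconv : Convex ℝ Q)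
    (DP DQ : ℝ) (hDP : Metric.diam P = DP) (hDQ : Metric.diam Q = DQ)
    (xstar ystar : H) (hxstar : xstar ∈ P) (hystar : ystar ∈ Q)
    (hmin : ∀ p ∈ P, ∀ q ∈ Q, ‖xstar - ystar‖ ≤ ‖p - q‖) :
    ∀ z ∈ P, ∀ w ∈ Q, ∀ x ∈ P, ∀ y ∈ Q,
      ⟪z - w, x - y⟫ ≥ ‖xstar - ystar‖ ^ 2 -
        Real.sqrt (‖z - w‖ ^ 2 - ‖xstar - ystar‖ ^ 2) * (DP + DQ) := by
  set v : H := xstar - ystar with hv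
  -- variational inequalities
  have hP : ∀ p ∈ P, ⟪ystar - xstar, p - xstar⟫ ≤ 0 := by
    refine aux_var_ineq hPconv hxstar (fun p hp => ?_)
    rw [norm_sub_rev ystar xstar, norm_sub_rev ystar p]
    exact hmin p hp ystar hystar
  have hQ : ∀ q ∈ Q, ⟪xstar - ystar, q - ystar⟫ ≤ 0 := by
    refine aux_var_ineq hQconv hystar (fun q hq => ?_)
    exact hmin xstar hxstar q hq
  -- key inequality
  have key : ∀ p ∈ P, ∀ q ∈ Q, ⟪v, p - q⟫ ≥ ‖v‖ ^ 2 := by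
    intro p hp q hq
    have h1 := hP p hp
    have h2 := hQ q hq
    have hd : p - q = (p - xstar) + v + (ystar - q) := by rw [hv]; abel
    have hinner : ⟪v, p - q⟫ = ⟪v, p - xstar⟫ + ⟪v, v⟫ + ⟪v, ystar - q⟫ := by
      rw [hd, inner_add_right, inner_add_right]
    have hvv : ⟪v, v⟫ = ‖v‖ ^ 2 := real_inner_self_eq_norm_sq v
    have h1' : ⟪v, p - xstar⟫ ≥ 0 := by
      have : ⟪ystar - xstar, p - xstar⟫ = -⟪v, p - xstar⟫ := by
        rw [hv, ← inner_neg_left]; congr 1; abel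
      linarith [this ▸ h1]
    have h2' : ⟪v, ystar - q⟫ ≥ 0 := by
      have : ⟪xstar - ystar, q - ystar⟫ = -⟪v, ystar - q⟫ := by
        rw [hv, ← inner_neg_right]; congr 1; abel
      linarith [this ▸ h2]
    linarith [hinner, hvv]
  intro z hz w hw x hx y hy
  set u : H := z - w with hu
  have a1 : ⟪v, x - y⟫ ≥ ‖v‖ ^ 2 := key x hx y hy
  have a2 : ⟪v, u⟫ ≥ ‖v‖ ^ 2 := key z hz w hw
  have hvu : ⟪u, v⟫ = ⟪v, u⟫ := real_inner_comm v u
  -- norm bound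
  have h3 : ‖u - v‖ ^ 2 ≤ ‖u‖ ^ 2 - ‖v‖ ^ 2 := by
    have := norm_sub_sq_real u v
    nlinarith [this, a2, hvu]
  have h4 : ‖u - v‖ ≤ Real.sqrt (‖u‖ ^ 2 - ‖v‖ ^ 2) := by
    rw [show ‖u - v‖ = Real.sqrt (‖u - v‖ ^ 2) from (Real.sqrt_sq (norm_nonneg _)).symm]
    exact Real.sqrt_le_sqrt h3
  have hDPle : ‖x - xstar‖ ≤ DP := by
    rw [← hDP, ← dist_eq_norm]
    exact Metric.dist_le_diam_of_mem hPcpt.isBounded hx hxstar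
  have hDQle : ‖ystar - y‖ ≤ DQ := by
    rw [← hDQ, ← dist_eq_norm]
    exact Metric.dist_le_diam_of_mem hQcpt.isBounded hystar hy
  have hDPnn : 0 ≤ DP := hDP ▸ Metric.diam_nonneg
  have hDQnn : 0 ≤ DQ := hDQ ▸ Metric.diam_nonneg
  -- decomposition
  have hd : x - y = (x - xstar) + v + (ystar - y) := by rw [hv]; abel
  have hdec : ⟪u, x - y⟫ = ⟪v, x - y⟫ + (⟪u - v, x - xstar⟫ + ⟪u - v, v⟫ + ⟪u - v, ystar - y⟫) := by
    have : ⟪u - v, x - y⟫ = ⟪u - v, x - xstar⟫ + ⟪u - v, v⟫ + ⟪u - v, ystar - y⟫ := by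
      rw [hd, inner_add_right, inner_add_right]
    rw [← this, ← inner_add_left]; congr 1; abel
  have huvv : ⟪u - v, v⟫ ≥ 0 := by
    rw [inner_sub_left]
    have : ⟪v, v⟫ = ‖v‖ ^ 2 := real_inner_self_eq_norm_sq v
    linarith [hvu]
  have hb1 : ⟪u - v, x - xstar⟫ ≥ -(‖u - v‖ * ‖x - xstar‖) := by
    have := abs_real_inner_le_norm (u - v) (x - xstar)
    linarith [neg_abs_le (⟪u - v, x - xstar⟫)]
  have hb2 : ⟪u - v, ystar - y⟫ ≥ -(‖u - v‖ * ‖ystar - y‖) := by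
    have := abs_real_inner_le_norm (u - v) (ystar - y)
    linarith [neg_abs_le (⟪u - v, ystar - y⟫)]
  have hnn : (0:ℝ) ≤ ‖u - v‖ := norm_nonneg _
  have hsq : ‖u - v‖ * (DP + DQ) ≤ Real.sqrt (‖u‖ ^ 2 - ‖v‖ ^ 2) * (DP + DQ) :=
    mul_le_mul_of_nonneg_right h4 (by linarith)
  have hprod1 : ‖u - v‖ * ‖x - xstar‖ ≤ ‖u - v‖ * DP :=
    mul_le_mul_of_nonneg_left hDPle hnn
  have hprod2 : ‖u - v‖ * ‖ystar - y‖ ≤ ‖u - v‖ * DQ :=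
    mul_le_mul_of_nonneg_left hDQle hnn
  have := hdec
  nlinarith [a1, huvv, hb1, hb2, hprod1, hprod2, hsq]
end
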